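/- arXiv:math/0306270 — 8 statements merged into one kernel-verified Lean document; each statement's English description precedes it below -/
import Mathlib

section
/- Let R be a commutative integral domain, d ≥ 1, and let f, g ∈ R[[X_1,…,X_d]] be formal power series such that f·g = X^a·u for some a ∈ ℕ^d and some unit u of R[[X_1,…,X_d]]. Then there exist b, c ∈ ℕ^d with b + c = a and units u₁, u₂ of R[[X_1,…,X_d]] such that f = X^b·u₁ and g = X^c·u₂. (Equivalently: if the Newton polyhedron of a product of nonzero power series has only one vertex, then the Newton polyhedron of each factor has only one vertex.) -/
namespace StmtAux

open MvPowerSeries Finsupp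

variable {σ : Type*} {R : Type*} [CommRing R]

/-- Substitute `X s := 0` in a multivariate power series. -/
noncomputable def setZero (s : σ) (φ : MvPowerSeries σ R) : MvPowerSeries σ R :=
  fun m => if m s = 0 then MvPowerSeries.coeff m φ else 0

theorem coeff_setZero (s : σ) (φ : MvPowerSeries σ R) (m : σ →₀ ℕ) :
    MvPowerSeries.coeff m (setZero s φ) =
      if m s = 0 then MvPowerSeries.coeff m φ else 0 := rfl

theorem setZero_eq_zero_iff (s : σ) (φ : MvPowerSeries σ R) :
    setZero s φ = 0 ↔ (X s : MvPowerSeries σ R) ∣ φ := by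
  rw [MvPowerSeries.X_dvd_iff]
  constructor
  · intro h m hm
    have := congrArg (MvPowerSeries.coeff m) h
    rw [coeff_setZero, if_pos hm, map_zero] at this
    exact this
  · intro h
    ext m
    rw [coeff_setZero, map_zero]
    split_ifs with hm
    · exact h m hm
    · rfl

theorem setZero_mul (s : σ) (φ ψ : MvPowerSeries σ R) :
    setZero s (φ * ψ) = setZero s φ * setZero s ψ := by
  classical
  ext m
  rw [coeff_setZero, MvPowerSeries.coeff_mul, MvPowerSeries.coeff_mul]
  split_ifs with hm
  · apply Finset.sum_congr rfl
    rintro ⟨p, q⟩ hpq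
    rw [Finset.HasAntidiagonal.mem_antidiagonal] at hpq
    have hps : p s = 0 ∧ q s = 0 := by
      have : p s + q s = 0 := by
        rw [← Finsupp.add_apply, hpq, hm]
      omega
    rw [coeff_setZero, coeff_setZero, if_pos hps.1, if_pos hps.2]
  · symm
    apply Finset.sum_eq_zero
    rintro ⟨p, q⟩ hpq
    rw [Finset.HasAntidiagonal.mem_antidiagonal] at hpq
    have : p s ≠ 0 ∨ q s ≠ 0 := by
      by_contra hc
      push_neg at hc
      apply hm
      rw [← hpq, Finsupp.add_apply, hc.1, hc.2]
    rcases this with hp | hq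
    · rw [coeff_setZero, if_neg hp, zero_mul]
    · rw [coeff_setZero (s := s) (φ := ψ), if_neg hq, mul_zero]

theorem X_ne_zero' [Nontrivial R] (s : σ) : (X s : MvPowerSeries σ R) ≠ 0 := by
  classical
  intro h
  have := congrArg (MvPowerSeries.coeff (Finsupp.single s 1)) h
  rw [MvPowerSeries.coeff_X, if_pos rfl, map_zero] at this
  exact one_ne_zero this

theorem X_prime' [IsDomain R] (s : σ) : Prime (X s : MvPowerSeries σ R) := by
  refine ⟨X_ne_zero' s, ?_, ?_⟩
  · intro h
    have := MvPowerSeries.isUnit_iff_constantCoeff.mp h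
    rw [MvPowerSeries.constantCoeff_X] at this
    exact not_isUnit_zero this
  · intro φ ψ hdvd
    rw [← setZero_eq_zero_iff] at hdvd
    rw [setZero_mul] at hdvd
    rcases mul_eq_zero.mp hdvd with h | h
    · exact Or.inl ((setZero_eq_zero_iff s φ).mp h)
    · exact Or.inr ((setZero_eq_zero_iff s ψ).mp h)

theorem key [IsDomain R] :
    ∀ (n : ℕ) (f g u : MvPowerSeries σ R) (a : σ →₀ ℕ), (a.sum fun _ k => k) = n →
    IsUnit u → f * g = MvPowerSeries.monomial a 1 * u →
    ∃ (b c : σ →₀ ℕ) (u₁ u₂ : MvPowerSeries σ R),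
      IsUnit u₁ ∧ IsUnit u₂ ∧ b + c = a ∧
      f = MvPowerSeries.monomial b 1 * u₁ ∧
      g = MvPowerSeries.monomial c 1 * u₂ := by
  classical
  intro n
  induction n with
  | zero =>
    intro f g u a ha hu h
    have ha0 : a = 0 := by
      rw [Finsupp.sum] at ha
      ext s
      by_cases hmem : s ∈ a.support
      · exact Finset.sum_eq_zero_iff.mp ha s hmem
      · simpa using Finsupp.notMem_support_iff.mp hmem
    subst ha0
    rw [MvPowerSeries.monomial_zero_eq_C, map_one, one_mul] at h
    have hfg : IsUnit (f * g) := h ▸ hu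
    refine ⟨0, 0, f, g, isUnit_of_mul_isUnit_left hfg,
      isUnit_of_mul_isUnit_left (mul_comm f g ▸ hfg), by simp, ?_, ?_⟩ <;>
      rw [MvPowerSeries.monomial_zero_eq_C, map_one, one_mul]
  | succ n ih =>
    intro f g u a ha hu h
    have hex : ∃ s, a s ≠ 0 := by
      by_contra hc
      push_neg at hc
      have : a = 0 := Finsupp.ext hc
      rw [this] at ha
      simp at ha
    obtain ⟨s, hs⟩ := hex
    set a' : σ →₀ ℕ := a - Finsupp.single s 1 with ha'
    have hsplit : Finsupp.single s 1 + a' = a := by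
      ext t
      rw [Finsupp.add_apply, Finsupp.tsub_apply, Finsupp.single_apply]
      by_cases hts : s = t
      · subst hts; simp; omega
      · simp [hts]
    have hmono : (MvPowerSeries.monomial a 1 : MvPowerSeries σ R) =
        X s * MvPowerSeries.monomial a' 1 := by
      rw [X_def, MvPowerSeries.monomial_mul_monomial, one_mul, hsplit]
    have ha'sum : (a'.sum fun _ k => k) = n := by
      have h1 : ((Finsupp.single s 1 + a').sum fun _ k => k) = n + 1 := by
        rw [hsplit, ha]
      rw [Finsupp.sum_add_index (by intros; rfl) (by intros; rfl)] at h1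
      simp [Finsupp.sum_single_index] at h1
      omega
    have hdvd : (X s : MvPowerSeries σ R) ∣ f * g := by
      rw [h, hmono]
      exact ⟨MvPowerSeries.monomial a' 1 * u, by ring⟩
    rcases (X_prime' s).2.2 f g hdvd with hf | hg
    · obtain ⟨f', rfl⟩ := hf
      have hcancel : f' * g = MvPowerSeries.monomial a' 1 * u := by
        apply mul_left_cancel₀ (X_ne_zero' s)
        have h2 : X s * (f' * g) = MvPowerSeries.monomial a 1 * u := by
          rw [← h]; ring
        rw [h2, hmono]; ring
      obtain ⟨b', c, u₁, u₂, hu₁, hu₂, hbc, hf', hg'⟩ := ih f' g u a' ha'sum hu hcancel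
      refine ⟨Finsupp.single s 1 + b', c, u₁, u₂, hu₁, hu₂, ?_, ?_, hg'⟩
      · rw [add_assoc, hbc, hsplit]
      · rw [hf', X_def, ← mul_assoc, MvPowerSeries.monomial_mul_monomial, one_mul]
    · obtain ⟨g', rfl⟩ := hg
      have hcancel : f * g' = MvPowerSeries.monomial a' 1 * u := by
        apply mul_left_cancel₀ (X_ne_zero' s)
        have h2 : X s * (f * g') = MvPowerSeries.monomial a 1 * u := by
          rw [← h]; ring
        rw [h2, hmono]; ring
      obtain ⟨b, c', u₁, u₂, hu₁, hu₂, hbc, hf', hg'⟩ := ih f g' u a' ha'sum hu hcancel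
      refine ⟨b, Finsupp.single s 1 + c', u₁, u₂, hu₁, hu₂, ?_, hf', ?_⟩
      · rw [add_comm (Finsupp.single s 1) c', ← add_assoc, hbc]
        rw [add_comm, hsplit]
      · rw [hg', X_def, ← mul_assoc, MvPowerSeries.monomial_mul_monomial, one_mul]

end StmtAux

/-- If a product of two formal power series over a domain equals a monomial
times a unit, then each factor is a monomial times a unit, and the exponents add up. -/
theorem stmt_0 (R : Type*) [CommRing R] [IsDomain R] (d : ℕ) (hd : 1 ≤ d)
    (f g u : MvPowerSeries (Fin d) R) (a : Fin d →₀ ℕ)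
    (hu : IsUnit u)
    (h : f * g = MvPowerSeries.monomial a 1 * u) :
    ∃ (b c : Fin d →₀ ℕ) (u₁ u₂ : MvPowerSeries (Fin d) R),
      IsUnit u₁ ∧ IsUnit u₂ ∧ b + c = a ∧
      f = MvPowerSeries.monomial b 1 * u₁ ∧
      g = MvPowerSeries.monomial c 1 * u₂ :=
  StmtAux.key _ f g u a rfl hu h
end

section
/- Let V be a finite-dimensional real vector space with dual V*, let ρ ⊆ V be a polyhedral convex cone with dual cone ρ^∨ := {u ∈ V* : u(x) ≥ 0 for all x ∈ ρ}, let W ⊆ V* be a linear subspace, let ℓ := {x ∈ V : w(x) = 0 for all w ∈ W}, and set σ₀ := ρ ∩ ℓ. Then the dual cone of σ₀ equals ρ^∨ + W. If moreover the image of ρ^∨ under the quotient map V* → V*/W is a strictly convex cone, then σ₀^⊥ := {u ∈ V* : u(x) = 0 for all x ∈ σ₀} equals W. -/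
open Finset RealInnerProductSpace


/-- A polyhedral convex cone: the set of nonnegative linear combinations of finitely many
vectors. -/
def IsPolyhedralCone {V : Type*} [AddCommGroup V] [Module ℝ V] (C : Set V) : Prop :=
  ∃ (n : ℕ) (v : Fin n → V),
    C = {x | ∃ c : Fin n → ℝ, (∀ i, 0 ≤ c i) ∧ x = ∑ i, c i • v i}

/-- Carathéodory-type lemma for cones: any nonnegative combination can be rewritten as a
nonnegative combination over a linearly independent subfamily. -/
lemma cone_cara {V : Type*} [AddCommGroup V] [Module ℝ V] {n : ℕ} (v : Fin n → V)
    (s : Finset (Fin n)) (c : Fin n → ℝ) (hc : ∀ i, 0 ≤ c i) :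
    ∃ t : Finset (Fin n), t ⊆ s ∧ LinearIndependent ℝ (fun i : t => v i) ∧
      ∃ d : Fin n → ℝ, (∀ i, 0 ≤ d i) ∧
        ∑ i ∈ s, c i • v i = ∑ i ∈ t, d i • v i := by
  classical
  induction s using Finset.strongInductionOn generalizing c with
  | _ s ih => ?_
  by_cases hli : LinearIndependent ℝ (fun i : s => v i)
  · exact ⟨s, subset_rfl, hli, c, hc, rfl⟩
  rw [Fintype.not_linearIndependent_iff] at hli
  obtain ⟨g, hg0, i₁, hi₁⟩ := hli
  have key : ∀ g : s → ℝ, (∑ i, g i • v (i : Fin n) = 0) → ∀ i₁ : s, 0 < g i₁ →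
      ∃ t : Finset (Fin n), t ⊆ s ∧ LinearIndependent ℝ (fun i : t => v i) ∧
        ∃ d : Fin n → ℝ, (∀ i, 0 ≤ d i) ∧
          ∑ i ∈ s, c i • v i = ∑ i ∈ t, d i • v i := by
    clear hg0 hi₁ g i₁
    intro g hg0 i₁ hi₁
    set h : Fin n → ℝ := fun i => if hi : i ∈ s then g ⟨i, hi⟩ else 0 with hh
    have hout : ∀ i ∉ s, h i = 0 := fun i hi => by simp [hh, hi]
    have hin : ∀ i : s, h i = g i := fun i => by simp [hh, i.2]
    have hsum : ∑ i ∈ s, h i • v i = 0 := by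
      rw [← Finset.sum_attach s (fun i => h i • v i)]
      rw [← hg0, ← Finset.univ_eq_attach]
      exact Finset.sum_congr rfl fun i _ => by rw [hin]
    have hP : (i₁ : Fin n) ∈ s.filter (fun i => 0 < h i) := by
      simp only [Finset.mem_filter]
      exact ⟨i₁.2, by rw [hin]; exact hi₁⟩
    obtain ⟨j₀, hj₀P, hj₀min⟩ := Finset.exists_min_image (s.filter (fun i => 0 < h i))
      (fun i => c i / h i) ⟨_, hP⟩
    simp only [Finset.mem_filter] at hj₀P
    obtain ⟨hj₀s, hj₀pos⟩ := hj₀P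
    set α : ℝ := c j₀ / h j₀ with hα
    have hα0 : 0 ≤ α := div_nonneg (hc j₀) hj₀pos.le
    set c' : Fin n → ℝ := fun i => c i - α * h i with hc'
    have hc'0 : ∀ i, 0 ≤ c' i := by
      intro i
      by_cases his : i ∈ s
      · rcases le_or_gt (h i) 0 with hh0 | hh0
        · have : α * h i ≤ 0 := mul_nonpos_of_nonneg_of_nonpos hα0 hh0
          simp only [hc']
          linarith [hc i]
        · have : α ≤ c i / h i := hj₀min i (Finset.mem_filter.2 ⟨his, hh0⟩)
          have := (le_div_iff₀ hh0).1 this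
          simp only [hc']; linarith
      · simp only [hc', hout i his, mul_zero, sub_zero]; exact hc i
    have hc'j₀ : c' j₀ = 0 := by
      simp only [hc', hα]
      field_simp
      ring
    have hsums : ∑ i ∈ s, c' i • v i = ∑ i ∈ s, c i • v i := by
      simp only [hc', sub_smul, mul_smul, Finset.sum_sub_distrib, ← Finset.smul_sum, hsum,
        smul_zero, sub_zero]
    have herase : ∑ i ∈ s.erase j₀, c' i • v i = ∑ i ∈ s, c' i • v i :=
      Finset.sum_erase s (by rw [hc'j₀, zero_smul])
    obtain ⟨t, hts, hli', d, hd, heq⟩ := ih (s.erase j₀) (Finset.erase_ssubset hj₀s) c' hc'0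
    exact ⟨t, hts.trans (Finset.erase_subset _ _), hli', d, hd, by
      rw [← hsums, ← herase, heq]⟩
  rcases Ne.lt_or_gt hi₁ with hneg | hpos
  · exact key (-g) (by simpa [neg_smul] using congrArg Neg.neg hg0) i₁ (by simpa using hneg)
  · exact key g hg0 i₁ hpos

/-- Finitely generated cones in a finite-dimensional real inner product space are closed. -/
lemma cone_isClosed {E : Type*} [NormedAddCommGroup E] [InnerProductSpace ℝ E]
    [FiniteDimensional ℝ E] {n : ℕ} (v : Fin n → E) :
    IsClosed {x : E | ∃ c : Fin n → ℝ, (∀ i, 0 ≤ c i) ∧ x = ∑ i, c i • v i} := by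
  classical
  have hset : {x : E | ∃ c : Fin n → ℝ, (∀ i, 0 ≤ c i) ∧ x = ∑ i, c i • v i}
      = ⋃ (t : Finset (Fin n)) (_ : LinearIndependent ℝ (fun i : t => v i)),
          (fun d : t → ℝ => ∑ i : t, d i • v (i : Fin n)) '' {d | ∀ i, 0 ≤ d i} := by
    ext x
    simp only [Set.mem_setOf_eq, Set.mem_iUnion, Set.mem_image]
    constructor
    · rintro ⟨c, hc, rfl⟩
      obtain ⟨t, -, hli, d, hd, heq⟩ := cone_cara v Finset.univ c hc
      refine ⟨t, hli, fun i => d i, fun i => hd i, ?_⟩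
      rw [Finset.univ_eq_attach, Finset.sum_attach t (fun i => d i • v i)]
      exact heq.symm
    · rintro ⟨t, hli, d, hd, rfl⟩
      refine ⟨fun i => if hi : i ∈ t then d ⟨i, hi⟩ else 0, fun i => ?_, ?_⟩
      · by_cases hi : i ∈ t <;> simp [hi, hd _]
      · have h1 : ∑ i : Fin n, (if hi : i ∈ t then d ⟨i, hi⟩ else 0) • v i
            = ∑ i ∈ t, (if hi : i ∈ t then d ⟨i, hi⟩ else 0) • v i :=
          (Finset.sum_subset (Finset.subset_univ t) (by intro i _ hi; simp [hi])).symm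
        rw [h1, ← Finset.sum_attach t (fun i => (if hi : i ∈ t then d ⟨i, hi⟩ else 0) • v i),
          ← Finset.univ_eq_attach]
        exact Finset.sum_congr rfl fun i _ => by simp [i.2]
  rw [hset]
  refine isClosed_iUnion_of_finite fun t => isClosed_iUnion_of_finite fun hli => ?_
  set L : (t → ℝ) →ₗ[ℝ] E :=
    { toFun := fun d => ∑ i : t, d i • v (i : Fin n)
      map_add' := fun a b => by simp [add_smul, Finset.sum_add_distrib]
      map_smul' := fun r a => by simp [smul_smul, Finset.smul_sum] } with hL
  have hker : LinearMap.ker L = ⊥ := by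
    rw [LinearMap.ker_eq_bot']
    intro d hd
    funext i
    exact Fintype.linearIndependent_iff.1 hli d hd i
  have hemb := L.isClosedEmbedding_of_injective hker
  have horth : IsClosed {d : t → ℝ | ∀ i, 0 ≤ d i} := by
    have : {d : t → ℝ | ∀ i, 0 ≤ d i} = ⋂ i, {d | 0 ≤ d i} := by
      ext; simp [Set.mem_iInter]
    rw [this]
    exact isClosed_iInter fun i => isClosed_Ici.preimage (continuous_apply i)
  exact hemb.isClosedMap _ horth

/-- Farkas' lemma: separation from a finitely generated cone. -/
lemma farkas_sep {E : Type*} [NormedAddCommGroup E] [InnerProductSpace ℝ E]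
    [FiniteDimensional ℝ E] {n : ℕ} (z : Fin n → E) (b : E)
    (hb : ¬ ∃ c : Fin n → ℝ, (∀ i, 0 ≤ c i) ∧ b = ∑ i, c i • z i) :
    ∃ y : E, (∀ i, 0 ≤ ⟪z i, y⟫) ∧ ⟪y, b⟫ < 0 := by
  classical
  set K : ConvexCone ℝ E :=
    { carrier := {x : E | ∃ c : Fin n → ℝ, (∀ i, 0 ≤ c i) ∧ x = ∑ i, c i • z i}
      smul_mem' := by
        rintro r hr x ⟨c, hc, rfl⟩
        exact ⟨fun i => r * c i, fun i => mul_nonneg hr.le (hc i), by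
          simp [Finset.smul_sum, mul_smul]⟩
      add_mem' := by
        rintro x ⟨c, hc, rfl⟩ y ⟨c', hc', rfl⟩
        exact ⟨fun i => c i + c' i, fun i => add_nonneg (hc i) (hc' i), by
          simp [add_smul, Finset.sum_add_distrib]⟩ } with hK
  have hne : (K : Set E).Nonempty := ⟨0, ⟨fun _ => 0, fun _ => le_refl 0, by simp⟩⟩
  have hcl : IsClosed (K : Set E) := cone_isClosed z
  obtain ⟨y, hy1, hy2⟩ :=
    ProperCone.hyperplane_separation' (x₀ := b)
      (⟨K.toPointedCone (ConvexCone.Pointed.of_nonempty_of_isClosed hne hcl), hcl⟩ :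
        ProperCone ℝ E) hb
  refine ⟨y, fun i => hy1 _ ⟨fun j => if j = i then 1 else 0, fun j => by positivity, by
    simp⟩, by rwa [real_inner_comm]⟩

/-- For a polyhedral cone `ρ ⊆ V`, a subspace `W ⊆ V*`,
`ℓ := {x | w(x) = 0 ∀ w ∈ W}` and `σ₀ := ρ ∩ ℓ`, the dual cone of `σ₀` is `ρ^∨ + W`.
If moreover the image of `ρ^∨` in `V*/W` is a strictly convex cone, then `σ₀^⊥ = W`. -/
theorem stmt_1 (V : Type*) [AddCommGroup V] [Module ℝ V] [FiniteDimensional ℝ V]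
    (ρ : Set V) (hρ : IsPolyhedralCone ρ)
    (W : Submodule ℝ (Module.Dual ℝ V))
    (ℓ : Set V) (hℓ : ℓ = {x | ∀ w ∈ W, w x = 0})
    (σ₀ : Set V) (hσ₀ : σ₀ = ρ ∩ ℓ) :
    ({u : Module.Dual ℝ V | ∀ x ∈ σ₀, 0 ≤ u x}
      = {u : Module.Dual ℝ V | ∃ v ∈ {u' : Module.Dual ℝ V | ∀ x ∈ ρ, 0 ≤ u' x},
          ∃ w ∈ W, u = v + w}) ∧
    ((∀ y : Module.Dual ℝ V ⧸ W,
        y ∈ W.mkQ '' {u' : Module.Dual ℝ V | ∀ x ∈ ρ, 0 ≤ u' x} →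
        -y ∈ W.mkQ '' {u' : Module.Dual ℝ V | ∀ x ∈ ρ, 0 ≤ u' x} → y = 0) →
      {u : Module.Dual ℝ V | ∀ x ∈ σ₀, u x = 0} = (W : Set (Module.Dual ℝ V))) := by
  classical
  obtain ⟨n, v, hv⟩ := hρ
  have hρ_mem : ∀ x : V, x ∈ ρ ↔ ∃ c : Fin n → ℝ, (∀ i, 0 ≤ c i) ∧ x = ∑ i, c i • v i := by
    intro x; rw [hv]; exact Iff.rfl
  haveI : Module.Free ℝ W := Module.Free.of_divisionRing ℝ W
  set m := Module.finrank ℝ W with hm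
  set w : Module.Basis (Fin m) ℝ W := Module.finBasis ℝ W with hw
  -- every element of W is a combination of the basis elements
  have hWspan : ∀ ω ∈ W, ∃ a : Fin m → ℝ,
      ω = ∑ j, a j • ((w j : W) : Module.Dual ℝ V) := by
    intro ω hω
    refine ⟨fun j => w.repr ⟨ω, hω⟩ j, ?_⟩
    have hr := w.sum_repr ⟨ω, hω⟩
    calc ω = ((⟨ω, hω⟩ : W) : Module.Dual ℝ V) := rfl
      _ = ((∑ j, w.repr ⟨ω, hω⟩ j • w j : W) : Module.Dual ℝ V) := by rw [hr]
      _ = ∑ j, w.repr ⟨ω, hω⟩ j • ((w j : W) : Module.Dual ℝ V) := by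
          rw [Submodule.coe_sum]
          exact Finset.sum_congr rfl fun j _ => rfl
  -- the key (hard) inclusion
  have key : ∀ u : Module.Dual ℝ V, (∀ x ∈ σ₀, 0 ≤ u x) →
      ∃ vd : Module.Dual ℝ V, (∀ x ∈ ρ, 0 ≤ vd x) ∧ ∃ ww ∈ W, u = vd + ww := by
    intro u hu
    set z : Fin n → EuclideanSpace ℝ (Option (Fin m)) :=
      fun i => WithLp.toLp 2 fun o => o.elim (u (v i)) (fun j => ((w j : W) : Module.Dual ℝ V) (v i)) with hz
    set b : EuclideanSpace ℝ (Option (Fin m)) :=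
      WithLp.toLp 2 fun o => o.elim (-1) (fun _ => 0) with hbdef
    have hb : ¬ ∃ c : Fin n → ℝ, (∀ i, 0 ≤ c i) ∧ b = ∑ i, c i • z i := by
      rintro ⟨c, hc, hbc⟩
      have comp : ∀ o : Option (Fin m), b o = ∑ i, c i * z i o := by
        intro o
        have h := congrArg (EuclideanSpace.projₗ (𝕜 := ℝ) o) hbc
        simpa [map_sum, map_smul, smul_eq_mul] using h
      set x : V := ∑ i, c i • v i with hx
      have hxρ : x ∈ ρ := (hρ_mem x).2 ⟨c, hc, rfl⟩
      have hbase : ∀ j : Fin m, ((w j : W) : Module.Dual ℝ V) x = 0 := by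
        intro j
        have h1 : ((w j : W) : Module.Dual ℝ V) x
            = ∑ i, c i * ((w j : W) : Module.Dual ℝ V) (v i) := by
          simp [hx, map_sum, map_smul, smul_eq_mul]
        exact h1.trans (comp (some j)).symm
      have hxl : x ∈ ℓ := by
        rw [hℓ]
        intro ω hω
        obtain ⟨a, ha⟩ := hWspan ω hω
        rw [ha]
        simp only [LinearMap.coe_sum, Finset.sum_apply, LinearMap.smul_apply, smul_eq_mul]
        exact Finset.sum_eq_zero fun j _ => by rw [hbase j, mul_zero]
      have hx0 : 0 ≤ u x := hu x (by rw [hσ₀]; exact ⟨hxρ, hxl⟩)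
      have h2 : u x = ∑ i, c i * u (v i) := by
        simp [hx, map_sum, map_smul, smul_eq_mul]
      have h3 : u x = -1 := h2.trans (comp none).symm
      linarith
    obtain ⟨y, hy1, hy2⟩ := farkas_sep z b hb
    have hinner_expand : ∀ x' : EuclideanSpace ℝ (Option (Fin m)),
        ⟪ x', y ⟫ = x' none * y none + ∑ j, x' (some j) * y (some j) := by
      intro x'
      rw [PiLp.inner_apply]
      simp only [RCLike.inner_apply, starRingEnd_apply, star_trivial]
      rw [Fintype.sum_option]
      simp only [mul_comm]
    rw [real_inner_comm, hinner_expand b] at hy2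
    have hy2' : (-1 : ℝ) * y none + ∑ j, (0 : ℝ) * y (some j) < 0 := hy2
    have hs : 0 < y none := by
      simp only [zero_mul, Finset.sum_const_zero, add_zero, neg_mul, one_mul] at hy2'
      linarith
    have hvert : ∀ i, 0 ≤ u (v i) * y none
        + ∑ j, ((w j : W) : Module.Dual ℝ V) (v i) * y (some j) := by
      intro i
      have h := hy1 i
      rw [hinner_expand (z i)] at h
      exact h
    set s : ℝ := y none with hsdef
    set ω : Module.Dual ℝ V := ∑ j, y (some j) • ((w j : W) : Module.Dual ℝ V) with hωdef
    have hωW : ω ∈ W := Submodule.sum_mem _ fun j _ => Submodule.smul_mem _ _ (w j).2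
    have hωapp : ∀ x : V, ω x = ∑ j, y (some j) * ((w j : W) : Module.Dual ℝ V) x := by
      intro x
      simp [hωdef, LinearMap.coe_sum, Finset.sum_apply, LinearMap.smul_apply, smul_eq_mul]
    have hvd : ∀ i, 0 ≤ (u + s⁻¹ • ω) (v i) := by
      intro i
      have h := hvert i
      have he : (u + s⁻¹ • ω) (v i) = s⁻¹ * (u (v i) * s
          + ∑ j, ((w j : W) : Module.Dual ℝ V) (v i) * y (some j)) := by
        rw [LinearMap.add_apply, LinearMap.smul_apply, smul_eq_mul, hωapp, mul_add,
          mul_comm (u (v i)) s, ← mul_assoc, inv_mul_cancel₀ hs.ne', one_mul,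
          Finset.mul_sum, Finset.mul_sum]
        congr 1
        exact Finset.sum_congr rfl fun j _ => by ring
      rw [he]
      exact mul_nonneg (inv_nonneg.2 hs.le) h
    refine ⟨u + s⁻¹ • ω, ?_, -(s⁻¹ • ω), Submodule.neg_mem _ (Submodule.smul_mem _ _ hωW), by
      abel⟩
    intro x hx
    obtain ⟨c, hc, rfl⟩ := (hρ_mem x).1 hx
    rw [map_sum]
    exact Finset.sum_nonneg fun i _ => by
      rw [map_smul, smul_eq_mul]; exact mul_nonneg (hc i) (hvd i)
  -- part 1
  have h1 : {u : Module.Dual ℝ V | ∀ x ∈ σ₀, 0 ≤ u x}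
      = {u : Module.Dual ℝ V | ∃ v ∈ {u' : Module.Dual ℝ V | ∀ x ∈ ρ, 0 ≤ u' x},
          ∃ w ∈ W, u = v + w} := by
    ext u
    simp only [Set.mem_setOf_eq]
    constructor
    · intro hu
      obtain ⟨vd, hvd, ww, hww, heq⟩ := key u hu
      exact ⟨vd, hvd, ww, hww, heq⟩
    · rintro ⟨vd, hvd, ww, hww, rfl⟩ x hx
      rw [hσ₀] at hx
      have hwx : ww x = 0 := by
        have := hx.2
        rw [hℓ] at this
        exact this ww hww
      rw [LinearMap.add_apply, hwx, add_zero]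
      exact hvd x hx.1
  refine ⟨h1, fun hstrict => ?_⟩
  ext u
  simp only [Set.mem_setOf_eq, SetLike.mem_coe]
  constructor
  · intro hu
    have hu1 : u ∈ {u : Module.Dual ℝ V | ∀ x ∈ σ₀, 0 ≤ u x} := fun x hx => (hu x hx).ge
    have hu2 : -u ∈ {u : Module.Dual ℝ V | ∀ x ∈ σ₀, 0 ≤ u x} := fun x hx => by
      simp [hu x hx]
    rw [h1] at hu1 hu2
    obtain ⟨vd, hvd, ww, hww, heq⟩ := hu1
    obtain ⟨vd', hvd', ww', hww', heq'⟩ := hu2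
    have mkq_add : ∀ (a c : Module.Dual ℝ V), c ∈ W → W.mkQ (a + c) = W.mkQ a := by
      intro a c hc
      rw [map_add, show W.mkQ c = 0 from (Submodule.Quotient.mk_eq_zero W).2 hc, add_zero]
    have q1 : W.mkQ u = W.mkQ vd := by rw [heq]; exact mkq_add vd ww hww
    have q2 : W.mkQ (-u) = W.mkQ vd' := by rw [heq']; exact mkq_add vd' ww' hww'
    have h0 : W.mkQ u = 0 := by
      refine hstrict (W.mkQ u) ⟨vd, hvd, q1.symm⟩ ⟨vd', hvd', ?_⟩
      rw [← map_neg, q2]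
    exact (Submodule.Quotient.mk_eq_zero W).1 h0
  · intro hu x hx
    rw [hσ₀] at hx
    have := hx.2
    rw [hℓ] at this
    exact this u hu
end

section
/- Let M and M'' be finitely generated free ℤ-modules, φ : M → M'' a ℤ-linear map with real extension φ_ℝ : M_ℝ → M''_ℝ, and let ρ^∨ ⊆ M_ℝ be a rational polyhedral cone such that ρ^∨ ∩ M generates M as a group. Set Λ := φ(ρ^∨ ∩ M) and σ₀^∨ := φ_ℝ^{-1}(φ_ℝ(ρ^∨)). Then φ(σ₀^∨ ∩ M) = φ_ℝ(ρ^∨) ∩ φ(M), and this set equals the saturation ℝ_{≥0}Λ ∩ (Λ − Λ) of the monoid Λ, where ℝ_{≥0}Λ is the convex cone generated by Λ in M''_ℝ and Λ − Λ is the subgroup generated by Λ. -/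
open scoped NNReal

/-- The convex cone generated by a set: all finite nonnegative linear combinations. -/
def nonnegSpan {k : ℕ} (s : Set (Fin k → ℝ)) : Set (Fin k → ℝ) :=
  {x | ∃ (n : ℕ) (c : Fin n → ℝ) (v : Fin n → (Fin k → ℝ)),
    (∀ i, 0 ≤ c i) ∧ (∀ i, v i ∈ s) ∧ x = ∑ i, c i • v i}

/-- The canonical embedding of the lattice `ℤ^k` in `ℝ^k`. -/
def icast {k : ℕ} (x : Fin k → ℤ) : Fin k → ℝ := fun i => (x i : ℝ)

lemma mem_nonnegSpan_of_mem {k : ℕ} {s : Set (Fin k → ℝ)} {x : Fin k → ℝ} (hx : x ∈ s) :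
    x ∈ nonnegSpan s :=
  ⟨1, fun _ => 1, fun _ => x, fun _ => zero_le_one, fun _ => hx, by simp⟩

lemma nonnegSpan_add {k : ℕ} {s : Set (Fin k → ℝ)} {x y : Fin k → ℝ}
    (hx : x ∈ nonnegSpan s) (hy : y ∈ nonnegSpan s) : x + y ∈ nonnegSpan s := by
  obtain ⟨n, c, v, hc, hv, rfl⟩ := hx
  obtain ⟨n', d, w, hd, hw, rfl⟩ := hy
  refine ⟨n + n', Fin.append c d, Fin.append v w, ?_, ?_, ?_⟩
  · intro i
    refine Fin.addCases (fun j => ?_) (fun j => ?_) i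
    · simpa using hc j
    · simpa using hd j
  · intro i
    refine Fin.addCases (fun j => ?_) (fun j => ?_) i
    · simpa using hv j
    · simpa using hw j
  · rw [Fin.sum_univ_add]
    simp

lemma nonnegSpan_smul {k : ℕ} {s : Set (Fin k → ℝ)} {x : Fin k → ℝ} {a : ℝ}
    (ha : 0 ≤ a) (hx : x ∈ nonnegSpan s) : a • x ∈ nonnegSpan s := by
  obtain ⟨n, c, v, hc, hv, rfl⟩ := hx
  refine ⟨n, fun i => a * c i, v, fun i => mul_nonneg ha (hc i), hv, ?_⟩
  rw [Finset.smul_sum]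
  simp [smul_smul]

lemma nonnegSpan_eq_span {k : ℕ} (s : Set (Fin k → ℝ)) :
    nonnegSpan s = (Submodule.span ℝ≥0 s : Set (Fin k → ℝ)) := by
  ext x
  constructor
  · rintro ⟨n, c, v, hc, hv, rfl⟩
    refine Submodule.sum_mem _ fun i _ => ?_
    rw [show c i • v i = (⟨c i, hc i⟩ : ℝ≥0) • v i from by ext j; simp [NNReal.smul_def]]
    exact Submodule.smul_mem _ _ (Submodule.subset_span (hv i))
  · intro hx
    induction hx using Submodule.span_induction with
    | mem x h => exact mem_nonnegSpan_of_mem h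
    | zero => exact ⟨0, Fin.elim0, Fin.elim0, fun i => i.elim0, fun i => i.elim0, by simp⟩
    | add x y hx hy px py => exact nonnegSpan_add px py
    | smul a x hx px => exact (NNReal.smul_def a x) ▸ nonnegSpan_smul a.2 px

lemma nonnegSpan_mono {k : ℕ} {s t : Set (Fin k → ℝ)} (h : s ⊆ t) :
    nonnegSpan s ⊆ nonnegSpan t := by
  rintro x ⟨n, c, v, hc, hv, rfl⟩
  exact ⟨n, c, v, hc, fun i => h (hv i), rfl⟩

lemma nonnegSpan_idem {k : ℕ} (s : Set (Fin k → ℝ)) :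
    nonnegSpan (nonnegSpan s) = nonnegSpan s := by
  rw [nonnegSpan_eq_span s, nonnegSpan_eq_span, Submodule.span_eq]

lemma image_nonnegSpan {m k : ℕ} (f : (Fin m → ℝ) →ₗ[ℝ] (Fin k → ℝ)) (s : Set (Fin m → ℝ)) :
    f '' nonnegSpan s = nonnegSpan (f '' s) := by
  ext y
  constructor
  · rintro ⟨x, ⟨n, c, v, hc, hv, rfl⟩, rfl⟩
    exact ⟨n, c, fun i => f (v i), hc, fun i => ⟨v i, hv i, rfl⟩, by simp [map_sum, map_smul]⟩
  · rintro ⟨n, c, v, hc, hv, rfl⟩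
    choose u hu hfu using hv
    refine ⟨∑ i, c i • u i, ⟨n, c, u, hc, hu, rfl⟩, ?_⟩
    simp only [map_sum, map_smul]
    exact Finset.sum_congr rfl fun i _ => by rw [hfu]

/-- For a ℤ-linear `φ : M → M''` with real extension `φ_ℝ`, and a rational
polyhedral cone `ρ^∨` whose lattice points generate `M`, setting `Λ := φ(ρ^∨ ∩ M)` and
`σ₀^∨ := φ_ℝ⁻¹(φ_ℝ(ρ^∨))`, one has `φ(σ₀^∨ ∩ M) = φ_ℝ(ρ^∨) ∩ φ(M)`, and this set is the
saturation `ℝ_{≥0}Λ ∩ (Λ − Λ)` of the monoid `Λ`. -/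
theorem stmt_2 (m k : ℕ)
    (φ : (Fin m → ℤ) →ₗ[ℤ] (Fin k → ℤ))
    (φR : (Fin m → ℝ) →ₗ[ℝ] (Fin k → ℝ))
    (hcomp : ∀ x : Fin m → ℤ, φR (icast x) = icast (φ x))
    (ρ : Set (Fin m → ℝ))
    (hρ : ∃ s : Finset (Fin m → ℤ), ρ = nonnegSpan (icast '' (s : Set (Fin m → ℤ))))
    (hgen : Submodule.span ℤ {x : Fin m → ℤ | icast x ∈ ρ} = ⊤) :
    (icast '' (⇑φ '' {x : Fin m → ℤ | icast x ∈ ⇑φR ⁻¹' (⇑φR '' ρ)})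
       = (⇑φR '' ρ) ∩ (icast '' Set.range ⇑φ)) ∧
    ((⇑φR '' ρ) ∩ (icast '' Set.range ⇑φ)
       = nonnegSpan (icast '' (⇑φ '' {x : Fin m → ℤ | icast x ∈ ρ}))
         ∩ icast '' (AddSubgroup.closure (⇑φ '' {x : Fin m → ℤ | icast x ∈ ρ})
             : Set (Fin k → ℤ))) := by
  obtain ⟨s, hs⟩ := hρ
  set S : Set (Fin m → ℤ) := {x : Fin m → ℤ | icast x ∈ ρ} with hS
  set Λ : Set (Fin k → ℤ) := ⇑φ '' S with hΛ
  -- s ⊆ S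
  have hsS : (s : Set (Fin m → ℤ)) ⊆ S := fun u hu => by
    simp only [hS, Set.mem_setOf_eq, hs]
    exact mem_nonnegSpan_of_mem ⟨u, hu, rfl⟩
  -- A : φR '' ρ = nonnegSpan (icast '' Λ)
  have himg : ⇑φR '' (icast '' (s : Set (Fin m → ℤ))) = icast '' (⇑φ '' (s : Set (Fin m → ℤ))) := by
    rw [← Set.image_comp, ← Set.image_comp]
    exact Set.image_congr fun u _ => hcomp u
  have hA : ⇑φR '' ρ = nonnegSpan (icast '' Λ) := by
    apply Set.Subset.antisymm
    · rw [hs, image_nonnegSpan, himg]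
      exact nonnegSpan_mono (Set.image_mono (Set.image_mono hsS))
    · have h1 : icast '' Λ ⊆ ⇑φR '' ρ := by
        rintro _ ⟨_, ⟨x, hx, rfl⟩, rfl⟩
        exact ⟨icast x, hx, hcomp x⟩
      calc nonnegSpan (icast '' Λ) ⊆ nonnegSpan (⇑φR '' ρ) := nonnegSpan_mono h1
        _ = ⇑φR '' ρ := by
            conv_lhs => rw [hs, image_nonnegSpan, nonnegSpan_idem]
            rw [hs, image_nonnegSpan]
  -- B : Set.range φ = closure Λ as sets
  have hB : Set.range ⇑φ = (AddSubgroup.closure Λ : Set (Fin k → ℤ)) := by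
    have : AddSubgroup.closure Λ = (Submodule.span ℤ Λ).toAddSubgroup :=
      (Submodule.span_int_eq_addSubgroupClosure Λ).symm
    rw [this]
    have : Submodule.span ℤ Λ = LinearMap.range φ := by
      rw [hΛ, ← Submodule.map_span, hgen, Submodule.map_top]
    rw [this]
    rfl
  constructor
  · ext y
    constructor
    · rintro ⟨_, ⟨x, hx, rfl⟩, rfl⟩
      exact ⟨by rw [← hcomp]; exact hx, φ x, ⟨x, rfl⟩, rfl⟩
    · rintro ⟨hy, _, ⟨x, rfl⟩, rfl⟩
      exact ⟨φ x, ⟨x, by simpa [Set.mem_preimage, hcomp x] using hy, rfl⟩, rfl⟩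
  · rw [hA, hB]
end

section
/- Let d ≥ 1 and let ζ_1, …, ζ_k ∈ ℂ[[X_1,…,X_d]] be pairwise distinct formal power series such that for all s ≠ t one has ζ_s − ζ_t = X^{λ_{st}}·H_{st} for some λ_{st} ∈ ℕ^d and some unit H_{st} of ℂ[[X_1,…,X_d]]. Then for every fixed index s₀, the set {λ_{s₀t} : t ≠ s₀} is totally ordered by the componentwise partial order on ℕ^d. -/
open MvPowerSeries

private lemma aux_lemma {d : ℕ} (a b c : Fin d →₀ ℕ)
    (u v w : MvPowerSeries (Fin d) ℂ)
    (hu : IsUnit u) (hv : IsUnit v) (hw : IsUnit w)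
    (heq : MvPowerSeries.monomial a 1 * u - MvPowerSeries.monomial b 1 * v
        = MvPowerSeries.monomial c 1 * w) :
    a ≤ b ∨ b ≤ a := by
  by_contra hab
  push_neg at hab
  obtain ⟨hab1, hab2⟩ := hab
  rw [MvPowerSeries.isUnit_iff_constantCoeff] at hu hv hw
  have hu0 : MvPowerSeries.coeff 0 u ≠ 0 := by
    simpa [MvPowerSeries.coeff_zero_eq_constantCoeff] using hu.ne_zero
  have hv0 : MvPowerSeries.coeff 0 v ≠ 0 := by
    simpa [MvPowerSeries.coeff_zero_eq_constantCoeff] using hv.ne_zero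
  have hw0 : MvPowerSeries.coeff 0 w ≠ 0 := by
    simpa [MvPowerSeries.coeff_zero_eq_constantCoeff] using hw.ne_zero
  have key : ∀ m : Fin d →₀ ℕ,
      (if a ≤ m then MvPowerSeries.coeff (m - a) u else 0)
      - (if b ≤ m then MvPowerSeries.coeff (m - b) v else 0)
      = (if c ≤ m then MvPowerSeries.coeff (m - c) w else 0) := by
    intro m
    have := congrArg (MvPowerSeries.coeff m) heq
    simpa [map_sub, MvPowerSeries.coeff_monomial_mul] using this
  -- coefficient at a
  have hca : c ≤ a := by
    by_contra hca
    have := key a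
    simp [le_refl, hab2, hca] at this
    exact hu0 this
  have hcb : c ≤ b := by
    by_contra hcb
    have := key b
    simp [le_refl, hab1, hcb] at this
    exact hv0 (by simpa [MvPowerSeries.coeff_zero_eq_constantCoeff] using this)
  have := key c
  simp only [le_refl, if_pos, tsub_self] at this
  by_cases hac : a ≤ c
  · exact hab1 (hac.trans hcb)
  by_cases hbc : b ≤ c
  · exact hab2 (hbc.trans hca)
  simp [hac, hbc] at this
  exact hw0 this.symm

/-- If pairwise distinct power series `ζ s` have pairwise differences of the
form `X^(λ s t) · (unit)`, then for every fixed `s₀` the set `{λ s₀ t : t ≠ s₀}` is totally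
ordered by the componentwise order on `ℕ^d`. -/
theorem stmt_3 (d k : ℕ) (hd : 1 ≤ d)
    (ζ : Fin k → MvPowerSeries (Fin d) ℂ) (hinj : Function.Injective ζ)
    (lam : Fin k → Fin k → (Fin d →₀ ℕ))
    (H : Fin k → Fin k → MvPowerSeries (Fin d) ℂ)
    (hH : ∀ s t, s ≠ t → IsUnit (H s t))
    (hfac : ∀ s t, s ≠ t →
      ζ s - ζ t = MvPowerSeries.monomial (lam s t) 1 * H s t)
    (s₀ : Fin k) :
    ∀ t t', t ≠ s₀ → t' ≠ s₀ → lam s₀ t ≤ lam s₀ t' ∨ lam s₀ t' ≤ lam s₀ t := by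
  intro t t' ht ht'
  by_cases htt : t = t'
  · subst htt; exact Or.inl le_rfl
  have h1 := hfac s₀ t (Ne.symm ht)
  have h2 := hfac s₀ t' (Ne.symm ht')
  have h3 := hfac t' t (fun h => htt h.symm)
  apply aux_lemma (lam s₀ t) (lam s₀ t') (lam t' t) (H s₀ t) (H s₀ t') (H t' t)
    (hH s₀ t (Ne.symm ht)) (hH s₀ t' (Ne.symm ht')) (hH t' t (fun h => htt h.symm))
  rw [← h1, ← h2, ← h3]
  ring
end

section
/- Let d ≥ 1 and let ζ_1, ζ_2, ζ_3 ∈ ℂ[[X_1,…,X_d]] be pairwise distinct formal power series with ζ_i − ζ_j = X^{λ_{ij}}·H_{ij} for some λ_{ij} ∈ ℕ^d and units H_{ij} of ℂ[[X_1,…,X_d]] (for each pair i ≠ j). Then λ_{12} and λ_{23} are comparable in the componentwise order, λ_{13} ≥ min{λ_{12}, λ_{23}}, and if λ_{12} ≠ λ_{23} then λ_{13} = min{λ_{12}, λ_{23}}. -/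
open MvPowerSeries

private lemma coeff_self (d : ℕ) (l : Fin d →₀ ℕ) (H : MvPowerSeries (Fin d) ℂ) :
    MvPowerSeries.coeff l (MvPowerSeries.monomial l 1 * H) = constantCoeff H := by
  rw [MvPowerSeries.coeff_monomial_mul, if_pos le_rfl, one_mul, tsub_self]
  rfl

private lemma coeff_ne (d : ℕ) (l e : Fin d →₀ ℕ) (H : MvPowerSeries (Fin d) ℂ)
    (h : MvPowerSeries.coeff e (MvPowerSeries.monomial l 1 * H) ≠ 0) : l ≤ e := by
  rw [MvPowerSeries.coeff_monomial_mul] at h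
  by_contra hle
  rw [if_neg hle] at h
  exact h rfl

/-- For three pairwise distinct power series whose pairwise differences are
monomials times units, `λ₁₂` and `λ₂₃` are comparable, `λ₁₃ ≥ min{λ₁₂, λ₂₃}`, and if
`λ₁₂ ≠ λ₂₃` then `λ₁₃ = min{λ₁₂, λ₂₃}` (componentwise order on `ℕ^d`). -/
theorem stmt_4 (d : ℕ) (hd : 1 ≤ d)
    (ζ₁ ζ₂ ζ₃ : MvPowerSeries (Fin d) ℂ)
    (h12 : ζ₁ ≠ ζ₂) (h13 : ζ₁ ≠ ζ₃) (h23 : ζ₂ ≠ ζ₃)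
    (l12 l13 l23 : Fin d →₀ ℕ)
    (H12 H13 H23 : MvPowerSeries (Fin d) ℂ)
    (hu12 : IsUnit H12) (hu13 : IsUnit H13) (hu23 : IsUnit H23)
    (e12 : ζ₁ - ζ₂ = MvPowerSeries.monomial l12 1 * H12)
    (e13 : ζ₁ - ζ₃ = MvPowerSeries.monomial l13 1 * H13)
    (e23 : ζ₂ - ζ₃ = MvPowerSeries.monomial l23 1 * H23) :
    (l12 ≤ l23 ∨ l23 ≤ l12) ∧
    ((l12 ≤ l23 → l12 ≤ l13) ∧ (l23 ≤ l12 → l23 ≤ l13)) ∧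
    (l12 ≠ l23 → ((l12 ≤ l23 → l13 = l12) ∧ (l23 ≤ l12 → l13 = l23))) := by
  have c12 : constantCoeff H12 ≠ 0 := by
    simpa using (MvPowerSeries.isUnit_iff_constantCoeff.mp hu12).ne_zero
  have c13 : constantCoeff H13 ≠ 0 := by
    simpa using (MvPowerSeries.isUnit_iff_constantCoeff.mp hu13).ne_zero
  have c23 : constantCoeff H23 ≠ 0 := by
    simpa using (MvPowerSeries.isUnit_iff_constantCoeff.mp hu23).ne_zero
  have key : MvPowerSeries.monomial l13 1 * H13 =
      MvPowerSeries.monomial l12 1 * H12 + MvPowerSeries.monomial l23 1 * H23 := by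
    rw [← e12, ← e23, ← e13]; ring
  have keyc : ∀ e, MvPowerSeries.coeff e (MvPowerSeries.monomial l13 1 * H13) =
      MvPowerSeries.coeff e (MvPowerSeries.monomial l12 1 * H12) +
      MvPowerSeries.coeff e (MvPowerSeries.monomial l23 1 * H23) := by
    intro e; rw [key, map_add]
  -- comparability
  have comp : l12 ≤ l23 ∨ l23 ≤ l12 := by
    by_contra h
    push_neg at h
    obtain ⟨hn1, hn2⟩ := h
    have hA : l13 ≤ l12 := by
      apply coeff_ne d l13 l12 H13
      rw [keyc l12, coeff_self]
      have h0 : MvPowerSeries.coeff l12 (MvPowerSeries.monomial l23 1 * H23) = 0 := by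
        by_contra hc; exact hn2 (coeff_ne d l23 l12 H23 hc)
      rw [h0, add_zero]; exact c12
    have hB : l13 ≤ l23 := by
      apply coeff_ne d l13 l23 H13
      rw [keyc l23, coeff_self]
      have h0 : MvPowerSeries.coeff l23 (MvPowerSeries.monomial l12 1 * H12) = 0 := by
        by_contra hc; exact hn1 (coeff_ne d l12 l23 H12 hc)
      rw [h0, zero_add]; exact c23
    have hS : MvPowerSeries.coeff l13 (MvPowerSeries.monomial l13 1 * H13) ≠ 0 := by
      rw [coeff_self]; exact c13
    rw [keyc l13] at hS
    have hor : MvPowerSeries.coeff l13 (MvPowerSeries.monomial l12 1 * H12) ≠ 0 ∨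
        MvPowerSeries.coeff l13 (MvPowerSeries.monomial l23 1 * H23) ≠ 0 := by
      by_contra hc; push_neg at hc
      rw [hc.1, hc.2, add_zero] at hS; exact hS rfl
    rcases hor with h1 | h2
    · exact hn1 (le_trans (le_antisymm hA (coeff_ne d l12 l13 H12 h1) ▸ le_rfl) hB)
    · exact hn2 (le_trans (le_antisymm hB (coeff_ne d l23 l13 H23 h2) ▸ le_rfl) hA)
  -- part 2: lower bound
  have lb12 : l12 ≤ l23 → l12 ≤ l13 := by
    intro hle
    have hS : MvPowerSeries.coeff l13 (MvPowerSeries.monomial l13 1 * H13) ≠ 0 := by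
      rw [coeff_self]; exact c13
    rw [keyc l13] at hS
    have hor : MvPowerSeries.coeff l13 (MvPowerSeries.monomial l12 1 * H12) ≠ 0 ∨
        MvPowerSeries.coeff l13 (MvPowerSeries.monomial l23 1 * H23) ≠ 0 := by
      by_contra hc; push_neg at hc
      rw [hc.1, hc.2, add_zero] at hS; exact hS rfl
    rcases hor with h1 | h2
    · exact coeff_ne d l12 l13 H12 h1
    · exact le_trans hle (coeff_ne d l23 l13 H23 h2)
  have lb23 : l23 ≤ l12 → l23 ≤ l13 := by
    intro hle
    have hS : MvPowerSeries.coeff l13 (MvPowerSeries.monomial l13 1 * H13) ≠ 0 := by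
      rw [coeff_self]; exact c13
    rw [keyc l13] at hS
    have hor : MvPowerSeries.coeff l13 (MvPowerSeries.monomial l12 1 * H12) ≠ 0 ∨
        MvPowerSeries.coeff l13 (MvPowerSeries.monomial l23 1 * H23) ≠ 0 := by
      by_contra hc; push_neg at hc
      rw [hc.1, hc.2, add_zero] at hS; exact hS rfl
    rcases hor with h1 | h2
    · exact le_trans hle (coeff_ne d l12 l13 H12 h1)
    · exact coeff_ne d l23 l13 H23 h2
  refine ⟨comp, ⟨lb12, lb23⟩, ?_⟩
  intro hne
  constructor
  · intro hle
    refine le_antisymm ?_ (lb12 hle)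
    apply coeff_ne d l13 l12 H13
    rw [keyc l12, coeff_self]
    have h0 : MvPowerSeries.coeff l12 (MvPowerSeries.monomial l23 1 * H23) = 0 := by
      by_contra hc
      exact hne (le_antisymm hle (coeff_ne d l23 l12 H23 hc))
    rw [h0, add_zero]; exact c12
  · intro hle
    refine le_antisymm ?_ (lb23 hle)
    apply coeff_ne d l13 l23 H13
    rw [keyc l23, coeff_self]
    have h0 : MvPowerSeries.coeff l23 (MvPowerSeries.monomial l12 1 * H12) = 0 := by
      by_contra hc
      exact hne (le_antisymm (coeff_ne d l12 l23 H12 hc) hle)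
    rw [h0, zero_add]; exact c23
end

section
/- Let M = ℤ^d with dual lattice N, and let ρ ⊂ N_ℝ be a rational polyhedral cone of dimension d whose dual cone ρ^∨ ⊂ M_ℝ is strictly convex of dimension d. Let n ≥ 1, let λ ∈ ρ^∨ ∩ (1/n)M, set M_λ := M + ℤλ and n_λ := [M_λ : M]. Let M' := M ⊕ ℤy, pair N'_ℝ := N_ℝ × ℝ with M'_ℝ by ⟨(a,t), u + sy⟩ := ⟨a,u⟩ + ts, and let σ := {(a, ⟨a,λ⟩) : a ∈ ρ} ⊂ N'_ℝ. Let φ : M' → M_λ be the homomorphism u + sy ↦ u + sλ. Then: (i) φ is surjective with kernel ℤ·n_λ(y − λ), and this kernel equals σ^⊥ ∩ M' where σ^⊥ := {m ∈ M'_ℝ : ⟨x, m⟩ = 0 for all x ∈ σ}; in particular φ induces a group isomorphism M'/(σ^⊥ ∩ M') ≅ M_λ. (ii) With σ^∨ the dual cone of σ in M'_ℝ, one has σ^∨ ∩ M' = φ^{-1}(ρ^∨ ∩ M_λ), and any group-theoretic splitting of φ induces an additive monoid isomorphism σ^∨ ∩ M' ≅ (ℤ·n_λ(y − λ)) × (ρ^∨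 ∩ M_λ) ≅ ℤ × (ρ^∨ ∩ M_λ). -/
open Finset

set_option maxHeartbeats 1000000

def icastR {k : ℕ} (x : Fin k → ℤ) : Fin k → ℝ := fun i => (x i : ℝ)
def qcastR {k : ℕ} (x : Fin k → ℚ) : Fin k → ℝ := fun i => (x i : ℝ)

/-- The dual cone with respect to the standard pairing on `ℝ^d`. -/
def dualSet {d : ℕ} (ρ : Set (Fin d → ℝ)) : Set (Fin d → ℝ) :=
  {u | ∀ a ∈ ρ, 0 ≤ ∑ i, a i * u i}

/-- The lattice `ℤ^d` inside `ℚ^d`. -/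
def intCastHomQ (d : ℕ) : (Fin d → ℤ) →+ (Fin d → ℚ) where
  toFun x := fun i => (x i : ℚ)
  map_zero' := by funext i; simp
  map_add' x y := by funext i; simp

/-- The homomorphism `φ : M' = M ⊕ ℤy → M_λ ⊆ ℚ^d`, `(u, s) ↦ u + sλ`. -/
def phiHom (d : ℕ) (lq : Fin d → ℚ) : ((Fin d → ℤ) × ℤ) →+ (Fin d → ℚ) where
  toFun p := fun i => (p.1 i : ℚ) + p.2 * lq i
  map_zero' := by funext i; simp
  map_add' p q := by funext i; simp only [Prod.fst_add, Prod.snd_add, Pi.add_apply, Int.cast_add]; ring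

/-- The combinatorial description of the chart of the first toric
modification: `φ : M ⊕ ℤy → M_λ` is surjective, its kernel is `ℤ·n_λ(y − λ) = σ^⊥ ∩ M'`,
`φ` induces `M'/(σ^⊥ ∩ M') ≅ M_λ`, `σ^∨ ∩ M' = φ⁻¹(ρ^∨ ∩ M_λ)`, and there is an additive
monoid isomorphism `σ^∨ ∩ M' ≅ ℤ × (ρ^∨ ∩ M_λ)` induced by a splitting of `φ`. -/
theorem stmt_5 (d : ℕ) (hd : 1 ≤ d) (n : ℕ) (hn : 1 ≤ n)
    (ρ : Set (Fin d → ℝ))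
    (hρ : ∃ s : Finset (Fin d → ℤ), ρ = nonnegSpan (icastR '' (s : Set (Fin d → ℤ))))
    (hρdim : Submodule.span ℝ ρ = ⊤)
    (hdsc : ∀ u ∈ dualSet ρ, -u ∈ dualSet ρ → u = 0)
    (hddim : Submodule.span ℝ (dualSet ρ) = ⊤)
    (lq : Fin d → ℚ)
    (hlq_mem : qcastR lq ∈ dualSet ρ)
    (hlq_n : ∀ i, ∃ z : ℤ, lq i = (z : ℚ) / n)
    (Mlam : AddSubgroup (Fin d → ℚ))
    (hMlam : Mlam = (intCastHomQ d).range ⊔ AddSubgroup.closure {lq})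
    (nlam : ℕ)
    (hnlam : nlam = ((intCastHomQ d).range.relIndex Mlam))
    (σ : Set ((Fin d → ℝ) × ℝ))
    (hσ : σ = {p | p.1 ∈ ρ ∧ p.2 = ∑ i, p.1 i * (lq i : ℝ)}) :
    -- (i) φ is surjective onto M_λ
    ((phiHom d lq).range = Mlam) ∧
    -- the kernel of φ is ℤ·n_λ(y − λ) …
    (∃ μ : Fin d → ℤ, (∀ i, (μ i : ℚ) = (nlam : ℚ) * lq i) ∧
      ((phiHom d lq).ker : Set ((Fin d → ℤ) × ℤ))
        = {p | ∃ z : ℤ, p = z • ((-μ, (nlam : ℤ)) : (Fin d → ℤ) × ℤ)}) ∧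
    -- … and it equals σ^⊥ ∩ M'
    (((phiHom d lq).ker : Set ((Fin d → ℤ) × ℤ))
      = {p | ∀ x ∈ σ, (∑ i, x.1 i * (p.1 i : ℝ)) + x.2 * (p.2 : ℝ) = 0}) ∧
    -- φ induces a group isomorphism M'/(σ^⊥ ∩ M') ≅ M_λ
    (Nonempty ((((Fin d → ℤ) × ℤ) ⧸ (phiHom d lq).ker) ≃+ ↥Mlam)) ∧
    -- (ii) σ^∨ ∩ M' = φ⁻¹(ρ^∨ ∩ M_λ)
    ({p : (Fin d → ℤ) × ℤ | ∀ x ∈ σ, 0 ≤ (∑ i, x.1 i * (p.1 i : ℝ)) + x.2 * (p.2 : ℝ)}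
      = {p : (Fin d → ℤ) × ℤ | qcastR (phiHom d lq p) ∈ dualSet ρ}) ∧
    -- a splitting of φ induces a monoid isomorphism σ^∨ ∩ M' ≅ ℤ × (ρ^∨ ∩ M_λ)
    (∃ Φ : ((Fin d → ℤ) × ℤ) →+ ℤ × (Fin d → ℚ), Function.Injective Φ ∧
      Φ '' {p | ∀ x ∈ σ, 0 ≤ (∑ i, x.1 i * (p.1 i : ℝ)) + x.2 * (p.2 : ℝ)}
        = (Set.univ : Set ℤ) ×ˢ {y : Fin d → ℚ | y ∈ Mlam ∧ qcastR y ∈ dualSet ρ}) := by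
  classical
  -- basic unfolding
  have hφapp : ∀ (p : (Fin d → ℤ) × ℤ) (i : Fin d),
      phiHom d lq p i = (p.1 i : ℚ) + p.2 * lq i := fun p i => rfl
  have hM0mem : ∀ x : Fin d → ℚ, x ∈ (intCastHomQ d).range ↔ ∀ i, ∃ z : ℤ, x i = z := by
    intro x
    constructor
    · rintro ⟨u, rfl⟩ i; exact ⟨u i, rfl⟩
    · intro h
      exact ⟨fun i => (h i).choose, funext fun i => ((h i).choose_spec).symm⟩
  -- the subgroup A of s : ℤ with s • λ integral
  set A : AddSubgroup ℤ :=
    AddSubgroup.comap (zmultiplesHom (Fin d → ℚ) lq) (intCastHomQ d).range with hA_def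
  have hAmem : ∀ s : ℤ, s ∈ A ↔ ∀ i, ∃ z : ℤ, (s : ℚ) * lq i = z := by
    intro s
    rw [hA_def, AddSubgroup.mem_comap, hM0mem]
    constructor
    · intro h i
      obtain ⟨z, hz⟩ := h i
      exact ⟨z, by simpa [zsmul_eq_mul] using hz⟩
    · intro h i
      obtain ⟨z, hz⟩ := h i
      exact ⟨z, by simpa [zsmul_eq_mul] using hz⟩
  obtain ⟨g0, hg0⟩ := Int.subgroup_cyclic A
  have hAdvd : ∀ s : ℤ, s ∈ A ↔ g0 ∣ s := by
    intro s
    rw [hg0, AddSubgroup.mem_closure_singleton]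
    constructor
    · rintro ⟨k, rfl⟩; exact ⟨k, (mul_comm g0 k).symm ▸ rfl⟩
    · rintro ⟨k, rfl⟩; exact ⟨k, (smul_eq_mul ..).trans (mul_comm k g0)⟩
  have hnA : (n : ℤ) ∈ A := by
    rw [hAmem]
    intro i
    obtain ⟨z, hz⟩ := hlq_n i
    refine ⟨z, ?_⟩
    rw [hz]
    have hn0 : (n : ℚ) ≠ 0 := by positivity
    field_simp
    push_cast
    ring
  have hg0ne : g0 ≠ 0 := by
    rintro rfl
    have := (hAdvd n).mp hnA
    simp only [zero_dvd_iff] at this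
    omega
  set g : ℕ := g0.natAbs with hg_def
  have hgpos : 0 < g := Int.natAbs_pos.mpr hg0ne
  have hAg : ∀ s : ℤ, s ∈ A ↔ (g : ℤ) ∣ s := by
    intro s
    rw [hAdvd, hg_def, Int.natAbs_dvd]
  have hgA : (g : ℤ) ∈ A := (hAg g).mpr dvd_rfl
  -- the vector μ = g • λ, with integer entries
  have hgA' := (hAmem g).mp hgA
  set μ : Fin d → ℤ := fun i => (hgA' i).choose with hμ_def
  have hμ : ∀ i, (μ i : ℚ) = (g : ℚ) * lq i := by
    intro i
    have h := (hgA' i).choose_spec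
    push_cast at h
    exact h.symm
  -- λ ∈ M_λ and M ≤ M_λ
  have hlqMlam : lq ∈ Mlam := by
    rw [hMlam]
    exact AddSubgroup.mem_sup_right (AddSubgroup.subset_closure rfl)
  have hM0le : (intCastHomQ d).range ≤ Mlam := by
    rw [hMlam]; exact le_sup_left
  -- n_λ = g
  have hnlam_g : nlam = g := by
    set H : AddSubgroup ↥Mlam := (intCastHomQ d).range.addSubgroupOf Mlam with hH
    let f0 : ℤ →+ ↥Mlam :=
      { toFun := fun s => ⟨s • lq, AddSubgroup.zsmul_mem Mlam hlqMlam s⟩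
        map_zero' := Subtype.ext (zero_zsmul lq)
        map_add' := fun a b => Subtype.ext (add_zsmul lq a b) }
    let f : ℤ →+ ↥Mlam ⧸ H := (QuotientAddGroup.mk' H).comp f0
    have hfsurj : Function.Surjective f := by
      intro q
      obtain ⟨⟨x, hx⟩, rfl⟩ := QuotientAddGroup.mk'_surjective H q
      have hx' := hx
      rw [hMlam] at hx'
      obtain ⟨a, ha, b, hb, hab⟩ := AddSubgroup.mem_sup.mp hx'
      obtain ⟨z, hz⟩ := AddSubgroup.mem_closure_singleton.mp hb
      refine ⟨z, ?_⟩
      show (QuotientAddGroup.mk' H) (f0 z) = (QuotientAddGroup.mk' H) ⟨x, hx⟩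
      rw [QuotientAddGroup.mk'_eq_mk']
      refine ⟨⟨a, hM0le ha⟩, AddSubgroup.mem_addSubgroupOf.mpr ha, ?_⟩
      ext1
      show z • lq + a = x
      rw [hz, add_comm]
      exact hab
    have hfker : f.ker = AddSubgroup.zmultiples ((g : ℤ)) := by
      ext s
      rw [AddMonoidHom.mem_ker, Int.mem_zmultiples_iff]
      show (QuotientAddGroup.mk' H) (f0 s) = 0 ↔ _
      rw [QuotientAddGroup.mk'_apply, QuotientAddGroup.eq_zero_iff,
        AddSubgroup.mem_addSubgroupOf]
      show s • lq ∈ (intCastHomQ d).range ↔ _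
      rw [← hAg s, hA_def, AddSubgroup.mem_comap]
      rfl
    have e1 : (ℤ ⧸ f.ker) ≃+ ↥Mlam ⧸ H := QuotientAddGroup.quotientKerEquivOfSurjective f hfsurj
    have : H.index = Nat.card (ℤ ⧸ f.ker) := by
      rw [AddSubgroup.index_eq_card]
      exact (Nat.card_congr e1.toEquiv).symm
    rw [hnlam]
    show H.index = g
    rw [this, hfker, ← AddSubgroup.index_eq_card, Int.index_zmultiples, Int.natAbs_natCast]
  -- kernel membership criterion
  have hker_iff : ∀ p : (Fin d → ℤ) × ℤ,
      p ∈ (phiHom d lq).ker ↔ ∀ i, (p.1 i : ℚ) + p.2 * lq i = 0 := by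
    intro p
    rw [AddMonoidHom.mem_ker, funext_iff]
    exact forall_congr' fun i => by rw [hφapp]; rfl
  -- Claim 1 : range = M_λ
  have hrange : (phiHom d lq).range = Mlam := by
    rw [hMlam]
    apply le_antisymm
    · rintro x ⟨⟨u, s⟩, rfl⟩
      have hdec : phiHom d lq (u, s) = intCastHomQ d u + fun i => (s : ℚ) * lq i := rfl
      rw [hdec]
      refine AddSubgroup.add_mem _ (AddSubgroup.mem_sup_left ⟨u, rfl⟩)
        (AddSubgroup.mem_sup_right ?_)
      rw [AddSubgroup.mem_closure_singleton]
      exact ⟨s, by funext i; rw [Pi.smul_apply, zsmul_eq_mul]⟩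
    · rw [sup_le_iff]
      constructor
      · rintro x ⟨u, rfl⟩
        exact ⟨(u, 0), by funext i; show (u i : ℚ) + (0:ℤ) * lq i = (u i : ℚ); push_cast; ring⟩
      · rw [AddSubgroup.closure_le]
        rintro x hx
        rw [Set.mem_singleton_iff] at hx
        refine ⟨(0, 1), ?_⟩
        funext i
        rw [hx]
        show ((0:ℤ) : ℚ) + (1:ℤ) * lq i = lq i
        push_cast
        ring
  -- Claim 2 : kernel = ℤ • (-μ, g)
  have hker1 : ((phiHom d lq).ker : Set ((Fin d → ℤ) × ℤ))
      = {p | ∃ z : ℤ, p = z • ((-μ, (g : ℤ)) : (Fin d → ℤ) × ℤ)} := by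
    ext p
    rw [SetLike.mem_coe, hker_iff, Set.mem_setOf_eq]
    constructor
    · intro hp
      have hp2 : p.2 ∈ A := by
        rw [hAmem]
        intro i
        exact ⟨-p.1 i, by push_cast; linarith [hp i]⟩
      obtain ⟨z, hz⟩ := (hAg p.2).mp hp2
      refine ⟨z, ?_⟩
      have h2 : p.2 = (z • ((-μ, (g : ℤ)) : (Fin d → ℤ) × ℤ)).2 := by
        show p.2 = z • (g : ℤ)
        rw [smul_eq_mul, hz]; ring
      have h1 : p.1 = (z • ((-μ, (g : ℤ)) : (Fin d → ℤ) × ℤ)).1 := by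
        funext i
        show p.1 i = (z • (-μ)) i
        have : ((p.1 i : ℚ)) = (((z • (-μ)) i : ℤ) : ℚ) := by
          have hpi := hp i
          have : (z • (-μ)) i = z * (-μ i) := rfl
          rw [this]
          push_cast
          rw [hμ i]
          rw [hz] at hpi
          push_cast at hpi
          nlinarith [hpi]
        exact_mod_cast this
      exact Prod.ext h1 h2
    · rintro ⟨z, rfl⟩
      intro i
      show (((z • (-μ)) i : ℤ) : ℚ) + ((z • (g : ℤ)) : ℤ) * lq i = 0
      have h1 : (z • (-μ)) i = z * (-μ i) := rfl
      have h2 : (z • (g : ℤ)) = z * g := rfl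
      rw [h1, h2]
      push_cast
      rw [hμ i]
      ring
  -- Claim 3 : kernel = σ^⊥ ∩ M'
  have hker2 : ((phiHom d lq).ker : Set ((Fin d → ℤ) × ℤ))
      = {p | ∀ x ∈ σ, (∑ i, x.1 i * (p.1 i : ℝ)) + x.2 * (p.2 : ℝ) = 0} := by
    ext p
    rw [SetLike.mem_coe, hker_iff, Set.mem_setOf_eq]
    constructor
    · intro hp x hx
      rw [hσ, Set.mem_setOf_eq] at hx
      obtain ⟨hx1, hx2⟩ := hx
      rw [hx2]
      have key : ∀ i, (p.1 i : ℝ) + (p.2 : ℝ) * (lq i : ℝ) = 0 := by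
        intro i
        have := hp i
        have : (((p.1 i : ℚ) + p.2 * lq i : ℚ) : ℝ) = ((0 : ℚ) : ℝ) := by rw [this]
        push_cast at this
        linarith
      have : (∑ i, x.1 i * (p.1 i : ℝ)) + (∑ i, x.1 i * (lq i : ℝ)) * (p.2 : ℝ)
          = ∑ i, x.1 i * ((p.1 i : ℝ) + (p.2 : ℝ) * (lq i : ℝ)) := by
        rw [Finset.sum_mul, ← Finset.sum_add_distrib]
        apply Finset.sum_congr rfl
        intros; ring
      rw [this]
      simp only [key, mul_zero, Finset.sum_const_zero]
    · intro hp
      set u : Fin d → ℝ := fun i => (p.1 i : ℝ) + (p.2 : ℝ) * (lq i : ℝ) with hu_def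
      let L : (Fin d → ℝ) →ₗ[ℝ] ℝ :=
        { toFun := fun a => ∑ i, a i * u i
          map_add' := by intro a b; simp [add_mul, Finset.sum_add_distrib]
          map_smul' := by
            intro c a
            simp only [Pi.smul_apply, smul_eq_mul, RingHom.id_apply, Finset.mul_sum]
            apply Finset.sum_congr rfl
            intros; ring }
      have hLρ : ∀ a ∈ ρ, L a = 0 := by
        intro a ha
        have := hp (a, ∑ i, a i * (lq i : ℝ)) (by rw [hσ]; exact ⟨ha, rfl⟩)
        show (∑ i, a i * u i) = 0
        have hexp : (∑ i, a i * u i)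
            = (∑ i, a i * (p.1 i : ℝ)) + (∑ i, a i * (lq i : ℝ)) * (p.2 : ℝ) := by
          rw [Finset.sum_mul, ← Finset.sum_add_distrib]
          apply Finset.sum_congr rfl
          intros; rw [hu_def]; ring
        rw [hexp]
        exact this
      have hLtop : ∀ a, L a = 0 := by
        intro a
        have hle : (⊤ : Submodule ℝ (Fin d → ℝ)) ≤ LinearMap.ker L := by
          rw [← hρdim]
          exact Submodule.span_le.mpr fun a ha => LinearMap.mem_ker.mpr (hLρ a ha)
        exact LinearMap.mem_ker.mp (hle Submodule.mem_top)
      have hu0 : ∀ j, u j = 0 := by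
        intro j
        have h := hLtop (Pi.single j 1)
        simp only [L, LinearMap.coe_mk, AddHom.coe_mk] at h
        simpa [Pi.single_apply, ite_mul] using h
      intro i
      have h2 : (p.1 i : ℝ) + (p.2 : ℝ) * (lq i : ℝ) = 0 := hu0 i
      have h3 : (((p.1 i : ℚ) + p.2 * lq i : ℚ) : ℝ) = 0 := by push_cast; linarith
      exact_mod_cast h3
  -- Claim 5 : σ^∨ ∩ M' = φ⁻¹(ρ^∨)
  have h5 : {p : (Fin d → ℤ) × ℤ | ∀ x ∈ σ, 0 ≤ (∑ i, x.1 i * (p.1 i : ℝ)) + x.2 * (p.2 : ℝ)}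
      = {p : (Fin d → ℤ) × ℤ | qcastR (phiHom d lq p) ∈ dualSet ρ} := by
    have keyeq : ∀ (a : Fin d → ℝ) (p : (Fin d → ℤ) × ℤ),
        (∑ i, a i * qcastR (phiHom d lq p) i)
          = (∑ i, a i * (p.1 i : ℝ)) + (∑ i, a i * (lq i : ℝ)) * (p.2 : ℝ) := by
      intro a p
      rw [Finset.sum_mul, ← Finset.sum_add_distrib]
      apply Finset.sum_congr rfl
      intro i _
      show a i * (((p.1 i : ℚ) + p.2 * lq i : ℚ) : ℝ) = _
      push_cast
      ring
    ext p
    simp only [Set.mem_setOf_eq]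
    constructor
    · intro hp a ha
      have := hp (a, ∑ i, a i * (lq i : ℝ)) (by rw [hσ]; exact ⟨ha, rfl⟩)
      rw [keyeq a p]
      exact this
    · intro hp x hx
      rw [hσ, Set.mem_setOf_eq] at hx
      obtain ⟨hx1, hx2⟩ := hx
      have := hp x.1 hx1
      rw [keyeq x.1 p] at this
      rw [hx2]
      exact this
  -- Bezout : gcd(μ, g) = 1
  set k : (Fin d → ℤ) × ℤ := ((-μ, (g : ℤ)) : (Fin d → ℤ) × ℤ) with hk_def
  have hφk : phiHom d lq k = 0 := by
    funext i
    show ((-μ) i : ℚ) + ((g : ℤ) : ℚ) * lq i = 0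
    rw [Pi.neg_apply]
    push_cast
    rw [hμ i]
    ring
  obtain ⟨cf, hcf⟩ : ∃ cf : Fin (d + 1) → ℤ,
      ∑ i, cf i • (Fin.cons (g : ℤ) μ : Fin (d+1) → ℤ) i = 1 := by
    set v : Fin (d + 1) → ℤ := Fin.cons (g : ℤ) μ with hv_def
    have hspan : Ideal.span (Set.range v) = ⊤ := by
      obtain ⟨e, he⟩ := (IsPrincipalIdealRing.principal (Ideal.span (Set.range v))).principal
      have hdvd : ∀ i, e ∣ v i := by
        intro i
        have hm : v i ∈ Ideal.span (Set.range v) := Ideal.subset_span ⟨i, rfl⟩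
        rw [he] at hm
        exact Ideal.mem_span_singleton.mp hm
      have heg : e ∣ (g : ℤ) := by simpa [hv_def] using hdvd 0
      have heμ : ∀ j, e ∣ μ j := by
        intro j
        simpa [hv_def] using hdvd j.succ
      obtain ⟨t, ht⟩ := heg
      have hene : e ≠ 0 := by
        rintro rfl
        rw [zero_mul] at ht
        omega
      have htA : t ∈ A := by
        rw [hAmem]
        intro i
        obtain ⟨m, hm⟩ := heμ i
        refine ⟨m, ?_⟩
        have hge : (g : ℚ) = (e : ℚ) * (t : ℚ) := by exact_mod_cast ht
        have hm' : (μ i : ℚ) = (e : ℚ) * (m : ℚ) := by exact_mod_cast hm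
        have h1 : (e : ℚ) * ((t : ℚ) * lq i) = (e : ℚ) * (m : ℚ) := by
          rw [← hm', hμ i, hge]
          ring
        have he0 : (e : ℚ) ≠ 0 := Int.cast_ne_zero.mpr hene
        exact mul_left_cancel₀ he0 h1
      have hgt : (g : ℤ) ∣ t := (hAg t).mp htA
      have htne : t ≠ 0 := by
        rintro rfl
        rw [mul_zero] at ht
        omega
      have hgle : (g : ℤ) ≤ |t| := by
        refine Int.le_of_dvd (abs_pos.mpr htne) ?_
        exact (dvd_abs _ _).mpr hgt
      have habs : (g : ℤ) = |e| * |t| := by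
        rw [← abs_mul, ← ht]
        exact (abs_of_nonneg (by positivity)).symm
      have heabs : |e| = 1 := by
        have h2 : |e| * |t| ≤ 1 * |t| := by
          calc |e| * |t| = (g : ℤ) := habs.symm
            _ ≤ |t| := hgle
            _ = 1 * |t| := (one_mul _).symm
        have h3 : |e| ≤ 1 := le_of_mul_le_mul_right h2 (abs_pos.mpr htne)
        have h4 : 0 < |e| := abs_pos.mpr hene
        omega
      have hnat : e.natAbs = 1 := by
        rw [Int.abs_eq_natAbs] at heabs
        exact_mod_cast heabs
      rw [he]
      show Ideal.span {e} = ⊤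
      rw [Ideal.span_singleton_eq_top, Int.isUnit_iff_natAbs_eq]
      exact hnat
    have h1mem : (1 : ℤ) ∈ Ideal.span (Set.range v) := by rw [hspan]; trivial
    exact (Submodule.mem_span_range_iff_exists_fun ℤ).mp h1mem
  let c : ((Fin d → ℤ) × ℤ) →+ ℤ :=
    { toFun := fun p => cf 0 * p.2 - ∑ j : Fin d, cf j.succ * p.1 j
      map_zero' := by simp
      map_add' := by
        intro p q
        simp only [Prod.fst_add, Prod.snd_add, Pi.add_apply, mul_add, Finset.sum_add_distrib]
        ring }
  have hck : c k = 1 := by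
    have h := hcf
    rw [Fin.sum_univ_succ] at h
    simp only [Fin.cons_zero, Fin.cons_succ, smul_eq_mul] at h
    show cf 0 * (g : ℤ) - ∑ j : Fin d, cf j.succ * ((-μ) j) = 1
    simp only [Pi.neg_apply, mul_neg, Finset.sum_neg_distrib, sub_neg_eq_add]
    exact h
  have hΦinj : Function.Injective (c.prod (phiHom d lq)) := by
    rw [injective_iff_map_eq_zero]
    intro p hp
    have h1 : c p = 0 := congrArg Prod.fst hp
    have h2 : phiHom d lq p = 0 := congrArg Prod.snd hp
    have hpker : p ∈ ((phiHom d lq).ker : Set ((Fin d → ℤ) × ℤ)) :=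
      AddMonoidHom.mem_ker.mpr h2
    rw [hker1] at hpker
    obtain ⟨z, rfl⟩ := hpker
    rw [map_zsmul, hck, smul_eq_mul, mul_one] at h1
    rw [h1, zero_smul]
  have hΦimg : (c.prod (phiHom d lq)) ''
      {p | ∀ x ∈ σ, 0 ≤ (∑ i, x.1 i * (p.1 i : ℝ)) + x.2 * (p.2 : ℝ)}
      = (Set.univ : Set ℤ) ×ˢ {y : Fin d → ℚ | y ∈ Mlam ∧ qcastR y ∈ dualSet ρ} := by
    ext ⟨z, y⟩
    simp only [Set.mem_image, Set.mem_prod, Set.mem_univ, true_and, Set.mem_setOf_eq]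
    constructor
    · rintro ⟨p, hp, hpeq⟩
      have h2 : phiHom d lq p = y := congrArg Prod.snd hpeq
      refine ⟨?_, ?_⟩
      · rw [← h2, ← hrange]
        exact ⟨p, rfl⟩
      · have hp' : p ∈ {p : (Fin d → ℤ) × ℤ | qcastR (phiHom d lq p) ∈ dualSet ρ} := h5 ▸ hp
        rw [← h2]
        exact hp'
    · rintro ⟨hy1, hy2⟩
      obtain ⟨p0, hp0⟩ : ∃ p0, phiHom d lq p0 = y := by
        have : y ∈ (phiHom d lq).range := by rw [hrange]; exact hy1
        exact this
      have hφp : phiHom d lq (p0 + (z - c p0) • k) = y := by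
        rw [map_add, map_zsmul, hφk, smul_zero, add_zero, hp0]
      refine ⟨p0 + (z - c p0) • k, ?_, ?_⟩
      · have hmem : (p0 + (z - c p0) • k) ∈
            {p : (Fin d → ℤ) × ℤ |
              ∀ x ∈ σ, 0 ≤ (∑ i, x.1 i * (p.1 i : ℝ)) + x.2 * (p.2 : ℝ)} := by
          rw [h5, Set.mem_setOf_eq, hφp]
          exact hy2
        exact hmem
      · refine Prod.ext ?_ ?_
        · show c (p0 + (z - c p0) • k) = z
          rw [map_add, map_zsmul, hck, smul_eq_mul, mul_one]
          ring
        · exact hφp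
  refine ⟨hrange, ⟨μ, ?_, ?_⟩, hker2, ?_, h5, c.prod (phiHom d lq), hΦinj, hΦimg⟩
  · intro i
    rw [hnlam_g]
    exact hμ i
  · rw [hnlam_g]
    exact hker1
  · exact ⟨(QuotientAddGroup.quotientKerEquivRange (phiHom d lq)).trans
      (AddEquiv.addSubgroupCongr hrange)⟩
end

section
/- Let ζ ∈ R_n be a quasi-ordinary branch with characteristic exponents λ_1, …, λ_g, and let L (resp. L_n) be the field of fractions of ℂ[[X_1,…,X_d]] (resp. of R_n). Then n_j ≥ 2 for all j = 1, …, g, the subfield L(ζ) of L_n equals L(X^{λ_1}, …, X^{λ_g}), and the degree [L(ζ) : L] equals n_1⋯n_g. -/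
set_option synthInstance.maxHeartbeats 1000000
set_option maxHeartbeats 4000000

/-- The lattices `M_0 = ℤ^d`, `M_j = M_{j-1} + ℤ·λ_j`. -/
def Mlat (d : ℕ) (lam : ℕ → Fin d → ℚ) : ℕ → AddSubgroup (Fin d → ℚ)
  | 0 => (intCastHomQ d).range
  | (j + 1) => Mlat d lam j ⊔ AddSubgroup.closure {lam (j + 1)}

/-- The exponent `m/n ∈ (1/n)ℤ^d` of the monomial `X^{m/n} = T^m`. -/
def expQ (d n : ℕ) (m : Fin d →₀ ℕ) : Fin d → ℚ := fun i => (m i : ℚ) / n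

/-- `ζ ∈ R_n = ℂ[[T₁,…,T_d]] = ℂ[[X₁^{1/n},…,X_d^{1/n}]]` is a quasi-ordinary branch with
characteristic exponents `lam 1 < ⋯ < lam g`:
(1) the `lam j` are totally ordered exponents of `ζ` with nonzero coefficient;
(2) every exponent of `ζ` lies in `ℤ^d + Σ_{i : lam i ≤ λ} ℤ·lam i`;
(3) `lam j ∉ M_{j-1}`. -/
def IsQOBranch (d n g : ℕ) (ζ : MvPowerSeries (Fin d) ℂ) (lam : ℕ → Fin d → ℚ) : Prop :=
  (∀ j, 1 ≤ j → j ≤ g →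
    ∃ m : Fin d →₀ ℕ, expQ d n m = lam j ∧ MvPowerSeries.coeff m ζ ≠ 0) ∧
  (∀ j, 1 ≤ j → j < g → lam j < lam (j + 1)) ∧
  (∀ m : Fin d →₀ ℕ, MvPowerSeries.coeff m ζ ≠ 0 →
    expQ d n m ∈ (intCastHomQ d).range ⊔
      AddSubgroup.closure {x | ∃ j, 1 ≤ j ∧ j ≤ g ∧ lam j ≤ expQ d n m ∧ x = lam j}) ∧
  (∀ j, 1 ≤ j → j ≤ g → lam j ∉ Mlat d lam (j - 1))

/-- The subset `ℂ[[X₁,…,X_d]] ⊆ R_n`: series all of whose exponents are divisible by `n`. -/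
def bigXRing (d n : ℕ) : Set (MvPowerSeries (Fin d) ℂ) :=
  {φ | ∀ m : Fin d →₀ ℕ, MvPowerSeries.coeff m φ ≠ 0 → ∀ i, n ∣ m i}

instance (d : ℕ) : IsDomain (MvPowerSeries (Fin d) ℂ) := NoZeroDivisors.to_isDomain _

noncomputable section QOAux
def qomega (n : ℕ) : ℂ := Complex.exp (2 * ↑Real.pi * Complex.I / n)
lemma qomega_prim (n : ℕ) [NeZero n] : IsPrimitiveRoot (qomega n) n :=
  Complex.isPrimitiveRoot_exp n (NeZero.ne n)
lemma qomega_pow (n : ℕ) [NeZero n] : qomega n ^ n = 1 := (qomega_prim n).pow_eq_one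
def chr (n : ℕ) [NeZero n] : AddChar (ZMod n) ℂ := AddChar.zmodChar n (qomega_pow n)
lemma chr_eq_one_iff {n : ℕ} [NeZero n] {x : ZMod n} : chr n x = 1 ↔ x = 0 := by
  constructor
  · intro h
    rw [chr, AddChar.zmodChar_apply] at h
    have h1 := ((qomega_prim n).pow_eq_one_iff_dvd x.val).mp h
    have h0 : x.val = 0 := Nat.eq_zero_of_dvd_of_lt h1 (ZMod.val_lt x)
    exact (ZMod.val_eq_zero x).mp h0
  · rintro rfl; exact (chr n).map_zero_eq_one

lemma chr_ne_zero {n : ℕ} [NeZero n] (x : ZMod n) : chr n x ≠ 0 := by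
  have h : chr n x * chr n (-x) = 1 := by
    rw [← AddChar.map_add_eq_mul, add_neg_cancel, (chr n).map_zero_eq_one]
  intro h0; rw [h0, zero_mul] at h; exact zero_ne_one h

def pairZ {d : ℕ} (n : ℕ) (a : Fin d → ZMod n) (m : Fin d →₀ ℕ) : ZMod n :=
  ∑ i, (m i : ZMod n) * a i
lemma pairZ_add (n : ℕ) {d : ℕ} (a : Fin d → ZMod n) (m m' : Fin d →₀ ℕ) :
    pairZ n a (m + m') = pairZ n a m + pairZ n a m' := by
  simp [pairZ, Finsupp.add_apply, add_mul, Finset.sum_add_distrib]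
lemma pairZ_zero (n : ℕ) {d : ℕ} (a : Fin d → ZMod n) : pairZ n a 0 = 0 := by simp [pairZ]
lemma pairZ_add_left (n : ℕ) {d : ℕ} (a b : Fin d → ZMod n) (m : Fin d →₀ ℕ) :
    pairZ n (a + b) m = pairZ n a m + pairZ n b m := by
  simp [pairZ, mul_add, Finset.sum_add_distrib]
lemma pairZ_zero_left (n : ℕ) {d : ℕ} (m : Fin d →₀ ℕ) : pairZ n (0 : Fin d → ZMod n) m = 0 := by
  simp [pairZ]

/-- rescaling a multivariate power series by the character attached to `a`. -/
def qresc {d : ℕ} (n : ℕ) [NeZero n] (a : Fin d → ZMod n) :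
    MvPowerSeries (Fin d) ℂ →+* MvPowerSeries (Fin d) ℂ where
  toFun φ := fun m => chr n (pairZ n a m) * MvPowerSeries.coeff m φ
  map_one' := by
    ext m
    show chr n (pairZ n a m) * MvPowerSeries.coeff m 1 = MvPowerSeries.coeff m 1
    rcases eq_or_ne m 0 with rfl | hm
    · simp [pairZ_zero]
    · simp [MvPowerSeries.coeff_one, hm]
  map_mul' φ ψ := by
    ext m
    show chr n (pairZ n a m) * MvPowerSeries.coeff m (φ * ψ)
      = MvPowerSeries.coeff m (_ * _)
    rw [MvPowerSeries.coeff_mul]; erw [MvPowerSeries.coeff_mul]; rw [Finset.mul_sum]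
    refine Finset.sum_congr rfl ?_
    rintro ⟨p, q⟩ hpq
    have hm : p + q = m := Finset.HasAntidiagonal.mem_antidiagonal.mp hpq
    show chr n (pairZ n a m) * (MvPowerSeries.coeff p φ * MvPowerSeries.coeff q ψ)
      = (chr n (pairZ n a p) * MvPowerSeries.coeff p φ)
        * (chr n (pairZ n a q) * MvPowerSeries.coeff q ψ)
    rw [← hm, pairZ_add, AddChar.map_add_eq_mul]; ring
  map_zero' := by ext m; show chr n _ * MvPowerSeries.coeff m 0 = MvPowerSeries.coeff m 0; simp
  map_add' φ ψ := by
    ext m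
    show chr n (pairZ n a m) * MvPowerSeries.coeff m (φ + ψ) = _
    rw [map_add]
    show _ = chr n (pairZ n a m) * MvPowerSeries.coeff m φ
      + chr n (pairZ n a m) * MvPowerSeries.coeff m ψ
    ring

lemma coeff_qresc {d : ℕ} (n : ℕ) [NeZero n] (a : Fin d → ZMod n) (φ : MvPowerSeries (Fin d) ℂ)
    (m : Fin d →₀ ℕ) :
    MvPowerSeries.coeff m (qresc n a φ) = chr n (pairZ n a m) * MvPowerSeries.coeff m φ := rfl


/-- The group `(ℤ/n)^d` acting on `R_n`, as a fresh type to carry our instances. -/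
def Gr (d n : ℕ) : Type := Multiplicative (Fin d → ZMod n)

instance (d n : ℕ) : Group (Gr d n) := inferInstanceAs (Group (Multiplicative (Fin d → ZMod n)))
instance (d n : ℕ) [NeZero n] : Fintype (Gr d n) :=
  inferInstanceAs (Fintype (Fin d → ZMod n))
instance (d n : ℕ) [NeZero n] : DecidableEq (Gr d n) :=
  inferInstanceAs (DecidableEq (Fin d → ZMod n))

/-- underlying additive vector of a group element -/
def Gr.ad {d n : ℕ} (a : Gr d n) : Fin d → ZMod n := Multiplicative.toAdd (α := Fin d → ZMod n) a

/-- group element from an additive vector -/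
def Gr.ofV {d n : ℕ} (v : Fin d → ZMod n) : Gr d n := Multiplicative.ofAdd v

lemma Gr.ad_mul {d n : ℕ} (a b : Gr d n) : (a * b).ad = a.ad + b.ad := rfl
lemma Gr.ad_one {d n : ℕ} : (1 : Gr d n).ad = 0 := rfl
lemma Gr.ad_ofV {d n : ℕ} (v : Fin d → ZMod n) : (Gr.ofV v).ad = v := rfl
lemma Gr.ofV_ad {d n : ℕ} (a : Gr d n) : Gr.ofV a.ad = a := rfl

/-- the equivalence with the plain vector type -/
def Gr.adEquiv (d n : ℕ) : Gr d n ≃ (Fin d → ZMod n) where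
  toFun := Gr.ad
  invFun := Gr.ofV
  left_inv := Gr.ofV_ad
  right_inv := Gr.ad_ofV

instance grActionA (d n : ℕ) [NeZero n] : MulSemiringAction (Gr d n) (MvPowerSeries (Fin d) ℂ) where
  smul a φ := qresc n a.ad φ
  one_smul φ := by
    show qresc n (Gr.ad 1) φ = φ
    ext m; rw [coeff_qresc, Gr.ad_one, pairZ_zero_left, (chr n).map_zero_eq_one, one_mul]
  mul_smul a b φ := by
    show qresc n (a * b).ad φ = qresc n a.ad (qresc n b.ad φ)
    ext m
    rw [coeff_qresc, coeff_qresc, coeff_qresc, Gr.ad_mul, pairZ_add_left,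
      AddChar.map_add_eq_mul]
    ring
  smul_zero a := map_zero (qresc n a.ad)
  smul_add a := map_add (qresc n a.ad)
  smul_one a := map_one (qresc n a.ad)
  smul_mul a := map_mul (qresc n a.ad)

lemma coeff_smulA {d n : ℕ} [NeZero n] (a : Gr d n) (φ : MvPowerSeries (Fin d) ℂ)
    (m : Fin d →₀ ℕ) :
    MvPowerSeries.coeff m (a • φ) = chr n (pairZ n a.ad m) * MvPowerSeries.coeff m φ := rfl


section Kaction

variable (d n : ℕ) [NeZero n]

local notation "KK" => FractionRing (MvPowerSeries (Fin d) ℂ)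

lemma map_nzd (a : Gr d n) :
    Submonoid.map (MulSemiringAction.toRingEquiv (Gr d n) (MvPowerSeries (Fin d) ℂ) a).toMonoidHom
      (nonZeroDivisors (MvPowerSeries (Fin d) ℂ)) = nonZeroDivisors (MvPowerSeries (Fin d) ℂ) := by
  ext x
  simp only [Submonoid.mem_map, mem_nonZeroDivisors_iff_ne_zero]
  constructor
  · rintro ⟨y, hy, rfl⟩
    simpa using (smul_ne_zero_iff_ne (a := a)).mpr hy
  · intro hx
    refine ⟨a⁻¹ • x, ?_, ?_⟩
    · exact (smul_ne_zero_iff_ne (a := a⁻¹)).mpr hx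
    · show a • a⁻¹ • x = x
      rw [smul_smul, mul_inv_cancel, one_smul]

/-- the action of `a` on the fraction field -/
def smulK (a : Gr d n) : FractionRing (MvPowerSeries (Fin d) ℂ) ≃+* FractionRing (MvPowerSeries (Fin d) ℂ) :=
  IsLocalization.ringEquivOfRingEquiv (M := nonZeroDivisors (MvPowerSeries (Fin d) ℂ))
    (T := nonZeroDivisors (MvPowerSeries (Fin d) ℂ)) _ _
    (MulSemiringAction.toRingEquiv (Gr d n) (MvPowerSeries (Fin d) ℂ) a) (map_nzd d n a)

lemma smulK_algebraMap (a : Gr d n) (f : MvPowerSeries (Fin d) ℂ) :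
    smulK d n a (algebraMap (MvPowerSeries (Fin d) ℂ) KK f)
      = algebraMap (MvPowerSeries (Fin d) ℂ) KK (a • f) :=
  IsLocalization.ringEquivOfRingEquiv_eq _ _

lemma Kext {F G : KK →+* KK}
    (h : ∀ f, F (algebraMap (MvPowerSeries (Fin d) ℂ) KK f)
      = G (algebraMap (MvPowerSeries (Fin d) ℂ) KK f)) : F = G :=
  IsLocalization.ringHom_ext (nonZeroDivisors (MvPowerSeries (Fin d) ℂ)) (RingHom.ext h)

instance grActionK : MulSemiringAction (Gr d n) (FractionRing (MvPowerSeries (Fin d) ℂ)) where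
  smul a x := smulK d n a x
  one_smul x := by
    have : (smulK d n 1).toRingHom = RingHom.id KK := by
      apply Kext
      intro f
      simp [smulK_algebraMap]
    exact congrArg (fun (F : KK →+* KK) => F x) this
  mul_smul a b x := by
    have : (smulK d n (a * b)).toRingHom
        = ((smulK d n a).toRingHom).comp (smulK d n b).toRingHom := by
      apply Kext
      intro f
      simp [smulK_algebraMap, RingHom.comp_apply, mul_smul]
    exact congrArg (fun (F : KK →+* KK) => F x) this
  smul_zero a := map_zero (smulK d n a)
  smul_add a := map_add (smulK d n a)
  smul_one a := map_one (smulK d n a)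
  smul_mul a := map_mul (smulK d n a)

lemma smulK_def (a : Gr d n) (x : FractionRing (MvPowerSeries (Fin d) ℂ)) :
    a • x = smulK d n a x := rfl

lemma smul_algebraMapK (a : Gr d n) (f : MvPowerSeries (Fin d) ℂ) :
    a • (algebraMap (MvPowerSeries (Fin d) ℂ) KK f)
      = algebraMap (MvPowerSeries (Fin d) ℂ) KK (a • f) :=
  smulK_algebraMap d n a f

end Kaction

section Fixed

variable (d n : ℕ) [NeZero n]

local notation "KK" => FractionRing (MvPowerSeries (Fin d) ℂ)
local notation "ι" => algebraMap (MvPowerSeries (Fin d) ℂ) (FractionRing (MvPowerSeries (Fin d) ℂ))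

lemma smul_eq_one_of_fixed {a : Gr d n} (h : ∀ x : KK, a • x = x) : a = 1 := by
  have : a.ad = 0 := by
    funext i
    by_contra hi
    set m : Fin d →₀ ℕ := Finsupp.single i 1 with hm
    set φ : MvPowerSeries (Fin d) ℂ := MvPowerSeries.monomial m 1 with hφ
    have h1 : a • φ = φ := by
      have := h (ι φ)
      rw [smul_algebraMapK] at this
      exact IsFractionRing.injective (MvPowerSeries (Fin d) ℂ) (FractionRing (MvPowerSeries (Fin d) ℂ)) this
    have h2 : MvPowerSeries.coeff m (a • φ) = MvPowerSeries.coeff m φ := by rw [h1]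
    rw [coeff_smulA, hφ, MvPowerSeries.coeff_monomial_same] at h2
    have hp : pairZ n a.ad m = a.ad i := by
      rw [pairZ, hm]
      rw [Finset.sum_eq_single i]
      · simp
      · intro b _ hb; simp [Finsupp.single_apply, Ne.symm hb]
      · simp
    rw [hp, mul_one] at h2
    exact hi (chr_eq_one_iff.mp h2)
  have : Gr.ofV a.ad = Gr.ofV 0 := by rw [this]
  rwa [Gr.ofV_ad] at this

instance grFaithfulK : FaithfulSMul (Gr d n) (FractionRing (MvPowerSeries (Fin d) ℂ)) where
  eq_of_smul_eq_smul := by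
    intro a b hab
    have : (b⁻¹ * a) = 1 := by
      apply smul_eq_one_of_fixed d n
      intro x
      rw [mul_smul, hab, smul_smul, inv_mul_cancel, one_smul]
    have := congrArg (fun c => b * c) this
    simpa [← mul_assoc] using this

lemma smul_fixed_iff_bigX (φ : MvPowerSeries (Fin d) ℂ) :
    (∀ a : Gr d n, a • φ = φ) ↔ φ ∈ bigXRing d n := by
  constructor
  · intro h m hm i
    set a : Gr d n := Gr.ofV (fun k => if k = i then 1 else 0) with ha
    have h2 : MvPowerSeries.coeff m (a • φ) = MvPowerSeries.coeff m φ := by rw [h a]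
    rw [coeff_smulA] at h2
    have hp : pairZ n a.ad m = (m i : ZMod n) := by
      rw [pairZ, ha, Gr.ad_ofV]
      rw [Finset.sum_eq_single i]
      · simp
      · intro b _ hb; simp [hb]
      · simp
    rw [hp] at h2
    have : chr n ((m i : ZMod n)) = 1 :=
      mul_right_cancel₀ hm (h2.trans (one_mul _).symm)
    have := chr_eq_one_iff.mp this
    exact (ZMod.natCast_eq_zero_iff _ _).mp this
  · intro hφ a
    ext m
    rw [coeff_smulA]
    by_cases hm : MvPowerSeries.coeff m φ = 0
    · rw [hm, mul_zero]
    · have hp : pairZ n a.ad m = 0 := by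
        rw [pairZ]
        apply Finset.sum_eq_zero
        intro i _
        have := (ZMod.natCast_eq_zero_iff (m i) n).mpr (hφ m hm i)
        rw [this, zero_mul]
      rw [hp, (chr n).map_zero_eq_one, one_mul]

lemma mem_fixedSubfield_iff (x : KK) :
    x ∈ FixedPoints.subfield (Gr d n) KK ↔ ∀ a : Gr d n, a • x = x := by
  rfl

lemma L_eq_fixed :
    Subfield.closure (ι '' bigXRing d n) = FixedPoints.subfield (Gr d n) KK := by
  apply le_antisymm
  · rw [Subfield.closure_le]
    rintro _ ⟨f, hf, rfl⟩
    rw [SetLike.mem_coe, mem_fixedSubfield_iff]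
    intro a
    rw [smul_algebraMapK, (smul_fixed_iff_bigX d n f).mpr hf a]
  · intro x hx
    rw [mem_fixedSubfield_iff] at hx
    obtain ⟨f, h, hmem, hfrac⟩ := IsFractionRing.div_surjective (A := MvPowerSeries (Fin d) ℂ) x
    have hh0 : h ≠ 0 := nonZeroDivisors.ne_zero hmem
    set hd : MvPowerSeries (Fin d) ℂ := ∏ a : Gr d n, a • h with hhd
    set num : MvPowerSeries (Fin d) ℂ := f * ∏ a ∈ Finset.univ.erase (1 : Gr d n), a • h with hnum
    have hsplit : hd = h * ∏ a ∈ Finset.univ.erase (1 : Gr d n), a • h := by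
      rw [hhd, ← Finset.mul_prod_erase Finset.univ _ (Finset.mem_univ (1 : Gr d n)), one_smul]
    have hdfix : ∀ b : Gr d n, b • hd = hd := by
      intro b
      rw [hhd]
      have h1 : b • (∏ a : Gr d n, a • h) = ∏ a : Gr d n, b • (a • h) := by
        exact map_prod (MulSemiringAction.toRingHom (Gr d n) (MvPowerSeries (Fin d) ℂ) b) _ _
      rw [h1]
      have h2 : ∀ a : Gr d n, b • (a • h) = (b * a) • h := fun a => (mul_smul b a h).symm
      simp_rw [h2]
      exact Equiv.prod_comp (Equiv.mulLeft b) (fun a => a • h)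
    have hd0 : hd ≠ 0 := by
      rw [hhd, Finset.prod_ne_zero_iff]
      intro a _
      exact (smul_ne_zero_iff_ne (a := a)).mpr hh0
    have hιh : (ι h) ≠ 0 :=
      IsFractionRing.to_map_ne_zero_of_mem_nonZeroDivisors hmem
    have hkey : x * ι hd = ι num := by
      rw [hsplit, hnum, map_mul, map_mul, ← hfrac]
      field_simp
    have hnumfix : ∀ b : Gr d n, b • num = num := by
      intro b
      apply IsFractionRing.injective (MvPowerSeries (Fin d) ℂ) (FractionRing (MvPowerSeries (Fin d) ℂ))
      rw [← smul_algebraMapK, ← hkey, smul_mul', hx b, smul_algebraMapK, hdfix b]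
    have hnumX : num ∈ bigXRing d n := (smul_fixed_iff_bigX d n num).mp hnumfix
    have hdX : hd ∈ bigXRing d n := (smul_fixed_iff_bigX d n hd).mp hdfix
    have hιhd : ι hd ≠ 0 := fun hc =>
      hd0 ((IsFractionRing.to_map_eq_zero_iff
        (K := FractionRing (MvPowerSeries (Fin d) ℂ))).mp hc)
    have hxval : x = ι num / ι hd := (eq_div_iff hιhd).mpr hkey
    rw [hxval]
    exact Subfield.div_mem _
      (Subfield.subset_closure ⟨num, hnumX, rfl⟩)
      (Subfield.subset_closure ⟨hd, hdX, rfl⟩)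

end Fixed

section Counting

variable (d n : ℕ) [NeZero n]

/-- the dot-product pairing on `(ℤ/n)^d` -/
def pairV {d n : ℕ} (a b : Fin d → ZMod n) : ZMod n := ∑ i, a i * b i

lemma pairV_add_left {d n : ℕ} (a a' b : Fin d → ZMod n) :
    pairV (a + a') b = pairV a b + pairV a' b := by
  simp [pairV, add_mul, Finset.sum_add_distrib]

lemma pairV_neg_left {d n : ℕ} (a b : Fin d → ZMod n) : pairV (-a) b = - pairV a b := by
  simp [pairV, Finset.sum_neg_distrib]

/-- pairing as a hom in the second variable -/
def pairHom {d n : ℕ} (a : Fin d → ZMod n) : (Fin d → ZMod n) →+ ZMod n where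
  toFun b := pairV a b
  map_zero' := by simp [pairV]
  map_add' x y := by simp [pairV, mul_add, Finset.sum_add_distrib]

/-- pairing as a hom in the first variable -/
def pairHomL {d n : ℕ} (b : Fin d → ZMod n) : (Fin d → ZMod n) →+ ZMod n where
  toFun a := pairV a b
  map_zero' := by simp [pairV]
  map_add' x y := pairV_add_left x y b

/-- annihilator of a subgroup w.r.t. the pairing -/
def AnnV (d n : ℕ) (S : AddSubgroup (Fin d → ZMod n)) : AddSubgroup (Fin d → ZMod n) where
  carrier := {a | ∀ s ∈ S, pairV a s = 0}
  zero_mem' := by intro s _; simp [pairV]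
  add_mem' := by
    intro a b ha hb s hs
    rw [pairV_add_left, ha s hs, hb s hs, add_zero]
  neg_mem' := by
    intro a ha s hs
    rw [pairV_neg_left, ha s hs, neg_zero]

lemma sum_chr {W : Type*} [AddCommGroup W] [Fintype W] (n : ℕ) [NeZero n] (f : W →+ ZMod n) :
    ∑ w : W, chr n (f w) = if (∀ w, f w = 0) then (Fintype.card W : ℂ) else 0 := by
  classical
  have hψ : ∀ w, ((chr n).compAddMonoidHom f) w = chr n (f w) := fun w => rfl
  have h0 : ((chr n).compAddMonoidHom f = 0) ↔ (∀ w, f w = 0) := by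
    constructor
    · intro h w
      have := congrArg (fun ψ => ψ w) h
      simp only [hψ] at this
      rw [AddChar.zero_apply] at this
      exact chr_eq_one_iff.mp this
    · intro h
      ext w
      rw [hψ, h w, (chr n).map_zero_eq_one, AddChar.zero_apply]
  calc ∑ w : W, chr n (f w) = ∑ w : W, ((chr n).compAddMonoidHom f) w := by simp [hψ]
    _ = if (chr n).compAddMonoidHom f = 0 then (Fintype.card W : ℂ) else 0 :=
        AddChar.sum_eq_ite _
    _ = _ := by rw [if_congr h0 rfl rfl]

lemma delta_pair {d n : ℕ} (s : Fin d → ZMod n) (i : Fin d) :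
    pairV (fun k => if k = i then 1 else 0) s = s i := by
  rw [pairV, Finset.sum_eq_single i]
  · simp
  · intro b _ hb; simp [hb]
  · simp

lemma ann_card (S : AddSubgroup (Fin d → ZMod n)) :
    (Nat.card (AnnV d n S)) * Nat.card S = n ^ d := by
  classical
  have hcardV : Fintype.card (Fin d → ZMod n) = n ^ d := by
    rw [Fintype.card_fun, ZMod.card, Fintype.card_fin]
  -- the double sum
  have key : ∑ a : Fin d → ZMod n, ∑ s : S, chr n (pairV a s.val)
      = (Nat.card (AnnV d n S) : ℂ) * (Nat.card S : ℂ) := by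
    have h1 : ∀ a : Fin d → ZMod n, ∑ s : S, chr n (pairV a s.val)
        = if a ∈ AnnV d n S then (Nat.card S : ℂ) else 0 := by
      intro a
      have := sum_chr n ((pairHom a).comp S.subtype)
      simp only [AddMonoidHom.comp_apply, AddSubgroup.coe_subtype] at this
      have hmem : (∀ s : S, pairHom a s.val = 0) ↔ a ∈ AnnV d n S := by
        constructor
        · intro h s hs; exact h ⟨s, hs⟩
        · intro h s; exact h s.val s.property
      rw [show (∑ s : S, chr n (pairV a s.val)) = ∑ s : S, chr n (pairHom a s.val) from rfl,
        this, Nat.card_eq_fintype_card]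
      exact if_congr hmem rfl rfl
    simp_rw [h1]
    rw [Finset.sum_ite, Finset.sum_const, Finset.sum_const_zero, add_zero, nsmul_eq_mul]
    congr 1
    rw [Nat.card_eq_fintype_card, Fintype.card_subtype]
  have key2 : ∑ a : Fin d → ZMod n, ∑ s : S, chr n (pairV a s.val) = ((n : ℂ)) ^ d := by
    rw [Finset.sum_comm]
    have h1 : ∀ s : S, ∑ a : Fin d → ZMod n, chr n (pairV a s.val)
        = if (s : Fin d → ZMod n) = 0 then ((n : ℂ)) ^ d else 0 := by
      intro s
      have := sum_chr n (pairHomL (d := d) s.val)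
      have hmem : (∀ a, pairHomL (d := d) (n := n) s.val a = 0) ↔ (s : Fin d → ZMod n) = 0 := by
        constructor
        · intro h
          funext i
          have := h (fun k => if k = i then 1 else 0)
          rwa [show pairHomL (d := d) (n := n) s.val (fun k => if k = i then 1 else 0)
            = s.val i from delta_pair s.val i] at this
        · intro h a
          show pairV a s.val = 0
          rw [h]; simp [pairV]
      rw [show (∑ a : Fin d → ZMod n, chr n (pairV a s.val))
        = ∑ a : Fin d → ZMod n, chr n (pairHomL (d := d) s.val a) from rfl, this,
        if_congr hmem rfl rfl, hcardV]
      norm_num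
    simp_rw [h1]
    have hcond : ∀ x : S, ((x : Fin d → ZMod n) = 0) ↔ x = (⟨0, S.zero_mem⟩ : S) := by
      intro x; rw [Subtype.ext_iff]
    simp_rw [hcond]
    rw [Finset.sum_ite_eq' Finset.univ (⟨0, S.zero_mem⟩ : S) (fun _ => ((n : ℂ)) ^ d)]
    rw [if_pos (Finset.mem_univ _)]
  have : ((Nat.card (AnnV d n S) * Nat.card S : ℕ) : ℂ) = ((n ^ d : ℕ) : ℂ) := by
    push_cast
    rw [← key, key2]
  exact_mod_cast this

end Counting

section Lattice

variable (d n : ℕ) [NeZero n]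

/-- `x ↦ x/n` from `ℤ^d` into `ℚ^d` -/
def thetaHom : (Fin d → ℤ) →+ (Fin d → ℚ) where
  toFun x := fun i => (x i : ℚ) / n
  map_zero' := by funext i; simp
  map_add' x y := by funext i; simp [add_div]

lemma thetaHom_inj : Function.Injective (thetaHom d n) := by
  intro x y h
  funext i
  have h1 : (x i : ℚ) / n = (y i : ℚ) / n := congrFun h i
  have hn : (n : ℚ) ≠ 0 := Nat.cast_ne_zero.mpr (NeZero.ne n)
  have h2 : (x i : ℚ) = y i := by
    field_simp at h1
    exact_mod_cast h1
  exact_mod_cast h2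

/-- the coordinatewise reduction `ℤ^d → (ℤ/n)^d` -/
def psiHom : (Fin d → ℤ) →+ (Fin d → ZMod n) where
  toFun x := fun i => (x i : ZMod n)
  map_zero' := by funext i; simp
  map_add' x y := by funext i; simp

/-- the composite pairing `ℤ^d → ℤ/n` attached to `a` -/
def annHom (a : Fin d → ZMod n) : (Fin d → ℤ) →+ ZMod n :=
  (pairHom a).comp (psiHom d n)

lemma annHom_apply (a : Fin d → ZMod n) (x : Fin d → ℤ) :
    annHom d n a x = ∑ i, a i * ((x i : ZMod n)) := rfl

lemma mem_M0_iff (x : Fin d → ℤ) :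
    thetaHom d n x ∈ (intCastHomQ d).range ↔ ∀ i, (n : ℤ) ∣ x i := by
  constructor
  · rintro ⟨y, hy⟩ i
    have := congrFun hy i
    have hn : (n : ℚ) ≠ 0 := Nat.cast_ne_zero.mpr (NeZero.ne n)
    show (n : ℤ) ∣ x i
    refine ⟨y i, ?_⟩
    have h2 : (y i : ℚ) = (x i : ℚ) / n := this
    field_simp at h2
    have h3 : (x i : ℚ) = (n : ℚ) * (y i : ℚ) := by rw [← h2]; ring
    exact_mod_cast h3
  · intro h
    choose y hy using h
    refine ⟨y, ?_⟩
    funext i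
    show (y i : ℚ) = (x i : ℚ) / n
    have hn : (n : ℚ) ≠ 0 := Nat.cast_ne_zero.mpr (NeZero.ne n)
    rw [eq_div_iff hn]
    have h2 : x i = n * y i := hy i
    have h3 : (x i : ℚ) = (n : ℚ) * (y i : ℚ) := by exact_mod_cast congrArg (fun z : ℤ => (z : ℚ)) h2
    rw [h3]; ring

lemma psiHom_eq_zero_iff (x : Fin d → ℤ) :
    psiHom d n x = 0 ↔ ∀ i, (n : ℤ) ∣ x i := by
  constructor
  · intro h i
    have := congrFun h i
    exact (ZMod.intCast_zmod_eq_zero_iff_dvd _ _).mp this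
  · intro h
    funext i
    exact (ZMod.intCast_zmod_eq_zero_iff_dvd _ _).mpr (h i)


variable {d n : ℕ} [NeZero n]

lemma Mlat_mono (lam : ℕ → Fin d → ℚ) : Monotone (Mlat d lam) := by
  apply monotone_nat_of_le_succ
  intro j
  show Mlat d lam j ≤ Mlat d lam j ⊔ AddSubgroup.closure {lam (j + 1)}
  exact le_sup_left

lemma lam_mem_Mlat (lam : ℕ → Fin d → ℚ) (j : ℕ) (hj : 1 ≤ j) : lam j ∈ Mlat d lam j := by
  obtain ⟨j', rfl⟩ : ∃ j', j = j' + 1 := ⟨j - 1, by omega⟩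
  show lam (j' + 1) ∈ Mlat d lam j' ⊔ AddSubgroup.closure {lam (j' + 1)}
  exact AddSubgroup.mem_sup_right (AddSubgroup.subset_closure rfl)

lemma M0_le_Mlat (lam : ℕ → Fin d → ℚ) (j : ℕ) : (intCastHomQ d).range ≤ Mlat d lam j :=
  Mlat_mono lam (Nat.zero_le j)

/-- Key induction: if `a` annihilates the generators `mz i`, `1 ≤ i ≤ j`, then it
annihilates every integer vector whose image lies in `Mlat j`. -/
lemma key_induction (lam : ℕ → Fin d → ℚ) (mz : ℕ → Fin d → ℤ) (j : ℕ)
    (hmz : ∀ i, 1 ≤ i → i ≤ j → thetaHom d n (mz i) = lam i)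
    (a : Fin d → ZMod n)
    (ha : ∀ i, 1 ≤ i → i ≤ j → annHom d n a (mz i) = 0) :
    ∀ x : Fin d → ℤ, thetaHom d n x ∈ Mlat d lam j → annHom d n a x = 0 := by
  induction j with
  | zero =>
    intro x hx
    have hdvd : ∀ i, (n : ℤ) ∣ x i := (mem_M0_iff d n x).mp hx
    have : psiHom d n x = 0 := (psiHom_eq_zero_iff d n x).mpr hdvd
    show pairHom a (psiHom d n x) = 0
    rw [this, map_zero]
  | succ j ih =>
    intro x hx
    rcases AddSubgroup.mem_sup.mp hx with ⟨v1, hv1, v2, hv2, hsum⟩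
    rcases AddSubgroup.mem_closure_singleton.mp hv2 with ⟨k, hk⟩
    have hθ : thetaHom d n (x - k • mz (j + 1)) = v1 := by
      rw [map_sub, map_zsmul, hmz (j + 1) (by omega) (le_refl _), ← hsum, hk]
      abel
    have h1 : annHom d n a (x - k • mz (j + 1)) = 0 := by
      apply ih (fun i h1 h2 => hmz i h1 (by omega)) (fun i h1 h2 => ha i h1 (by omega))
      rw [hθ]; exact hv1
    have h2 : annHom d n a x
        = annHom d n a (x - k • mz (j + 1)) + k • annHom d n a (mz (j + 1)) := by
      rw [← map_zsmul, ← map_add]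
      congr 1
      abel
    rw [h2, h1, ha (j + 1) (by omega) (le_refl _), zero_add, smul_zero]

/-- `N_j`: the integer model of the lattice `M_j`. -/
def Nlat (d n : ℕ) (lam : ℕ → Fin d → ℚ) (j : ℕ) : AddSubgroup (Fin d → ℤ) :=
  (Mlat d lam j).comap (thetaHom d n)

lemma Mlat_le_range (lam : ℕ → Fin d → ℚ) (mz : ℕ → Fin d → ℤ) (j : ℕ)
    (hmz : ∀ i, 1 ≤ i → i ≤ j → thetaHom d n (mz i) = lam i) :
    Mlat d lam j ≤ (thetaHom d n).range := by
  induction j with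
  | zero =>
    rintro v ⟨y, rfl⟩
    refine ⟨fun i => n * y i, ?_⟩
    funext i
    show ((n * y i : ℤ) : ℚ) / n = (y i : ℚ)
    have hn : (n : ℚ) ≠ 0 := Nat.cast_ne_zero.mpr (NeZero.ne n)
    push_cast
    field_simp
  | succ j ih =>
    have hsub : AddSubgroup.closure {lam (j + 1)} ≤ (thetaHom d n).range := by
      rw [AddSubgroup.closure_le]
      rintro v rfl
      exact ⟨mz (j + 1), hmz (j + 1) (by omega) (le_refl _)⟩
    exact sup_le (ih (fun i h1 h2 => hmz i h1 (by omega))) hsub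

lemma relindex_N_eq_M (lam : ℕ → Fin d → ℚ) (mz : ℕ → Fin d → ℤ) (j k : ℕ) (hjk : j ≤ k)
    (hmz : ∀ i, 1 ≤ i → i ≤ k → thetaHom d n (mz i) = lam i) :
    (Nlat d n lam j).relIndex (Nlat d n lam k) = (Mlat d lam j).relIndex (Mlat d lam k) := by
  rw [Nlat, Nlat, AddSubgroup.relIndex_comap]
  congr 1
  rw [AddSubgroup.map_comap_eq, inf_eq_right.mpr (Mlat_le_range lam mz k hmz)]


lemma Nlat_zero_eq_ker (lam : ℕ → Fin d → ℚ) : Nlat d n lam 0 = (psiHom d n).ker := by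
  ext x
  rw [Nlat, AddSubgroup.mem_comap, AddMonoidHom.mem_ker]
  show thetaHom d n x ∈ (intCastHomQ d).range ↔ _
  rw [mem_M0_iff d n x, ← psiHom_eq_zero_iff d n x]

lemma psiHom_surjective : Function.Surjective (psiHom d n) := by
  intro v
  choose y hy using fun i => ZMod.intCast_surjective (v i)
  exact ⟨y, funext hy⟩

lemma index_Nlat_zero (lam : ℕ → Fin d → ℚ) : (Nlat d n lam 0).index = n ^ d := by
  rw [Nlat_zero_eq_ker lam, AddSubgroup.index_ker,
    AddMonoidHom.range_eq_top_of_surjective _ (psiHom_surjective (d := d) (n := n))]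
  rw [Nat.card_congr AddSubgroup.topEquiv.toEquiv, Nat.card_eq_fintype_card,
    Fintype.card_fun, ZMod.card, Fintype.card_fin]

lemma card_S_eq_relindex (lam : ℕ → Fin d → ℚ) (j : ℕ) :
    Nat.card (AddSubgroup.map (psiHom d n) (Nlat d n lam j))
      = (Nlat d n lam 0).relIndex (Nlat d n lam j) := by
  rw [Nlat_zero_eq_ker lam, AddSubgroup.relIndex_ker]

lemma Nlat_mono (lam : ℕ → Fin d → ℚ) {j k : ℕ} (h : j ≤ k) :
    Nlat d n lam j ≤ Nlat d n lam k :=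
  AddSubgroup.comap_mono (Mlat_mono lam h)

lemma relindex_M_ne_zero (lam : ℕ → Fin d → ℚ) (mz : ℕ → Fin d → ℤ) (g : ℕ)
    (hmz : ∀ i, 1 ≤ i → i ≤ g → thetaHom d n (mz i) = lam i) {j : ℕ} (hj1 : 1 ≤ j) (hjg : j ≤ g) :
    (Mlat d lam (j - 1)).relIndex (Mlat d lam j) ≠ 0 := by
  rw [← relindex_N_eq_M lam mz (j - 1) j (by omega)
    (fun i h1 h2 => hmz i h1 (by omega))]
  intro h0
  have h1 : (Nlat d n lam 0).relIndex (Nlat d n lam j) ≠ 0 := by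
    have hdvd : (Nlat d n lam 0).relIndex (Nlat d n lam j) ∣ (Nlat d n lam 0).index :=
      AddSubgroup.relIndex_dvd_index_of_le (Nlat_mono lam (Nat.zero_le j))
    intro hz
    rw [hz] at hdvd
    have := index_Nlat_zero (d := d) (n := n) lam
    rw [zero_dvd_iff.mp hdvd] at this
    exact (pow_ne_zero d (NeZero.ne n)) this.symm
  have hdvd2 : (Nlat d n lam (j - 1)).relIndex (Nlat d n lam j)
      ∣ (Nlat d n lam 0).relIndex (Nlat d n lam j) :=
    AddSubgroup.relIndex_dvd_of_le_left _ (Nlat_mono lam (Nat.zero_le (j - 1)))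
  rw [h0] at hdvd2
  exact h1 (zero_dvd_iff.mp hdvd2)

lemma relindex_M_ne_one (lam : ℕ → Fin d → ℚ) {j : ℕ} (hj1 : 1 ≤ j)
    (hlam : lam j ∉ Mlat d lam (j - 1)) :
    (Mlat d lam (j - 1)).relIndex (Mlat d lam j) ≠ 1 := by
  intro h1
  have hle : Mlat d lam j ≤ Mlat d lam (j - 1) := AddSubgroup.relIndex_eq_one.mp h1
  exact hlam (hle (lam_mem_Mlat lam j hj1))

lemma relindex_M_prod (lam : ℕ → Fin d → ℚ) (g : ℕ) :
    ∏ j ∈ Finset.Icc 1 g, (Mlat d lam (j - 1)).relIndex (Mlat d lam j)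
      = (Mlat d lam 0).relIndex (Mlat d lam g) := by
  induction g with
  | zero => simp [AddSubgroup.relIndex_self]
  | succ g ih =>
    rw [Finset.prod_Icc_succ_top (by omega), ih]
    simp only [Nat.add_sub_cancel]
    exact AddSubgroup.relIndex_mul_relIndex _ _ _ (Mlat_mono lam (Nat.zero_le g))
      (Mlat_mono lam (by omega))

end Lattice

section Stab

variable {d n : ℕ} [NeZero n]

lemma pairZ_eq_annHom (a : Fin d → ZMod n) (m : Fin d →₀ ℕ) :
    pairZ n a m = annHom d n a (fun i => ((m i : ℕ) : ℤ)) := by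
  rw [annHom_apply, pairZ]
  apply Finset.sum_congr rfl
  intro i _
  push_cast
  ring

lemma mono_fix_iff (a : Gr d n) (μ : Fin d →₀ ℕ) :
    a • (MvPowerSeries.monomial μ (1 : ℂ)) = MvPowerSeries.monomial μ (1 : ℂ)
      ↔ pairZ n a.ad μ = 0 := by
  rw [← chr_eq_one_iff]
  constructor
  · intro h
    have := congrArg (fun φ => MvPowerSeries.coeff μ φ) h
    simp only [coeff_smulA, MvPowerSeries.coeff_monomial_same] at this
    simpa using this
  · intro h
    ext m
    rw [coeff_smulA]
    rcases eq_or_ne m μ with rfl | hm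
    · rw [h, one_mul]
    · rw [MvPowerSeries.coeff_monomial_ne hm, mul_zero]

lemma thetaHom_expQ (m : Fin d →₀ ℕ) :
    thetaHom d n (fun i => ((m i : ℕ) : ℤ)) = expQ d n m := by
  funext i
  show (((m i : ℕ) : ℤ) : ℚ) / n = ((m i : ℕ) : ℚ) / n
  push_cast
  ring

/-- characterization of the stabilizer of `ζ` -/
lemma stab_iff {g : ℕ} {ζ : MvPowerSeries (Fin d) ℂ} {lam : ℕ → Fin d → ℚ}
    (hqo : IsQOBranch d n g ζ lam) {mexp : ℕ → (Fin d →₀ ℕ)}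
    (hmexp : ∀ j, 1 ≤ j → j ≤ g → ∀ i, ((mexp j) i : ℚ) = (n : ℚ) * lam j i)
    (a : Gr d n) :
    a • ζ = ζ ↔ ∀ j, 1 ≤ j → j ≤ g → annHom d n a.ad (fun i => ((mexp j i : ℕ) : ℤ)) = 0 := by
  have hn : (n : ℚ) ≠ 0 := Nat.cast_ne_zero.mpr (NeZero.ne n)
  have hmz : ∀ i, 1 ≤ i → i ≤ g → thetaHom d n (fun k => ((mexp i k : ℕ) : ℤ)) = lam i := by
    intro i h1 h2
    funext k
    show (((mexp i k : ℕ) : ℤ) : ℚ) / n = lam i k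
    push_cast
    rw [hmexp i h1 h2 k]
    field_simp
  constructor
  · intro h j h1 h2
    obtain ⟨m, hm_exp, hm_ne⟩ := hqo.1 j h1 h2
    have hcoeff : MvPowerSeries.coeff m (a • ζ) = MvPowerSeries.coeff m ζ := by rw [h]
    rw [coeff_smulA] at hcoeff
    have hchr : chr n (pairZ n a.ad m) = 1 :=
      mul_right_cancel₀ hm_ne (hcoeff.trans (one_mul _).symm)
    have hpz : pairZ n a.ad m = 0 := chr_eq_one_iff.mp hchr
    have hmm : ∀ i, mexp j i = m i := by
      intro i
      have h3 : ((mexp j i : ℕ) : ℚ) = ((m i : ℕ) : ℚ) := by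
        rw [hmexp j h1 h2 i]
        have : expQ d n m i = lam j i := by rw [hm_exp]
        rw [← this]
        show (n : ℚ) * ((m i : ℚ) / n) = (m i : ℚ)
        field_simp
      exact_mod_cast h3
    rw [← pairZ_eq_annHom]
    have : pairZ n a.ad (mexp j) = pairZ n a.ad m := by
      rw [pairZ, pairZ]
      apply Finset.sum_congr rfl
      intro i _
      rw [hmm i]
    rw [this]
    exact hpz
  · intro h
    ext m
    rw [coeff_smulA]
    by_cases hc : MvPowerSeries.coeff m ζ = 0
    · rw [hc, mul_zero]
    · have hmem := hqo.2.2.1 m hc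
      have hle : (intCastHomQ d).range ⊔
          AddSubgroup.closure {x | ∃ j, 1 ≤ j ∧ j ≤ g ∧ lam j ≤ expQ d n m ∧ x = lam j}
            ≤ Mlat d lam g := by
        apply sup_le (M0_le_Mlat lam g)
        rw [AddSubgroup.closure_le]
        rintro x ⟨j, h1, h2, _, rfl⟩
        exact Mlat_mono lam h2 (lam_mem_Mlat lam j h1)
      have hx : thetaHom d n (fun i => ((m i : ℕ) : ℤ)) ∈ Mlat d lam g := by
        rw [thetaHom_expQ]
        exact hle hmem
      have := key_induction lam (fun j k => ((mexp j k : ℕ) : ℤ)) g hmz a.ad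
        (fun i h1 h2 => h i h1 h2) (fun i => ((m i : ℕ) : ℤ)) hx
      rw [← pairZ_eq_annHom] at this
      rw [this, (chr n).map_zero_eq_one, one_mul]

/-- characterization of the annihilator of `S = ψ(N_g)` -/
lemma annV_iff {g : ℕ} {lam : ℕ → Fin d → ℚ} (mz : ℕ → Fin d → ℤ)
    (hmz : ∀ i, 1 ≤ i → i ≤ g → thetaHom d n (mz i) = lam i) (a : Fin d → ZMod n) :
    a ∈ AnnV d n (AddSubgroup.map (psiHom d n) (Nlat d n lam g))
      ↔ ∀ j, 1 ≤ j → j ≤ g → annHom d n a (mz j) = 0 := by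
  constructor
  · intro h j h1 h2
    apply h (psiHom d n (mz j))
    refine ⟨mz j, ?_, rfl⟩
    show thetaHom d n (mz j) ∈ Mlat d lam g
    rw [hmz j h1 h2]
    exact Mlat_mono lam h2 (lam_mem_Mlat lam j h1)
  · rintro h s ⟨x, hx, rfl⟩
    exact key_induction lam mz g hmz a h x hx

end Stab

section Galois

lemma fixingSubgroup_adjoin {F E : Type*} [Field F] [Field E] [Algebra F E] (S : Set E) :
    IntermediateField.fixingSubgroup (IntermediateField.adjoin F S)
      = fixingSubgroup (E ≃ₐ[F] E) S := by
  apply le_antisymm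
  · intro σ hσ
    rw [mem_fixingSubgroup_iff]
    intro y hy
    exact ((mem_fixingSubgroup_iff _).mp hσ) y (IntermediateField.subset_adjoin F S hy)
  · intro σ hσ
    have hSle : IntermediateField.adjoin F S
        ≤ IntermediateField.fixedField (fixingSubgroup (E ≃ₐ[F] E) S) := by
      rw [IntermediateField.adjoin_le_iff]
      intro x hx
      show x ∈ IntermediateField.fixedField (fixingSubgroup (E ≃ₐ[F] E) S)
      show ∀ τ : (fixingSubgroup (E ≃ₐ[F] E) S), τ • x = x
      intro τ
      exact ((mem_fixingSubgroup_iff _).mp τ.2) x hx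
    exact (IntermediateField.le_iff_le _ _).mp hSle hσ


lemma hmz_of_hmexp {d n : ℕ} [NeZero n] {g : ℕ} (lam : ℕ → Fin d → ℚ)
    (mexp : ℕ → (Fin d →₀ ℕ))
    (hmexp : ∀ j, 1 ≤ j → j ≤ g → ∀ i, ((mexp j) i : ℚ) = (n : ℚ) * lam j i) :
    ∀ i, 1 ≤ i → i ≤ g → thetaHom d n (fun k => ((mexp i k : ℕ) : ℤ)) = lam i := by
  intro i h1 h2
  funext k
  show (((mexp i k : ℕ) : ℤ) : ℚ) / n = lam i k
  have hn : (n : ℚ) ≠ 0 := Nat.cast_ne_zero.mpr (NeZero.ne n)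
  push_cast
  rw [hmexp i h1 h2 k]
  field_simp

lemma Gr_card (d n : ℕ) [NeZero n] : Fintype.card (Gr d n) = n ^ d := by
  rw [Fintype.card_congr (Gr.adEquiv d n), Fintype.card_fun, ZMod.card, Fintype.card_fin]

open Finset in
theorem main_core (d n g : ℕ) [NeZero n] (hg : 1 ≤ g)
    (ζ : MvPowerSeries (Fin d) ℂ) (lam : ℕ → Fin d → ℚ)
    (hqo : IsQOBranch d n g ζ lam)
    (nj : ℕ → ℕ)
    (hnj : ∀ j, 1 ≤ j → j ≤ g →
      nj j = (Mlat d lam (j - 1)).relIndex (Mlat d lam j))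
    (mexp : ℕ → (Fin d →₀ ℕ))
    (hmexp : ∀ j, 1 ≤ j → j ≤ g → ∀ i, ((mexp j) i : ℚ) = (n : ℚ) * lam j i)
    (L : Subfield (FractionRing (MvPowerSeries (Fin d) ℂ)))
    (hL : L = FixedPoints.subfield (Gr d n) (FractionRing (MvPowerSeries (Fin d) ℂ))) :
    (∀ j, 1 ≤ j → j ≤ g → 2 ≤ nj j) ∧
    IntermediateField.adjoin ↥L {algebraMap (MvPowerSeries (Fin d) ℂ) (FractionRing (MvPowerSeries (Fin d) ℂ)) ζ}
      = IntermediateField.adjoin ↥L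
          {x : FractionRing (MvPowerSeries (Fin d) ℂ) | ∃ j, 1 ≤ j ∧ j ≤ g ∧
            x = algebraMap (MvPowerSeries (Fin d) ℂ) (FractionRing (MvPowerSeries (Fin d) ℂ))
              (MvPowerSeries.monomial (mexp j) 1)} ∧
    Module.finrank ↥L
        ↥(IntermediateField.adjoin ↥L
          {algebraMap (MvPowerSeries (Fin d) ℂ) (FractionRing (MvPowerSeries (Fin d) ℂ)) ζ})
      = ∏ j ∈ Icc 1 g, nj j := by
  subst hL
  classical
  set KK := FractionRing (MvPowerSeries (Fin d) ℂ) with hKK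
  set ι := algebraMap (MvPowerSeries (Fin d) ℂ) KK with hι
  set mz : ℕ → Fin d → ℤ := fun j k => ((mexp j k : ℕ) : ℤ) with hmzdef
  have hmz : ∀ i, 1 ≤ i → i ≤ g → thetaHom d n (mz i) = lam i :=
    hmz_of_hmexp lam mexp hmexp
  set L : Subfield KK := FixedPoints.subfield (Gr d n) KK with hLdef
  -- Part 1
  have part1 : ∀ j, 1 ≤ j → j ≤ g → 2 ≤ nj j := by
    intro j h1 h2
    rw [hnj j h1 h2]
    have hne0 := relindex_M_ne_zero lam mz g hmz h1 h2
    have hne1 := relindex_M_ne_one lam h1 (hqo.2.2.2 j h1 h2)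
    omega
  refine ⟨part1, ?_⟩
  -- Galois setup
  set S2 : Set KK := {x : KK | ∃ j, 1 ≤ j ∧ j ≤ g ∧
    x = ι (MvPowerSeries.monomial (mexp j) 1)} with hS2
  set E1 := IntermediateField.adjoin ↥L {ι ζ} with hE1
  set E2 := IntermediateField.adjoin ↥L S2 with hE2def
  have hinj : Function.Injective ι :=
    IsFractionRing.injective (MvPowerSeries (Fin d) ℂ) KK
  set e := FixedPoints.toAlgAutMulEquiv (Gr d n) KK with he
  have he_app : ∀ (a : Gr d n) (x : KK), e a x = a • x := fun a x => rfl
  have he_smul : ∀ (a : Gr d n) (x : KK), (e a) • x = a • x := fun a x => rfl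
  -- membership characterizations
  have hmem1 : ∀ a : Gr d n, (e a ∈ fixingSubgroup (KK ≃ₐ[↥L] KK) {ι ζ})
      ↔ (∀ j, 1 ≤ j → j ≤ g → annHom d n a.ad (mz j) = 0) := by
    intro a
    rw [mem_fixingSubgroup_iff]
    constructor
    · intro h
      have h2 := h (ι ζ) rfl
      rw [he_smul, smul_algebraMapK] at h2
      exact (stab_iff hqo hmexp a).mp (hinj h2)
    · intro h
      intro y hy
      rw [Set.mem_singleton_iff] at hy
      subst hy
      rw [he_smul, smul_algebraMapK]
      rw [(stab_iff hqo hmexp a).mpr h]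
  have hmem2 : ∀ a : Gr d n, (e a ∈ fixingSubgroup (KK ≃ₐ[↥L] KK) S2)
      ↔ (∀ j, 1 ≤ j → j ≤ g → annHom d n a.ad (mz j) = 0) := by
    intro a
    rw [mem_fixingSubgroup_iff]
    constructor
    · intro h j h1 h2
      have h3 := h (ι (MvPowerSeries.monomial (mexp j) 1)) ⟨j, h1, h2, rfl⟩
      rw [he_smul, smul_algebraMapK] at h3
      have h4 := (mono_fix_iff a (mexp j)).mp (hinj h3)
      rw [pairZ_eq_annHom] at h4
      exact h4
    · rintro h y ⟨j, h1, h2, rfl⟩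
      rw [he_smul, smul_algebraMapK]
      congr 1
      apply (mono_fix_iff a (mexp j)).mpr
      rw [pairZ_eq_annHom]
      exact h j h1 h2
  have hfixeq : IntermediateField.fixingSubgroup E1 = IntermediateField.fixingSubgroup E2 := by
    rw [hE1, hE2def, fixingSubgroup_adjoin, fixingSubgroup_adjoin]
    ext σ
    obtain ⟨a, rfl⟩ := (FixedPoints.toAlgAut_bijective (Gr d n) KK).surjective σ
    rw [show MulSemiringAction.toAlgAut (Gr d n) (↥(FixedPoints.subfield (Gr d n) KK)) KK a
      = e a from rfl]
    rw [hmem1 a, hmem2 a]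
  have hE12 : E1 = E2 := by
    rw [← IsGalois.fixedField_fixingSubgroup E1, hfixeq,
      IsGalois.fixedField_fixingSubgroup E2]
  refine ⟨hE12, ?_⟩
  -- degree computation
  set Sv := AddSubgroup.map (psiHom d n) (Nlat d n lam g) with hSv
  have hcard_ann : Nat.card (AnnV d n Sv) * Nat.card Sv = n ^ d := ann_card d n Sv
  have hfixcard : Nat.card (IntermediateField.fixingSubgroup E1) = Nat.card (AnnV d n Sv) := by
    rw [hE1, fixingSubgroup_adjoin]
    have hcond : ∀ a : Gr d n,
        (e a ∈ fixingSubgroup (KK ≃ₐ[↥L] KK) {ι ζ}) ↔ (Gr.adEquiv d n a ∈ AnnV d n Sv) := by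
      intro a
      rw [hmem1 a]
      exact (annV_iff mz hmz a.ad).symm
    have equiv1 : {a : Gr d n // e a ∈ fixingSubgroup (KK ≃ₐ[↥L] KK) {ι ζ}}
        ≃ ↥(fixingSubgroup (KK ≃ₐ[↥L] KK) {ι ζ}) :=
      (e.toEquiv.subtypeEquiv (fun a => Iff.rfl))
    have equiv2 : {a : Gr d n // e a ∈ fixingSubgroup (KK ≃ₐ[↥L] KK) {ι ζ}}
        ≃ ↥(AnnV d n Sv) :=
      (Gr.adEquiv d n).subtypeEquiv hcond
    rw [← Nat.card_congr equiv1, Nat.card_congr equiv2]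
  have hfd : Module.finrank ↥L KK = n ^ d := by
    rw [hLdef, FixedPoints.finrank_eq_card (Gr d n) KK, Gr_card]
  have htower : Module.finrank ↥L ↥E1 * Module.finrank ↥E1 KK = Module.finrank ↥L KK :=
    Module.finrank_mul_finrank ↥L ↥E1 KK
  have hfixrank : Nat.card (IntermediateField.fixingSubgroup E1) = Module.finrank ↥E1 KK := by
    exact IsGalois.card_fixingSubgroup_eq_finrank E1
  have hpos : 0 < Nat.card (AnnV d n Sv) := Nat.card_pos
  have hkey : Module.finrank ↥L ↥E1 * Nat.card (AnnV d n Sv)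
      = Nat.card (AnnV d n Sv) * Nat.card Sv := by
    calc Module.finrank ↥L ↥E1 * Nat.card (AnnV d n Sv)
        = Module.finrank ↥L ↥E1 * Module.finrank ↥E1 KK := by rw [← hfixcard, hfixrank]
      _ = Module.finrank ↥L KK := htower
      _ = n ^ d := hfd
      _ = Nat.card (AnnV d n Sv) * Nat.card Sv := hcard_ann.symm
  have hfinal : Module.finrank ↥L ↥E1 = Nat.card Sv := by
    have := hkey
    rw [mul_comm (Nat.card (AnnV d n Sv)) (Nat.card Sv)] at this
    exact Nat.eq_of_mul_eq_mul_right hpos this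
  rw [hfinal, hSv, card_S_eq_relindex lam g, relindex_N_eq_M lam mz 0 g (Nat.zero_le g) hmz,
    ← relindex_M_prod lam g]
  exact (Finset.prod_congr rfl (fun j hj => by
    rw [Finset.mem_Icc] at hj
    exact (hnj j hj.1 hj.2))).symm

end Galois
end QOAux


open Finset in
/-- For a quasi-ordinary branch `ζ` with characteristic exponents
`lam 1, …, lam g`: the characteristic integers satisfy `n_j ≥ 2`, the field `L(ζ)` equals
`L(X^{λ₁}, …, X^{λ_g})`, and `[L(ζ) : L] = n₁ ⋯ n_g`, where `L = Frac ℂ[[X₁,…,X_d]]` and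
`X^{λ_j}` is the monomial `T^{n·λ_j}`. -/
theorem stmt_14 (d n g : ℕ) (hd : 1 ≤ d) (hn : 1 ≤ n) (hg : 1 ≤ g)
    (ζ : MvPowerSeries (Fin d) ℂ) (lam : ℕ → Fin d → ℚ)
    (hqo : IsQOBranch d n g ζ lam)
    (nj : ℕ → ℕ)
    (hnj : ∀ j, 1 ≤ j → j ≤ g →
      nj j = (Mlat d lam (j - 1)).relIndex (Mlat d lam j))
    (mexp : ℕ → (Fin d →₀ ℕ))
    (hmexp : ∀ j, 1 ≤ j → j ≤ g → ∀ i, ((mexp j) i : ℚ) = (n : ℚ) * lam j i) :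
    letI K := FractionRing (MvPowerSeries (Fin d) ℂ)
    letI ι := algebraMap (MvPowerSeries (Fin d) ℂ) K
    letI L : Subfield K := Subfield.closure (ι '' bigXRing d n)
    (∀ j, 1 ≤ j → j ≤ g → 2 ≤ nj j) ∧
    IntermediateField.adjoin ↥L {ι ζ}
      = IntermediateField.adjoin ↥L
          {x : K | ∃ j, 1 ≤ j ∧ j ≤ g ∧ x = ι (MvPowerSeries.monomial (mexp j) 1)} ∧
    Module.finrank ↥L ↥(IntermediateField.adjoin ↥L {ι ζ}) = ∏ j ∈ Icc 1 g, nj j := by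
  haveI : NeZero n := ⟨by omega⟩
  exact main_core d n g hg ζ lam hqo nj hnj mexp hmexp _ (L_eq_fixed d n)
end

section
/- Fix d ≥ 1 and n ≥ 1 and let ζ ∈ R_n be a nonunit. For each d-tuple ε = (ε_1,…,ε_d) of n-th roots of unity let σ_ε be the ℂ-algebra automorphism of R_n = ℂ[[T_1,…,T_d]] determined by T_i ↦ ε_i T_i. Then the following are equivalent: (a) for every such ε, either σ_ε(ζ) = ζ or σ_ε(ζ) − ζ = X^λ·H for some λ ∈ (1/n)ℤ^d_{≥0} and some unit H of R_n (this says exactly that the minimal polynomial of ζ over ℂ[[X_1,…,X_d]] is a quasi-ordinary polynomial); (b) there exist g ≥ 0 and elements λ_1, …, λ_g of (1/n)ℤ^d_{≥0} such that, setting M_0 := ℤ^d and M_j := M_{j-1} + ℤλ_j: (1) λ_1 < λ_2 < ⋯ < λ_g componentwise and each λ_i has nonzero coefficient in ζ; (2) every exponent λ with nonzero coefficient in ζ lies in ℤ^d + Σ_{i : λ_i ≤ λ} ℤλ_i; (3) λ_j ∉ M_{j-1} for all j. Moreover, when they exist, such λ_1, …, λ_g are uniquely determined by ζ. -/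
set_option synthInstance.maxHeartbeats 1000000

open Finset in
/-- The ℂ-algebra automorphism of `ℂ[[T₁,…,T_d]]` determined by `T_i ↦ ε_i T_i`,
described through its action on coefficients. -/
noncomputable def rescale (d : ℕ) (ε : Fin d → ℂ) (φ : MvPowerSeries (Fin d) ℂ) :
    MvPowerSeries (Fin d) ℂ :=
  fun m => (∏ i, ε i ^ (m i)) * MvPowerSeries.coeff m φ

namespace QO16

def isZ (q : ℚ) : Prop := ∃ z : ℤ, (z : ℚ) = q

lemma isZ_add {q r : ℚ} (hq : isZ q) (hr : isZ r) : isZ (q + r) := by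
  obtain ⟨a, rfl⟩ := hq; obtain ⟨b, rfl⟩ := hr; exact ⟨a + b, by push_cast; ring⟩

lemma isZ_int (z : ℤ) : isZ (z : ℚ) := ⟨z, rfl⟩

lemma isZ_div_iff {n : ℕ} (hn : 1 ≤ n) (s : ℤ) : isZ ((s : ℚ) / n) ↔ (n : ℤ) ∣ s := by
  constructor
  · rintro ⟨z, hz⟩
    have hn0 : (n : ℚ) ≠ 0 := by positivity
    field_simp at hz
    have : s = z * (n:ℤ) := by exact_mod_cast hz.symm
    exact ⟨z, by rw [this]; ring⟩
  · rintro ⟨z, rfl⟩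
    have hn0 : (n : ℚ) ≠ 0 := by positivity
    exact ⟨z, by push_cast; field_simp⟩

variable (d n : ℕ)

def dotN (a : Fin d → ℕ) : (Fin d → ℚ) →+ ℚ where
  toFun μ := ∑ i, (a i : ℚ) * μ i
  map_zero' := by simp
  map_add' x y := by
    simp only [Pi.add_apply, mul_add]
    rw [Finset.sum_add_distrib]

lemma dotN_apply (a : Fin d → ℕ) (μ : Fin d → ℚ) : dotN d a μ = ∑ i, (a i : ℚ) * μ i := rfl

lemma dotN_add_fun (a b : Fin d → ℕ) (μ : Fin d → ℚ) :
    dotN d (a + b) μ = dotN d a μ + dotN d b μ := by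
  simp only [dotN_apply, Pi.add_apply]
  rw [← Finset.sum_add_distrib]
  congr 1; funext i; push_cast; ring

def thetaHom : (Fin d → ℤ) →+ (Fin d → ℚ) where
  toFun w := fun i => (w i : ℚ) / n
  map_zero' := by funext i; simp
  map_add' x y := by
    funext i
    show ((x + y) i : ℚ) / n = (x i : ℚ)/n + (y i : ℚ)/n
    rw [Pi.add_apply]; push_cast; ring

lemma thetaHom_apply (w : Fin d → ℤ) (i : Fin d) : thetaHom d n w i = (w i : ℚ) / n := rfl

lemma thetaHom_injective (hn : 1 ≤ n) : Function.Injective (thetaHom d n) := by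
  intro w v h
  funext i
  have := congrFun h i
  have hn0 : (n : ℚ) ≠ 0 := by positivity
  rw [thetaHom_apply, thetaHom_apply, div_eq_div_iff hn0 hn0] at this
  exact_mod_cast mul_right_cancel₀ hn0 this

lemma expQ_eq_theta (m : Fin d →₀ ℕ) : expQ d n m = thetaHom d n (fun i => (m i : ℤ)) := by
  funext i; simp [expQ, thetaHom_apply]

lemma intRange_le_thetaRange (hn : 1 ≤ n) :
    (intCastHomQ d).range ≤ (thetaHom d n).range := by
  rintro μ ⟨w, rfl⟩
  refine ⟨fun i => n * w i, ?_⟩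
  funext i
  have hn0 : (n : ℚ) ≠ 0 := by positivity
  simp [thetaHom_apply, intCastHomQ]
  push_cast
  field_simp

lemma theta_mem_intRange_iff (hn : 1 ≤ n) (w : Fin d → ℤ) :
    thetaHom d n w ∈ (intCastHomQ d).range ↔ ∀ i, (n : ℤ) ∣ w i := by
  constructor
  · rintro ⟨v, hv⟩ i
    have := congrFun hv i
    simp only [intCastHomQ, AddMonoidHom.coe_mk, ZeroHom.coe_mk] at this
    rw [thetaHom_apply] at this
    exact ((isZ_div_iff hn (w i)).mp ⟨v i, this⟩)
  · intro h
    refine ⟨fun i => (h i).choose, ?_⟩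
    funext i
    have hs := (h i).choose_spec
    simp only [intCastHomQ, AddMonoidHom.coe_mk, ZeroHom.coe_mk, thetaHom_apply]
    have hn0 : (n : ℚ) ≠ 0 := by positivity
    have : ((w i : ℚ)) = (n : ℚ) * ((h i).choose : ℚ) := by exact_mod_cast congrArg (Int.cast : ℤ → ℚ) hs
    rw [this]
    field_simp

def rhoHom : (Fin d → ℤ) →+ (Fin d → ZMod n) where
  toFun w := fun i => (w i : ZMod n)
  map_zero' := by funext i; simp
  map_add' x y := by
    funext i
    show (((x + y) i : ℤ) : ZMod n) = ((x i : ℤ) : ZMod n) + ((y i : ℤ) : ZMod n)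
    rw [Pi.add_apply]; push_cast; ring

lemma rhoHom_apply (w : Fin d → ℤ) (i : Fin d) : rhoHom d n w i = (w i : ZMod n) := rfl

lemma rho_eq_zero_iff (w : Fin d → ℤ) : rhoHom d n w = 0 ↔ ∀ i, (n : ℤ) ∣ w i := by
  constructor
  · intro h i
    have := congrFun h i
    rw [rhoHom_apply] at this
    exact (ZMod.intCast_zmod_eq_zero_iff_dvd _ _).mp this
  · intro h; funext i
    simpa [rhoHom_apply] using (ZMod.intCast_zmod_eq_zero_iff_dvd (w i) n).mpr (h i)

/-- the image subgroup in `(ZMod n)^d` of a lattice `M` with `ℤ^d ≤ M ≤ (1/n)ℤ^d`. -/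
def Hgrp (M : AddSubgroup (Fin d → ℚ)) : AddSubgroup (Fin d → ZMod n) :=
  (M.comap (thetaHom d n)).map (rhoHom d n)

lemma Hgrp_mono : Monotone (Hgrp d n) := fun _ _ h =>
  AddSubgroup.map_mono (AddSubgroup.comap_mono h)

lemma theta_mem_iff_rho_mem (hn : 1 ≤ n) (M : AddSubgroup (Fin d → ℚ))
    (hl : (intCastHomQ d).range ≤ M) (w : Fin d → ℤ) :
    thetaHom d n w ∈ M ↔ rhoHom d n w ∈ Hgrp d n M := by
  constructor
  · intro h
    exact ⟨w, h, rfl⟩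
  · rintro ⟨v, hv, hvw⟩
    have hker : rhoHom d n (w - v) = 0 := by rw [map_sub, hvw, sub_self]
    have hdvd := (rho_eq_zero_iff d n _).mp hker
    have : thetaHom d n (w - v) ∈ (intCastHomQ d).range :=
      (theta_mem_intRange_iff d n hn _).mpr hdvd
    have h2 : thetaHom d n (w - v) ∈ M := hl this
    have : thetaHom d n w = thetaHom d n (w - v) + thetaHom d n v := by
      rw [← map_add]; congr 1; ring
    rw [this]
    exact M.add_mem h2 hv

end QO16

namespace QO16

lemma addChar_map_sum {A M : Type*} [AddCommMonoid A] [CommMonoid M] (χ : AddChar A M)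
    {ι : Type*} (s : Finset ι) (f : ι → A) : χ (∑ i ∈ s, f i) = ∏ i ∈ s, χ (f i) := by
  classical
  induction s using Finset.induction with
  | empty => simp [AddChar.map_zero_eq_one]
  | insert _ _ h ih => rw [Finset.sum_insert h, Finset.prod_insert h, AddChar.map_add_eq_mul, ih]

lemma dual (d n : ℕ) (hn : 1 ≤ n) (M : AddSubgroup (Fin d → ℚ))
    (hl : (intCastHomQ d).range ≤ M) (hu : ∀ μ ∈ M, ∃ v, thetaHom d n v = μ)
    (w : Fin d → ℤ) (hw : thetaHom d n w ∉ M) :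
    ∃ a : Fin d → ℕ, (∀ μ ∈ M, isZ (dotN d a μ)) ∧ ¬ isZ (dotN d a (thetaHom d n w)) := by
  classical
  haveI : NeZero n := ⟨by omega⟩
  set H : AddSubgroup (Fin d → ZMod n) := Hgrp d n M with hH
  have hx : rhoHom d n w ∉ H := fun h => hw ((theta_mem_iff_rho_mem d n hn M hl w).mpr h)
  haveI : Finite ((Fin d → ZMod n) ⧸ H) := Quotient.finite _
  haveI : NeZero (Monoid.exponent (Multiplicative ((Fin d → ZMod n) ⧸ H))) :=
    ⟨Monoid.exponent_ne_zero_of_finite⟩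
  haveI : NeZero ((Monoid.exponent (Multiplicative ((Fin d → ZMod n) ⧸ H)) : ℂ)) :=
    ⟨by exact_mod_cast Nat.cast_ne_zero.mpr Monoid.exponent_ne_zero_of_finite⟩
  obtain ⟨φ, hφ⟩ := CommGroup.exists_apply_ne_one_of_hasEnoughRootsOfUnity
    (Multiplicative ((Fin d → ZMod n) ⧸ H)) ℂ
    (a := Multiplicative.ofAdd ((QuotientAddGroup.mk' H) (rhoHom d n w)))
    (by
      intro h
      apply hx
      have : (QuotientAddGroup.mk' H) (rhoHom d n w) = 0 := h
      exact (QuotientAddGroup.eq_zero_iff _).mp this)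
  -- the additive character on (ZMod n)^d
  set ψm : Multiplicative (Fin d → ZMod n) →* ℂ :=
    ((Units.coeHom ℂ).comp φ).comp
      (AddMonoidHom.toMultiplicative (QuotientAddGroup.mk' H)) with hψm
  set χ : AddChar (Fin d → ZMod n) ℂ := AddChar.toMonoidHomEquiv.symm ψm with hχ
  have hχ_apply : ∀ g : Fin d → ZMod n,
      χ g = (φ (Multiplicative.ofAdd ((QuotientAddGroup.mk' H) g)) : ℂ) := by
    intro g; rfl
  have hχH : ∀ g ∈ H, χ g = 1 := by
    intro g hg
    rw [hχ_apply]
    have : (QuotientAddGroup.mk' H) g = 0 := (QuotientAddGroup.eq_zero_iff _).mpr hg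
    rw [this]
    simp
  have hχw : χ (rhoHom d n w) ≠ 1 := by
    rw [hχ_apply]
    intro h
    exact hφ (Units.ext h)
  -- primitive root
  set μ : ℂ := Complex.exp (2 * Real.pi * Complex.I / n) with hμ
  have hprim : IsPrimitiveRoot μ n := Complex.isPrimitiveRoot_exp n (by omega)
  -- each χ(e_i) is an n-th root of unity
  have hroot : ∀ i : Fin d, χ (Pi.single i 1) ^ n = 1 := by
    intro i
    rw [← AddChar.map_nsmul_eq_pow]
    have : (n : ℕ) • (Pi.single i 1 : Fin d → ZMod n) = 0 := by
      rw [← Pi.single_smul]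
      simp [ZMod.natCast_self]
    rw [this, AddChar.map_zero_eq_one]
  have hex : ∀ i : Fin d, ∃ k < n, μ ^ k = χ (Pi.single i 1) := fun i =>
    hprim.eq_pow_of_pow_eq_one (hroot i)
  choose a ha1 ha2 using hex
  -- key evaluation
  have hval : ∀ v : Fin d → ℤ,
      χ (rhoHom d n v) = μ ^ (∑ i, a i * ((v i : ZMod n)).val) := by
    intro v
    have hv : rhoHom d n v = ∑ i, ((v i : ZMod n)).val • (Pi.single i 1 : Fin d → ZMod n) := by
      have h1 : ∀ j : Fin d, ((v j : ZMod n)).val • (Pi.single j 1 : Fin d → ZMod n)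
          = Pi.single j ((v j : ZMod n)) := by
        intro j
        rw [← Pi.single_smul]
        congr 1
        rw [nsmul_eq_mul, mul_one, ZMod.natCast_val, ZMod.cast_id]
      simp_rw [h1]
      rw [Finset.univ_sum_single (fun j => ((v j : ZMod n)))]
      rfl
    rw [hv, addChar_map_sum]
    rw [Finset.prod_congr rfl (fun i _ => by
      rw [AddChar.map_nsmul_eq_pow, ← ha2 i, ← pow_mul])]
    rw [Finset.prod_pow_eq_pow_sum]
  -- divisibility criterion
  have hcrit : ∀ v : Fin d → ℤ,
      (χ (rhoHom d n v) = 1 ↔ (n : ℤ) ∣ ∑ i, (a i : ℤ) * v i) := by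
    intro v
    rw [hval v, hprim.pow_eq_one_iff_dvd]
    constructor
    · intro h
      have : ((∑ i, a i * ((v i : ZMod n)).val : ℕ) : ZMod n) = 0 :=
        (ZMod.natCast_eq_zero_iff _ _).mpr h
      push_cast at this
      simp_rw [ZMod.natCast_val, ZMod.cast_id] at this
      rw [← ZMod.intCast_zmod_eq_zero_iff_dvd]
      push_cast
      exact this
    · intro h
      have : ((∑ i, (a i : ℤ) * v i : ℤ) : ZMod n) = 0 :=
        (ZMod.intCast_zmod_eq_zero_iff_dvd _ _).mpr h
      push_cast at this
      rw [← ZMod.natCast_eq_zero_iff]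
      push_cast
      simp_rw [ZMod.natCast_val, ZMod.cast_id]
      exact this
  -- dot product formula
  have hdot : ∀ v : Fin d → ℤ,
      dotN d a (thetaHom d n v) = ((∑ i, (a i : ℤ) * v i : ℤ) : ℚ) / n := by
    intro v
    rw [dotN_apply]
    push_cast
    rw [Finset.sum_div]
    exact Finset.sum_congr rfl (fun i _ => by rw [thetaHom_apply]; ring)
  refine ⟨a, ?_, ?_⟩
  · intro ν hν
    obtain ⟨v, rfl⟩ := hu ν hν
    have hρ : rhoHom d n v ∈ H := (theta_mem_iff_rho_mem d n hn M hl v).mp hν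
    have := (hcrit v).mp (hχH _ hρ)
    rw [hdot v]
    exact (isZ_div_iff hn _).mpr this
  · intro hiz
    apply hχw
    rw [hdot w] at hiz
    exact (hcrit w).mpr ((isZ_div_iff hn _).mp hiz)

end QO16

namespace QO16

open MvPowerSeries

lemma coeff_rescale (d : ℕ) (ε : Fin d → ℂ) (φ : MvPowerSeries (Fin d) ℂ) (m : Fin d →₀ ℕ) :
    coeff m (rescale d ε φ) = (∏ i, ε i ^ (m i)) * coeff m φ := rfl

lemma coeff_diff (d : ℕ) (ε : Fin d → ℂ) (ζ : MvPowerSeries (Fin d) ℂ) (m : Fin d →₀ ℕ) :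
    coeff m (rescale d ε ζ - ζ) = ((∏ i, ε i ^ (m i)) - 1) * coeff m ζ := by
  rw [map_sub, coeff_rescale]; ring

/-- the support of `σ_ε ζ - ζ`. -/
def SSet (d : ℕ) (ε : Fin d → ℂ) (ζ : MvPowerSeries (Fin d) ℂ) : Set (Fin d →₀ ℕ) :=
  {m | coeff m ζ ≠ 0 ∧ (∏ i, ε i ^ (m i)) ≠ 1}

lemma mem_SSet_iff_coeff_diff_ne_zero (d : ℕ) (ε : Fin d → ℂ) (ζ : MvPowerSeries (Fin d) ℂ)
    (m : Fin d →₀ ℕ) : m ∈ SSet d ε ζ ↔ coeff m (rescale d ε ζ - ζ) ≠ 0 := by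
  rw [coeff_diff, SSet]
  constructor
  · rintro ⟨h1, h2⟩
    exact mul_ne_zero (sub_ne_zero.mpr h2) h1
  · intro h
    exact ⟨right_ne_zero_of_mul h, sub_ne_zero.mp (left_ne_zero_of_mul h)⟩

/-- From condition (a) for `ε` to the minimum property of `SSet`. -/
lemma min_of_conda (d : ℕ) (ε : Fin d → ℂ) (ζ : MvPowerSeries (Fin d) ℂ)
    (h : rescale d ε ζ = ζ ∨
      ∃ (m : Fin d →₀ ℕ) (H : MvPowerSeries (Fin d) ℂ), IsUnit H ∧
        rescale d ε ζ - ζ = MvPowerSeries.monomial m 1 * H) :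
    (∀ m, m ∉ SSet d ε ζ) ∨ ∃ m₀ ∈ SSet d ε ζ, ∀ m ∈ SSet d ε ζ, m₀ ≤ m := by
  rcases h with h | ⟨m, H, hH, heq⟩
  · left
    intro m hm
    rw [mem_SSet_iff_coeff_diff_ne_zero] at hm
    rw [h, sub_self] at hm
    simp at hm
  · right
    refine ⟨m, ?_, ?_⟩
    · rw [mem_SSet_iff_coeff_diff_ne_zero, heq, coeff_monomial_mul]
      rw [if_pos le_rfl, tsub_self, one_mul]
      exact (constantCoeff).isUnit_map hH |>.ne_zero
    · intro k hk
      rw [mem_SSet_iff_coeff_diff_ne_zero, heq, coeff_monomial_mul] at hk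
      by_contra hle
      rw [if_neg hle] at hk
      exact hk rfl

/-- From the minimum property of `SSet` to condition (a) for `ε`. -/
lemma conda_of_min (d : ℕ) (ε : Fin d → ℂ) (ζ : MvPowerSeries (Fin d) ℂ)
    (h : (∀ m, m ∉ SSet d ε ζ) ∨ ∃ m₀ ∈ SSet d ε ζ, ∀ m ∈ SSet d ε ζ, m₀ ≤ m) :
    rescale d ε ζ = ζ ∨
      ∃ (m : Fin d →₀ ℕ) (H : MvPowerSeries (Fin d) ℂ), IsUnit H ∧
        rescale d ε ζ - ζ = MvPowerSeries.monomial m 1 * H := by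
  rcases h with h | ⟨m₀, hm₀, hmin⟩
  · left
    have : ∀ m, coeff m (rescale d ε ζ - ζ) = 0 := by
      intro m
      by_contra hc
      exact h m ((mem_SSet_iff_coeff_diff_ne_zero d ε ζ m).mpr hc)
    ext m
    have := this m
    rw [map_sub, sub_eq_zero] at this
    exact this
  · right
    set ψ : MvPowerSeries (Fin d) ℂ := rescale d ε ζ - ζ with hψ
    set H : MvPowerSeries (Fin d) ℂ := fun k => ψ (m₀ + k) with hHdef
    have hcoeffH : ∀ k, coeff k H = coeff (m₀ + k) ψ := fun k => rfl
    have hc0 : coeff m₀ ψ ≠ 0 := (mem_SSet_iff_coeff_diff_ne_zero d ε ζ m₀).mp hm₀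
    refine ⟨m₀, H, ?_, ?_⟩
    · rw [MvPowerSeries.isUnit_iff_constantCoeff]
      have : constantCoeff H = coeff m₀ ψ := by
        rw [← MvPowerSeries.coeff_zero_eq_constantCoeff, hcoeffH, add_zero]
      rw [this]
      exact isUnit_iff_ne_zero.mpr hc0
    · ext k
      rw [coeff_monomial_mul]
      by_cases hle : m₀ ≤ k
      · rw [if_pos hle, one_mul, hcoeffH, add_tsub_cancel_of_le hle]
      · rw [if_neg hle]
        by_contra hc
        exact hle (hmin k ((mem_SSet_iff_coeff_diff_ne_zero d ε ζ k).mpr hc))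

-- ## roots of unity and characters

noncomputable def epsOf (d n : ℕ) (a : Fin d → ℕ) : Fin d → ℂ :=
  fun i => Complex.exp (2 * Real.pi * Complex.I * (a i / n))

lemma exp_two_pi_rat_eq_one_iff (q : ℚ) :
    Complex.exp (2 * Real.pi * Complex.I * q) = 1 ↔ isZ q := by
  rw [Complex.exp_eq_one_iff]
  constructor
  · rintro ⟨k, hk⟩
    refine ⟨k, ?_⟩
    rw [mul_comm (k : ℂ) _] at hk
    have := mul_left_cancel₀ Complex.two_pi_I_ne_zero hk
    exact_mod_cast this.symm
  · rintro ⟨k, hk⟩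
    refine ⟨k, ?_⟩
    rw [← hk]
    push_cast
    ring

lemma epsOf_pow_n (d n : ℕ) (hn : 1 ≤ n) (a : Fin d → ℕ) (i : Fin d) :
    (epsOf d n a i) ^ n = 1 := by
  rw [epsOf, ← Complex.exp_nat_mul]
  have hn0 : (n : ℂ) ≠ 0 := Nat.cast_ne_zero.mpr (by omega)
  have : (n : ℂ) * (2 * Real.pi * Complex.I * (a i / n)) = (a i : ℤ) * (2 * Real.pi * Complex.I) := by
    push_cast
    field_simp
  rw [this, Complex.exp_int_mul_two_pi_mul_I]

lemma prod_epsOf_eq_one_iff (d n : ℕ) (hn : 1 ≤ n) (a : Fin d → ℕ) (m : Fin d →₀ ℕ) :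
    (∏ i, epsOf d n a i ^ (m i)) = 1 ↔ isZ (dotN d a (expQ d n m)) := by
  have key : (∏ i, epsOf d n a i ^ (m i))
      = Complex.exp (2 * Real.pi * Complex.I * ((dotN d a (expQ d n m) : ℚ) : ℂ)) := by
    have : ∀ i : Fin d, epsOf d n a i ^ (m i)
        = Complex.exp (2 * Real.pi * Complex.I * ((a i : ℚ) * ((m i : ℚ) / n) : ℚ)) := by
      intro i
      rw [epsOf, ← Complex.exp_nat_mul]
      congr 1
      push_cast
      ring
    rw [Finset.prod_congr rfl (fun i _ => this i), ← Complex.exp_sum]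
    congr 1
    rw [dotN_apply]
    push_cast
    rw [Finset.mul_sum]
    exact Finset.sum_congr rfl (fun i _ => by rw [expQ]; push_cast; ring)
  rw [key, exp_two_pi_rat_eq_one_iff]

lemma exists_epsOf (d n : ℕ) (hn : 1 ≤ n) (ε : Fin d → ℂ) (hε : ∀ i, ε i ^ n = 1) :
    ∃ a : Fin d → ℕ, ∀ i, ε i = epsOf d n a i := by
  haveI : NeZero n := ⟨by omega⟩
  have hprim : IsPrimitiveRoot (Complex.exp (2 * Real.pi * Complex.I / n)) n :=
    Complex.isPrimitiveRoot_exp n (by omega)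
  have hex : ∀ i, ∃ k < n, Complex.exp (2 * Real.pi * Complex.I / n) ^ k = ε i :=
    fun i => hprim.eq_pow_of_pow_eq_one (hε i)
  choose a ha1 ha2 using hex
  refine ⟨a, fun i => ?_⟩
  rw [← ha2 i, epsOf, ← Complex.exp_nat_mul]
  congr 1
  ring

-- ## expQ order facts

lemma expQ_le_iff (d n : ℕ) (hn : 1 ≤ n) (m m' : Fin d →₀ ℕ) :
    expQ d n m ≤ expQ d n m' ↔ m ≤ m' := by
  have hn0 : (0 : ℚ) < n := by positivity
  rw [Finsupp.le_def, Pi.le_def]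
  apply forall_congr'
  intro i
  show (m i : ℚ) / n ≤ (m' i : ℚ) / n ↔ _
  rw [div_le_div_iff_of_pos_right hn0, Nat.cast_le]

lemma expQ_inj (d n : ℕ) (hn : 1 ≤ n) {m m' : Fin d →₀ ℕ}
    (h : expQ d n m = expQ d n m') : m = m' := by
  apply le_antisymm
  · exact (expQ_le_iff d n hn m m').mp h.le
  · exact (expQ_le_iff d n hn m' m).mp h.ge

lemma expQ_lt_of_lt (d n : ℕ) (hn : 1 ≤ n) {m m' : Fin d →₀ ℕ}
    (h : m ≤ m') (hne : m ≠ m') : expQ d n m < expQ d n m' := by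
  refine lt_of_le_of_ne ((expQ_le_iff d n hn m m').mpr h) ?_
  intro hc
  exact hne (expQ_inj d n hn hc)

end QO16

namespace QO16

lemma isZ_neg {q : ℚ} (h : isZ q) : isZ (-q) := by
  obtain ⟨z, rfl⟩ := h; exact ⟨-z, by push_cast; ring⟩

lemma not_isZ_add_isZ {x y : ℚ} (hx : ¬ isZ x) (hy : isZ y) : ¬ isZ (x + y) := by
  intro h
  apply hx
  have := isZ_add h (isZ_neg hy)
  simpa using this

def CondA (d n : ℕ) (ζ : MvPowerSeries (Fin d) ℂ) : Prop :=
  ∀ ε : Fin d → ℂ, (∀ i, ε i ^ n = 1) →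
    (rescale d ε ζ = ζ ∨
      ∃ (m : Fin d →₀ ℕ) (H : MvPowerSeries (Fin d) ℂ), IsUnit H ∧
        rescale d ε ζ - ζ = MvPowerSeries.monomial m 1 * H)

lemma minEx (d n : ℕ) (hn : 1 ≤ n) (ζ : MvPowerSeries (Fin d) ℂ) (ha : CondA d n ζ)
    (M : AddSubgroup (Fin d → ℚ)) (hl : (intCastHomQ d).range ≤ M)
    (hu : ∀ μ ∈ M, ∃ v, thetaHom d n v = μ)
    (hne : ∃ m : Fin d →₀ ℕ, MvPowerSeries.coeff m ζ ≠ 0 ∧ expQ d n m ∉ M) :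
    ∃ m₀ : Fin d →₀ ℕ, MvPowerSeries.coeff m₀ ζ ≠ 0 ∧ expQ d n m₀ ∉ M ∧
      ∀ m : Fin d →₀ ℕ, MvPowerSeries.coeff m ζ ≠ 0 → expQ d n m ∉ M → m₀ ≤ m := by
  classical
  set S : Set (Fin d →₀ ℕ) := {m | MvPowerSeries.coeff m ζ ≠ 0 ∧ expQ d n m ∉ M} with hS
  haveI hwf : WellFoundedLT (Fin d →₀ ℕ) := Finsupp.wellFoundedLT (fun k => Nat.not_lt_zero k)
  obtain ⟨m₀, hm₀S, hm₀min⟩ := (IsWellFounded.wf (r := ((· < ·) : (Fin d →₀ ℕ) → _ → Prop))).has_min S hne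
  obtain ⟨hc₀, hM₀⟩ := hm₀S
  refine ⟨m₀, hc₀, hM₀, ?_⟩
  intro m hcm hMm
  -- dual characters for m₀ and m
  obtain ⟨a₀, ha₀M, ha₀⟩ := dual d n hn M hl hu (fun i => (m₀ i : ℤ))
    (by rw [← expQ_eq_theta]; exact hM₀)
  obtain ⟨a₁, ha₁M, ha₁⟩ := dual d n hn M hl hu (fun i => (m i : ℤ))
    (by rw [← expQ_eq_theta]; exact hMm)
  rw [← expQ_eq_theta] at ha₀ ha₁
  -- combine into one character nontrivial at both
  obtain ⟨b, hbM, hb₀, hb₁⟩ : ∃ b : Fin d → ℕ, (∀ μ ∈ M, isZ (dotN d b μ)) ∧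
      ¬ isZ (dotN d b (expQ d n m₀)) ∧ ¬ isZ (dotN d b (expQ d n m)) := by
    by_cases h1 : isZ (dotN d a₀ (expQ d n m))
    · by_cases h2 : isZ (dotN d a₁ (expQ d n m₀))
      · refine ⟨a₀ + a₁, ?_, ?_, ?_⟩
        · intro μ hμ
          rw [dotN_add_fun]
          exact isZ_add (ha₀M μ hμ) (ha₁M μ hμ)
        · rw [dotN_add_fun]
          exact not_isZ_add_isZ ha₀ h2
        · rw [dotN_add_fun, add_comm]
          exact not_isZ_add_isZ ha₁ h1
      · exact ⟨a₁, ha₁M, h2, ha₁⟩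
    · exact ⟨a₀, ha₀M, ha₀, h1⟩
  -- apply hypothesis (a) with the corresponding root-of-unity tuple
  have hroots : ∀ i, epsOf d n b i ^ n = 1 := epsOf_pow_n d n hn b
  have hmem : ∀ k : Fin d →₀ ℕ, k ∈ SSet d (epsOf d n b) ζ ↔
      (MvPowerSeries.coeff k ζ ≠ 0 ∧ ¬ isZ (dotN d b (expQ d n k))) := by
    intro k
    unfold SSet
    rw [Set.mem_setOf_eq]
    constructor
    · rintro ⟨h1, h2⟩
      exact ⟨h1, fun hz => h2 ((prod_epsOf_eq_one_iff d n hn b k).mpr hz)⟩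
    · rintro ⟨h1, h2⟩
      exact ⟨h1, fun hz => h2 ((prod_epsOf_eq_one_iff d n hn b k).mp hz)⟩
  rcases min_of_conda d (epsOf d n b) ζ (ha _ hroots) with hempty | ⟨m₁, hm₁, hminS⟩
  · exact absurd ((hmem m₀).mpr ⟨hc₀, hb₀⟩) (hempty m₀)
  · have hm₁' := (hmem m₁).mp hm₁
    have hm₁S : m₁ ∈ S := by
      refine ⟨hm₁'.1, fun hMm₁ => hm₁'.2 (hbM _ hMm₁)⟩
    have h10 : m₁ ≤ m₀ := hminS m₀ ((hmem m₀).mpr ⟨hc₀, hb₀⟩)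
    have h1m : m₁ ≤ m := hminS m ((hmem m).mpr ⟨hcm, hb₁⟩)
    have : m₁ = m₀ := by
      by_contra hne'
      exact hm₀min m₁ hm₁S (lt_of_le_of_ne h10 hne')
    rw [← this]
    exact h1m

-- ## Mlat structural lemmas

lemma Mlat_le_succ (d : ℕ) (lam : ℕ → Fin d → ℚ) (j : ℕ) :
    Mlat d lam j ≤ Mlat d lam (j + 1) := le_sup_left

lemma Mlat_mono (d : ℕ) (lam : ℕ → Fin d → ℚ) {j k : ℕ} (h : j ≤ k) :
    Mlat d lam j ≤ Mlat d lam k := by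
  induction k with
  | zero => rw [Nat.le_zero.mp h]
  | succ k ih =>
    rcases Nat.lt_or_ge j (k+1) with h' | h'
    · exact le_trans (ih (by omega)) (Mlat_le_succ d lam k)
    · rw [Nat.le_antisymm h h']

lemma lam_mem_Mlat (d : ℕ) (lam : ℕ → Fin d → ℚ) (j : ℕ) (hj : 1 ≤ j) :
    lam j ∈ Mlat d lam j := by
  obtain ⟨k, rfl⟩ : ∃ k, j = k + 1 := ⟨j - 1, by omega⟩
  exact le_sup_right (a := Mlat d lam k) (AddSubgroup.subset_closure rfl)

lemma intRange_le_Mlat (d : ℕ) (lam : ℕ → Fin d → ℚ) (j : ℕ) :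
    (intCastHomQ d).range ≤ Mlat d lam j := by
  induction j with
  | zero => exact le_rfl
  | succ j ih => exact le_trans ih (Mlat_le_succ d lam j)

lemma Mlat_congr (d : ℕ) (lam lam' : ℕ → Fin d → ℚ) (k : ℕ)
    (h : ∀ i, 1 ≤ i → i ≤ k → lam i = lam' i) : Mlat d lam k = Mlat d lam' k := by
  induction k with
  | zero => rfl
  | succ k ih =>
    show Mlat d lam k ⊔ _ = Mlat d lam' k ⊔ _
    rw [ih (fun i h1 h2 => h i h1 (by omega)), h (k+1) (by omega) le_rfl]

lemma Mlat_le_sup_closure (d : ℕ) (lam : ℕ → Fin d → ℚ) (k : ℕ) (S : Set (Fin d → ℚ))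
    (hS : ∀ i, 1 ≤ i → i ≤ k → lam i ∈ S) :
    Mlat d lam k ≤ (intCastHomQ d).range ⊔ AddSubgroup.closure S := by
  induction k with
  | zero => exact le_sup_left
  | succ k ih =>
    apply sup_le
    · exact ih (fun i h1 h2 => hS i h1 (by omega))
    · refine le_trans ?_ (le_sup_right (a := (intCastHomQ d).range))
      exact AddSubgroup.closure_mono (Set.singleton_subset_iff.mpr (hS (k+1) (by omega) le_rfl))

lemma sup_closure_le_Mlat (d : ℕ) (lam : ℕ → Fin d → ℚ) (k : ℕ) (S : Set (Fin d → ℚ))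
    (hS : ∀ x ∈ S, ∃ i, 1 ≤ i ∧ i ≤ k ∧ x = lam i) :
    (intCastHomQ d).range ⊔ AddSubgroup.closure S ≤ Mlat d lam k := by
  apply sup_le (intRange_le_Mlat d lam k)
  rw [AddSubgroup.closure_le]
  intro x hx
  obtain ⟨i, h1, h2, rfl⟩ := hS x hx
  exact Mlat_mono d lam h2 (lam_mem_Mlat d lam i h1)

lemma Mlat_nInt (d n : ℕ) (hn : 1 ≤ n) (lam : ℕ → Fin d → ℚ) (k : ℕ)
    (h : ∀ i, 1 ≤ i → i ≤ k → ∃ v, thetaHom d n v = lam i) :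
    ∀ μ ∈ Mlat d lam k, ∃ v, thetaHom d n v = μ := by
  induction k with
  | zero =>
    intro μ hμ
    exact intRange_le_thetaRange d n hn hμ
  | succ k ih =>
    intro μ hμ
    rw [show Mlat d lam (k+1) = Mlat d lam k ⊔ AddSubgroup.closure {lam (k+1)} from rfl,
      AddSubgroup.mem_sup] at hμ
    obtain ⟨y, hy, z, hz, rfl⟩ := hμ
    obtain ⟨vy, rfl⟩ := ih (fun i h1 h2 => h i h1 (by omega)) y hy
    obtain ⟨c, hc⟩ := AddSubgroup.mem_closure_singleton.mp hz
    obtain ⟨vl, hvl⟩ := h (k+1) (by omega) le_rfl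
    refine ⟨vy + c • vl, ?_⟩
    rw [map_add, map_zsmul, hvl, hc]

end QO16

namespace QO16

/-- partial quasi-ordinary data of length `j`. -/
def Good (d n : ℕ) (ζ : MvPowerSeries (Fin d) ℂ) (j : ℕ) (lam : ℕ → Fin d → ℚ) : Prop :=
  (∀ i, 1 ≤ i → i ≤ j → ∃ m : Fin d →₀ ℕ, expQ d n m = lam i ∧ MvPowerSeries.coeff m ζ ≠ 0) ∧
  (∀ i, 1 ≤ i → i < j → lam i < lam (i + 1)) ∧
  (∀ i, 1 ≤ i → i ≤ j → lam i ∉ Mlat d lam (i - 1)) ∧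
  (∀ i, 1 ≤ i → i ≤ j → ∀ m : Fin d →₀ ℕ, MvPowerSeries.coeff m ζ ≠ 0 →
    expQ d n m ∉ Mlat d lam (i - 1) → lam i ≤ expQ d n m) ∧
  (∀ i, i > j → lam i = 0)

lemma good_nInt (d n : ℕ) (ζ : MvPowerSeries (Fin d) ℂ) (j : ℕ) (lam : ℕ → Fin d → ℚ)
    (hg : Good d n ζ j lam) : ∀ i, 1 ≤ i → i ≤ j → ∃ v, thetaHom d n v = lam i := by
  intro i h1 h2
  obtain ⟨m, hm, -⟩ := hg.1 i h1 h2
  exact ⟨fun i => (m i : ℤ), by rw [← expQ_eq_theta, hm]⟩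

lemma card_Hgrp_lt (d n : ℕ) (hn : 1 ≤ n) (M M' : AddSubgroup (Fin d → ℚ))
    (hl : (intCastHomQ d).range ≤ M) (hle : M ≤ M') (w : Fin d → ℤ)
    (hwM : thetaHom d n w ∉ M) (hwM' : thetaHom d n w ∈ M') :
    Nat.card (Hgrp d n M) < Nat.card (Hgrp d n M') := by
  haveI : NeZero n := ⟨by omega⟩
  have hsub : (Hgrp d n M : Set (Fin d → ZMod n)) ⊂ (Hgrp d n M' : Set (Fin d → ZMod n)) := by
    constructor
    · exact Hgrp_mono d n hle
    · intro hsup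
      apply hwM
      rw [theta_mem_iff_rho_mem d n hn M hl w]
      exact hsup ⟨w, hwM', rfl⟩
  have := Set.ncard_lt_ncard hsub (Set.toFinite _)
  simpa [← Nat.card_coe_set_eq] using this

lemma Hgrp_card_le (d n : ℕ) (hn : 1 ≤ n) (M : AddSubgroup (Fin d → ℚ)) :
    Nat.card (Hgrp d n M) ≤ Nat.card (Fin d → ZMod n) := by
  haveI : NeZero n := ⟨by omega⟩
  have := Set.ncard_le_ncard (Set.subset_univ (Hgrp d n M : Set (Fin d → ZMod n)))
    (Set.toFinite _)
  rw [Set.ncard_univ] at this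
  simpa [← Nat.card_coe_set_eq] using this

lemma Hgrp_full (d n : ℕ) (hn : 1 ≤ n) (M : AddSubgroup (Fin d → ℚ))
    (h : Nat.card (Fin d → ZMod n) ≤ Nat.card (Hgrp d n M)) :
    ∀ x : Fin d → ZMod n, x ∈ Hgrp d n M := by
  haveI : NeZero n := ⟨by omega⟩
  have hc : (Set.univ : Set (Fin d → ZMod n)).ncard ≤
      (Hgrp d n M : Set (Fin d → ZMod n)).ncard := by
    rw [Set.ncard_univ]
    simpa [← Nat.card_coe_set_eq] using h
  have := Set.eq_of_subset_of_ncard_le (Set.subset_univ (Hgrp d n M : Set (Fin d → ZMod n)))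
    hc (Set.toFinite _)
  intro x
  have : x ∈ (Hgrp d n M : Set (Fin d → ZMod n)) := this ▸ Set.mem_univ x
  exact this

lemma build (d n : ℕ) (hn : 1 ≤ n) (ζ : MvPowerSeries (Fin d) ℂ) (ha : CondA d n ζ) :
    ∀ (N : ℕ) (j : ℕ) (lam : ℕ → Fin d → ℚ), Good d n ζ j lam →
      Nat.card (Fin d → ZMod n) ≤ N + Nat.card (Hgrp d n (Mlat d lam j)) →
      ∃ (g : ℕ) (lam' : ℕ → Fin d → ℚ), j ≤ g ∧ (∀ i, i ≤ j → lam' i = lam i) ∧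
        Good d n ζ g lam' ∧
        (∀ m : Fin d →₀ ℕ, MvPowerSeries.coeff m ζ ≠ 0 → expQ d n m ∈ Mlat d lam' g) := by
  intro N
  induction N with
  | zero =>
    intro j lam hg hcard
    refine ⟨j, lam, le_rfl, fun i _ => rfl, hg, ?_⟩
    intro m hm
    have hfull := Hgrp_full d n hn (Mlat d lam j) (by omega)
    rw [expQ_eq_theta]
    rw [theta_mem_iff_rho_mem d n hn _ (intRange_le_Mlat d lam j)]
    exact hfull _
  | succ N ih =>
    intro j lam hg hcard
    by_cases hall : ∀ m : Fin d →₀ ℕ, MvPowerSeries.coeff m ζ ≠ 0 → expQ d n m ∈ Mlat d lam j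
    · exact ⟨j, lam, le_rfl, fun i _ => rfl, hg, hall⟩
    · push_neg at hall
      obtain ⟨m₀, hc₀, hM₀, hmin₀⟩ := minEx d n hn ζ ha (Mlat d lam j)
        (intRange_le_Mlat d lam j)
        (Mlat_nInt d n hn lam j (good_nInt d n ζ j lam hg))
        (by obtain ⟨m, h1, h2⟩ := hall; exact ⟨m, h1, h2⟩)
      classical
      set lam' : ℕ → Fin d → ℚ := Function.update lam (j+1) (expQ d n m₀) with hlam'
      have hagree : ∀ i, i ≠ j + 1 → lam' i = lam i := by
        intro i hi; rw [hlam', Function.update_of_ne hi]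
      have hnew : lam' (j+1) = expQ d n m₀ := by rw [hlam', Function.update_self]
      have hMeq : ∀ k, k ≤ j → Mlat d lam' k = Mlat d lam k :=
        fun k hk => Mlat_congr d lam' lam k (fun i _ h2 => hagree i (by omega))
      have hgood' : Good d n ζ (j+1) lam' := by
        obtain ⟨P1, P2, P3, P4, P5⟩ := hg
        refine ⟨?_, ?_, ?_, ?_, ?_⟩
        · intro i h1 h2
          rcases Nat.lt_or_ge i (j+1) with h' | h'
          · obtain ⟨m, hm1, hm2⟩ := P1 i h1 (by omega)
            exact ⟨m, by rw [hagree i (by omega)]; exact hm1, hm2⟩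
          · have : i = j + 1 := by omega
            subst this
            exact ⟨m₀, hnew.symm, hc₀⟩
        · intro i h1 h2
          rcases Nat.lt_or_ge i j with h' | h'
          · rw [hagree i (by omega), hagree (i+1) (by omega)]
            exact P2 i h1 h'
          · have hij : i = j := by omega
            subst hij
            rw [hagree i (by omega), hnew]
            have hle : lam i ≤ expQ d n m₀ := by
              apply P4 i h1 le_rfl m₀ hc₀
              intro hc
              exact hM₀ (Mlat_mono d lam (by omega) hc)
            refine lt_of_le_of_ne hle ?_
            intro hc
            apply hM₀
            rw [← hc]
            exact lam_mem_Mlat d lam i h1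
        · intro i h1 h2
          rcases Nat.lt_or_ge i (j+1) with h' | h'
          · rw [hagree i (by omega), hMeq (i-1) (by omega)]
            exact P3 i h1 (by omega)
          · have : i = j + 1 := by omega
            subst this
            rw [hnew, show j + 1 - 1 = j from rfl, hMeq j le_rfl]
            exact hM₀
        · intro i h1 h2 m hm hmM
          rcases Nat.lt_or_ge i (j+1) with h' | h'
          · rw [hagree i (by omega)]
            rw [hMeq (i-1) (by omega)] at hmM
            exact P4 i h1 (by omega) m hm hmM
          · have : i = j + 1 := by omega
            subst this
            rw [hnew]
            rw [show j + 1 - 1 = j from rfl, hMeq j le_rfl] at hmM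
            exact (expQ_le_iff d n hn m₀ m).mpr (hmin₀ m hm hmM)
        · intro i hi
          rw [hagree i (by omega)]
          exact P5 i (by omega)
      have hstep : Nat.card (Hgrp d n (Mlat d lam j)) <
          Nat.card (Hgrp d n (Mlat d lam' (j+1))) := by
        apply card_Hgrp_lt d n hn _ _ (intRange_le_Mlat d lam j) _ (fun i => (m₀ i : ℤ))
        · rw [← expQ_eq_theta]; exact hM₀
        · rw [← expQ_eq_theta, ← hnew]
          exact lam_mem_Mlat d lam' (j+1) (by omega)
        · rw [← hMeq j le_rfl]
          exact Mlat_le_succ d lam' j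
      obtain ⟨g, lam'', hg1, hg2, hg3, hg4⟩ := ih (j+1) lam' hgood' (by omega)
      exact ⟨g, lam'', by omega, fun i hi => by
        rw [hg2 i (by omega), hagree i (by omega)], hg3, hg4⟩
end QO16

namespace QO16

lemma chain_mono (d g : ℕ) (lam : ℕ → Fin d → ℚ)
    (h2 : ∀ i, 1 ≤ i → i < g → lam i < lam (i + 1)) :
    ∀ i k, 1 ≤ i → i ≤ k → k ≤ g → lam i ≤ lam k := by
  intro i k h1 hik hkg
  induction k with
  | zero => omega
  | succ k ih =>
    rcases Nat.lt_or_ge i (k+1) with h' | h'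
    · have hik' : i ≤ k := by omega
      exact le_trans (ih hik' (by omega)) (h2 k (by omega) (by omega)).le
    · have : i = k + 1 := by omega
      rw [this]

def ZSubgroup : AddSubgroup ℚ where
  carrier := {q | isZ q}
  zero_mem' := ⟨0, by norm_num⟩
  add_mem' := fun h1 h2 => isZ_add h1 h2
  neg_mem' := fun h => isZ_neg h

lemma dotN_int_isZ (d : ℕ) (a : Fin d → ℕ) (v : Fin d → ℤ) :
    isZ (dotN d a (intCastHomQ d v)) := by
  refine ⟨∑ i, (a i : ℤ) * v i, ?_⟩
  rw [dotN_apply]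
  push_cast
  rfl

/-- If every element of `S` pairs integrally with `a`, then so does anything in `ℤ^d ⊔ ⟨S⟩`. -/
lemma isZ_dot_of_mem_sup (d : ℕ) (a : Fin d → ℕ) (S : Set (Fin d → ℚ))
    (hS : ∀ x ∈ S, isZ (dotN d a x)) {μ : Fin d → ℚ}
    (hμ : μ ∈ (intCastHomQ d).range ⊔ AddSubgroup.closure S) : isZ (dotN d a μ) := by
  have hle : (intCastHomQ d).range ⊔ AddSubgroup.closure S ≤ ZSubgroup.comap (dotN d a) := by
    apply sup_le
    · rintro μ' ⟨v, rfl⟩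
      exact dotN_int_isZ d a v
    · rw [AddSubgroup.closure_le]
      intro x hx
      exact hS x hx
  exact hle hμ

/-- derivation of clause (2) of `IsQOBranch` from `Good` + coverage. -/
lemma good_clause2 (d n : ℕ) (hn : 1 ≤ n) (ζ : MvPowerSeries (Fin d) ℂ) (g : ℕ)
    (lam : ℕ → Fin d → ℚ) (hg : Good d n ζ g lam)
    (hcov : ∀ m : Fin d →₀ ℕ, MvPowerSeries.coeff m ζ ≠ 0 → expQ d n m ∈ Mlat d lam g) :
    ∀ m : Fin d →₀ ℕ, MvPowerSeries.coeff m ζ ≠ 0 →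
      expQ d n m ∈ (intCastHomQ d).range ⊔
        AddSubgroup.closure {x | ∃ j, 1 ≤ j ∧ j ≤ g ∧ lam j ≤ expQ d n m ∧ x = lam j} := by
  classical
  intro m hm
  obtain ⟨P1, P2, P3, P4, P5⟩ := hg
  set S : Set (Fin d → ℚ) := {x | ∃ j, 1 ≤ j ∧ j ≤ g ∧ lam j ≤ expQ d n m ∧ x = lam j} with hSdef
  by_cases hRg : ∀ i, 1 ≤ i → i ≤ g → lam i ≤ expQ d n m
  · exact Mlat_le_sup_closure d lam g S
      (fun i h1 h2 => ⟨i, h1, h2, hRg i h1 h2, rfl⟩) (hcov m hm)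
  · push_neg at hRg
    have hexk : ∃ i, 1 ≤ i ∧ i ≤ g ∧ ¬ lam i ≤ expQ d n m := by
      obtain ⟨i, h1, h2, h3⟩ := hRg
      exact ⟨i, h1, h2, h3⟩
    set k' := Nat.find hexk with hk'def
    obtain ⟨hk1, hk2, hk3⟩ := Nat.find_spec hexk
    have hsmall : ∀ i, 1 ≤ i → i < k' → lam i ≤ expQ d n m := by
      intro i h1 h2
      by_contra hc
      rcases Nat.lt_or_ge g i with h' | h'
      · omega
      · exact absurd ⟨h1, by omega, hc⟩ (Nat.find_min hexk h2)
    have hmem : expQ d n m ∈ Mlat d lam (k' - 1) := by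
      by_contra hc
      apply hk3
      have := P4 k' hk1 hk2 m hm hc
      exact this
    refine Mlat_le_sup_closure d lam (k'-1) S ?_ hmem
    intro i h1 h2
    exact ⟨i, h1, by omega, hsmall i h1 (by omega), rfl⟩

-- ## facts about IsQOBranch

lemma qob_min (d n : ℕ) (hn : 1 ≤ n) (ζ : MvPowerSeries (Fin d) ℂ) (g : ℕ)
    (lam : ℕ → Fin d → ℚ) (hq : IsQOBranch d n g ζ lam) :
    ∀ j, 1 ≤ j → j ≤ g → ∀ m : Fin d →₀ ℕ, MvPowerSeries.coeff m ζ ≠ 0 →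
      expQ d n m ∉ Mlat d lam (j - 1) → lam j ≤ expQ d n m := by
  obtain ⟨Q1, Q2, Q3, Q4⟩ := hq
  intro j h1 h2 m hm hmM
  have hmem := Q3 m hm
  by_cases hex : ∃ i, 1 ≤ i ∧ i ≤ g ∧ lam i ≤ expQ d n m ∧ j ≤ i
  · obtain ⟨i, hi1, hi2, hi3, hi4⟩ := hex
    exact le_trans (chain_mono d g lam Q2 j i h1 hi4 hi2) hi3
  · push_neg at hex
    exfalso
    apply hmM
    refine sup_closure_le_Mlat d lam (j-1) _ ?_ hmem
    rintro x ⟨i, hi1, hi2, hi3, rfl⟩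
    have : i < j := by
      by_contra hc
      exact absurd (by omega : j ≤ i) (by simpa using hex i hi1 hi2 hi3)
    exact ⟨i, hi1, by omega, rfl⟩

lemma qob_eq_on_min (d n : ℕ) (hn : 1 ≤ n) (ζ : MvPowerSeries (Fin d) ℂ) (g g' : ℕ)
    (lam lam' : ℕ → Fin d → ℚ) (hq : IsQOBranch d n g ζ lam)
    (hq' : IsQOBranch d n g' ζ lam') :
    ∀ j, 1 ≤ j → j ≤ g → j ≤ g' → lam j = lam' j := by
  intro j
  induction j using Nat.strong_induction_on with
  | _ j ih =>
    intro h1 h2 h3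
    have hMeq : Mlat d lam (j-1) = Mlat d lam' (j-1) :=
      Mlat_congr d lam lam' (j-1) (fun i hi1 hi2 => ih i (by omega) hi1 (by omega) (by omega))
    have hle : lam j ≤ lam' j := by
      obtain ⟨m', hm'1, hm'2⟩ := hq'.1 j h1 h3
      rw [← hm'1]
      apply qob_min d n hn ζ g lam hq j h1 h2 m' hm'2
      rw [hMeq, hm'1]
      exact hq'.2.2.2 j h1 h3
    have hge : lam' j ≤ lam j := by
      obtain ⟨m, hm1, hm2⟩ := hq.1 j h1 h2
      rw [← hm1]
      apply qob_min d n hn ζ g' lam' hq' j h1 h3 m hm2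
      rw [← hMeq, hm1]
      exact hq.2.2.2 j h1 h2
    exact le_antisymm hle hge

lemma qob_g_le (d n : ℕ) (hn : 1 ≤ n) (ζ : MvPowerSeries (Fin d) ℂ) (g g' : ℕ)
    (lam lam' : ℕ → Fin d → ℚ) (hq : IsQOBranch d n g ζ lam)
    (hq' : IsQOBranch d n g' ζ lam') : g ≤ g' := by
  by_contra hc
  push_neg at hc
  -- g' < g ; consider lam (g'+1)
  have heq := qob_eq_on_min d n hn ζ g g' lam lam' hq hq'
  obtain ⟨m, hm1, hm2⟩ := hq.1 (g'+1) (by omega) (by omega)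
  have hmem := hq'.2.2.1 m hm2
  have hle : (intCastHomQ d).range ⊔
      AddSubgroup.closure {x | ∃ j, 1 ≤ j ∧ j ≤ g' ∧ lam' j ≤ expQ d n m ∧ x = lam' j} ≤
      Mlat d lam g' := by
    rw [Mlat_congr d lam lam' g' (fun i hi1 hi2 => heq i hi1 (by omega) hi2)]
    exact sup_closure_le_Mlat d lam' g' _ (fun x ⟨i, hi1, hi2, _, hx⟩ => ⟨i, hi1, hi2, hx⟩)
  have : expQ d n m ∈ Mlat d lam g' := hle hmem
  rw [hm1] at this
  exact hq.2.2.2 (g'+1) (by omega) (by omega) (by simpa using this)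
end QO16

namespace QO16

lemma conda_of_qob (d n : ℕ) (hn : 1 ≤ n) (ζ : MvPowerSeries (Fin d) ℂ) (g : ℕ)
    (lam : ℕ → Fin d → ℚ) (hq : IsQOBranch d n g ζ lam) : CondA d n ζ := by
  classical
  intro ε hε
  obtain ⟨a, haeq⟩ := exists_epsOf d n hn ε hε
  have hprod : ∀ m : Fin d →₀ ℕ, (∏ i, ε i ^ m i) = ∏ i, epsOf d n a i ^ m i :=
    fun m => Finset.prod_congr rfl (fun i _ => by rw [haeq i])
  have hSS : ∀ m : Fin d →₀ ℕ, m ∈ SSet d ε ζ ↔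
      (MvPowerSeries.coeff m ζ ≠ 0 ∧ ¬ isZ (dotN d a (expQ d n m))) := by
    intro m
    unfold SSet
    rw [Set.mem_setOf_eq, hprod m]
    constructor
    · rintro ⟨h1, h2⟩
      exact ⟨h1, fun hz => h2 ((prod_epsOf_eq_one_iff d n hn a m).mpr hz)⟩
    · rintro ⟨h1, h2⟩
      exact ⟨h1, fun hz => h2 ((prod_epsOf_eq_one_iff d n hn a m).mp hz)⟩
  have hkey : ∀ m : Fin d →₀ ℕ, m ∈ SSet d ε ζ →
      ∃ i, 1 ≤ i ∧ i ≤ g ∧ lam i ≤ expQ d n m ∧ ¬ isZ (dotN d a (lam i)) := by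
    intro m hm
    obtain ⟨h1, h2⟩ := (hSS m).mp hm
    by_contra hc
    push_neg at hc
    apply h2
    refine isZ_dot_of_mem_sup d a _ ?_ (hq.2.2.1 m h1)
    rintro x ⟨i, hi1, hi2, hi3, rfl⟩
    exact hc i hi1 hi2 hi3
  apply conda_of_min
  by_cases hj : ∃ j, 1 ≤ j ∧ j ≤ g ∧ ¬ isZ (dotN d a (lam j))
  · right
    set j₀ := Nat.find hj with hj₀def
    obtain ⟨hj1, hj2, hj3⟩ := Nat.find_spec hj
    obtain ⟨m₀, hm₀1, hm₀2⟩ := hq.1 j₀ hj1 hj2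
    refine ⟨m₀, ?_, ?_⟩
    · rw [hSS]
      exact ⟨hm₀2, by rw [hm₀1]; exact hj3⟩
    · intro m hm
      obtain ⟨i, hi1, hi2, hi3, hi4⟩ := hkey m hm
      have hle : j₀ ≤ i := Nat.find_min' hj ⟨hi1, hi2, hi4⟩
      have : lam j₀ ≤ expQ d n m :=
        le_trans (chain_mono d g lam hq.2.1 j₀ i hj1 hle hi2) hi3
      rw [← hm₀1] at this
      exact (expQ_le_iff d n hn m₀ m).mp this
  · left
    intro m hm
    push_neg at hj
    obtain ⟨i, hi1, hi2, hi3, hi4⟩ := hkey m hm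
    exact hi4 (hj i hi1 hi2)

lemma good_zero (d n : ℕ) (ζ : MvPowerSeries (Fin d) ℂ) : Good d n ζ 0 (fun _ => 0) :=
  ⟨fun i h1 h2 => absurd h2 (by omega), fun i h1 h2 => absurd h2 (by omega),
   fun i h1 h2 => absurd h2 (by omega), fun i h1 h2 => absurd h2 (by omega),
   fun _ _ => rfl⟩

end QO16


/-- For a nonunit `ζ ∈ R_n`, the following are equivalent:
(a) for every `d`-tuple `ε` of `n`-th roots of unity, `σ_ε(ζ) − ζ` is zero or a monomial times
a unit (i.e. the minimal polynomial of `ζ` over `ℂ[[X₁,…,X_d]]` is quasi-ordinary);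
(b) `ζ` is a quasi-ordinary branch, i.e. it admits characteristic exponents.
Moreover the characteristic exponents, when they exist, are unique. -/
theorem stmt_16 (d n : ℕ) (hd : 1 ≤ d) (hn : 1 ≤ n)
    (ζ : MvPowerSeries (Fin d) ℂ) (hζ : ¬ IsUnit ζ) :
    ((∀ ε : Fin d → ℂ, (∀ i, ε i ^ n = 1) →
        (rescale d ε ζ = ζ ∨
          ∃ (m : Fin d →₀ ℕ) (H : MvPowerSeries (Fin d) ℂ), IsUnit H ∧
            rescale d ε ζ - ζ = MvPowerSeries.monomial m 1 * H))
      ↔ (∃ (g : ℕ) (lam : ℕ → Fin d → ℚ), IsQOBranch d n g ζ lam)) ∧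
    (∀ (g g' : ℕ) (lam lam' : ℕ → Fin d → ℚ),
      IsQOBranch d n g ζ lam → IsQOBranch d n g' ζ lam' →
      g = g' ∧ ∀ j, 1 ≤ j → j ≤ g → lam j = lam' j) := by
  constructor
  · constructor
    · intro ha
      have hA : QO16.CondA d n ζ := ha
      obtain ⟨g, lam', -, -, hgood, hcov⟩ := QO16.build d n hn ζ hA
        (Nat.card (Fin d → ZMod n)) 0 (fun _ => 0) (QO16.good_zero d n ζ)
        (Nat.le_add_right _ _)
      exact ⟨g, lam', hgood.1, hgood.2.1,
        QO16.good_clause2 d n hn ζ g lam' hgood hcov, hgood.2.2.1⟩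
    · rintro ⟨g, lam, hq⟩
      exact QO16.conda_of_qob d n hn ζ g lam hq
  · intro g g' lam lam' hq hq'
    have h1 := QO16.qob_g_le d n hn ζ g g' lam lam' hq hq'
    have h2 := QO16.qob_g_le d n hn ζ g' g lam' lam hq' hq
    have hgg : g = g' := le_antisymm h1 h2
    refine ⟨hgg, fun j hj1 hj2 => ?_⟩
    exact QO16.qob_eq_on_min d n hn ζ g g' lam lam' hq hq' j hj1 hj2 (by omega)
end
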